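/- arXiv:1910.11721 — 3 statements merged into one kernel-verified Lean document; each statement's English description precedes it below -/
import Mathlib

section
/- Fix a set of m ≥ 2 alternatives, integers l1 with 0 ≤ l1 ≤ m−1 and l2 with 1 ≤ l2 ≤ m, and any integer k ≥ (l1+l2+1)/2. Then the mixture of k Plackett-Luce models is not identifiable from ranked top orders of length at most l1 together with way-orders of length at most l2: there exist two k-PL parameters (α_1,...,α_k, θ^(1),...,θ^(k)) and (α'_1,...,α'_k, θ'^(1),...,θ'^(k)) whose mixing measures ∑_r α_r δ_{θ^(r)} and ∑_r α'_r δ_{θ'^(r)} are different, yet for every ranked top-l order with l ≤ l1 and every l-way order over every size-l subset with l ≤ l2, the two mixtures assign the same marginal probability. -/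
open Finset

/-- `θ` is a Plackett–Luce parameter over `m` alternatives: all entries are
strictly positive and they sum to one. -/
def IsPLParam {m : ℕ} (θ : Fin m → ℝ) : Prop :=
  (∀ i, 0 < θ i) ∧ (∑ i, θ i = 1)

/-- PL marginal probability of the ranked top-`l` order
`σ 0 ≻ σ 1 ≻ ⋯ ≻ σ (l-1) ≻ others` under the parameter `θ`:
`∏_{p=1}^{l} θ_{i_p} / (∑_{q=p}^m θ_{i_q})` (recall `∑_i θ_i = 1`). -/
noncomputable def PLtop {m l : ℕ} (θ : Fin m → ℝ) (σ : Fin l → Fin m) : ℝ :=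
  ∏ p : Fin l, θ (σ p) / (1 - ∑ q ∈ univ.filter (fun q : Fin l => q < p), θ (σ q))

/-- PL marginal probability of the `l`-way order `σ 0 ≻ σ 1 ≻ ⋯ ≻ σ (l-1)`
over the subset `{σ 0, …, σ (l-1)}`:
`∏_{p=1}^{l-1} θ_{i_p} / (∑_{q=p}^{l} θ_{i_q})` (the factor at `p = l` equals `1`). -/
noncomputable def PLway {m l : ℕ} (θ : Fin m → ℝ) (σ : Fin l → Fin m) : ℝ :=
  ∏ p : Fin l, θ (σ p) / (∑ q ∈ univ.filter (fun q : Fin l => p ≤ q), θ (σ q))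

/-- The mixing measure `∑_r α_r δ_{θ^{(r)}}` of a `k`-mixture, represented as the
finitely supported weight function on the parameter space. -/
noncomputable def mixingMeasure {m k : ℕ} (α : Fin k → ℝ) (θ : Fin k → Fin m → ℝ) :
    (Fin m → ℝ) → ℝ :=
  fun t => ∑ r, if θ r = t then α r else 0

/-! ### Auxiliary constructions -/

section Aux

open Polynomial

noncomputable def zf (m j : ℕ) : ℝ := m + j

def CallF (m l1 l2 : ℕ) : Finset ℕ := ((Finset.Ico 1 l1) ∪ (Finset.Ico (m-l2) (m-1))).erase 0

def ee (m l1 l2 : ℕ) : ℕ := if 1 ≤ l1 ∨ l2 = m then 2 else 1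

noncomputable def RootsQ (m l1 l2 : ℕ) : Multiset ℝ :=
  (ee m l1 l2 - 1) • ({(0:ℝ)} : Multiset ℝ) + (CallF m l1 l2).val.map (Nat.cast)

noncomputable def Qp (m l1 l2 : ℕ) : ℝ[X] :=
  ((RootsQ m l1 l2).map (fun c => X - C c)).prod

noncomputable def lam (m l1 l2 k j : ℕ) : ℝ :=
  (Qp m l1 l2).eval (zf m j) * Lagrange.nodalWeight (range (2*k)) (zf m) j

noncomputable def thf (m : ℕ) (y : ℝ) : Fin m → ℝ :=
  fun i => if (i:ℕ) = m - 1 then 1 - y else y / ((m:ℝ) - 1)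

/-! #### The divided-difference lemma -/

lemma coeff_basis {s : Finset ℕ} {v : ℕ → ℝ} (hvs : Set.InjOn v s) {i : ℕ} (hi : i ∈ s) :
    (Lagrange.basis s v i).coeff (#s - 1) = Lagrange.nodalWeight s v i := by
  rw [Lagrange.basis_eq_prod_sub_inv_mul_nodal_div hi, ← Lagrange.nodal_erase_eq_nodal_div hi,
    coeff_C_mul]
  have hmon : (Lagrange.nodal (s.erase i) v).Monic := Lagrange.nodal_monic
  have hdeg : (Lagrange.nodal (s.erase i) v).natDegree = #s - 1 := by
    rw [Lagrange.natDegree_nodal, card_erase_of_mem hi]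
  rw [← hdeg, hmon.coeff_natDegree, mul_one]

lemma dd_sum {s : Finset ℕ} {v : ℕ → ℝ} (hvs : Set.InjOn v s) {p : ℝ[X]}
    (hp : p.degree < ((#s : ℕ) - 1 : ℕ)) :
    ∑ i ∈ s, p.eval (v i) * Lagrange.nodalWeight s v i = 0 := by
  rcases Finset.eq_empty_or_nonempty s with rfl | hs
  · simp
  have hlt : p.degree < (#s : ℕ) := lt_of_lt_of_le hp (by exact_mod_cast Nat.sub_le _ _)
  have h := Lagrange.eq_interpolate hvs hlt
  have h2 := congrArg (fun q : ℝ[X] => q.coeff (#s - 1)) h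
  simp only [Lagrange.interpolate_apply] at h2
  rw [Polynomial.finset_sum_coeff] at h2
  have h3 : ∀ i ∈ s, (C (p.eval (v i)) * Lagrange.basis s v i).coeff (#s - 1)
      = p.eval (v i) * Lagrange.nodalWeight s v i := by
    intro i hi
    rw [coeff_C_mul, coeff_basis hvs hi]
  rw [Finset.sum_congr rfl h3] at h2
  rw [← h2]
  exact Polynomial.coeff_eq_zero_of_degree_lt hp

/-! #### Basic facts about the nodes -/

lemma zf_inj (m : ℕ) : Function.Injective (zf m) := by
  intro a b h
  simp only [zf] at h
  exact_mod_cast (by linarith : (a:ℝ) = b)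

lemma zf_gt (m j : ℕ) (hm : 2 ≤ m) : (m:ℝ) - 1 < zf m j := by
  have : (0:ℝ) ≤ j := Nat.cast_nonneg j
  simp only [zf]; linarith

lemma rootsQ_le (m l1 l2 : ℕ) (hl1 : l1 ≤ m - 1) (hm : 2 ≤ m) :
    ∀ c ∈ RootsQ m l1 l2, c ≤ (m:ℝ) - 1 := by
  intro c hc
  rw [RootsQ, Multiset.mem_add] at hc
  rcases hc with hc | hc
  · have : c = 0 := by
      rcases Multiset.mem_nsmul.mp hc with ⟨-, h⟩
      simpa using h
    rw [this]; have : (2:ℝ) ≤ m := by exact_mod_cast hm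
    linarith
  · rcases Multiset.mem_map.mp hc with ⟨a, ha, rfl⟩
    have ha' : a ∈ CallF m l1 l2 := ha
    rw [CallF, mem_erase, mem_union] at ha'
    have : a ≤ m - 1 := by
      rcases ha'.2 with h | h
      · have := mem_Ico.mp h; omega
      · have := mem_Ico.mp h; omega
    have h1 : (a:ℝ) ≤ ((m-1:ℕ):ℝ) := by exact_mod_cast this
    have h2 : ((m-1:ℕ):ℝ) = (m:ℝ) - 1 := by
      have : 1 ≤ m := by omega
      push_cast [this]; ring
    linarith

lemma card_rootsQ_le (m l1 l2 k : ℕ) (hm : 2 ≤ m) (hl1 : l1 ≤ m - 1) (hl2 : 1 ≤ l2)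
    (hl2m : l2 ≤ m) (hk : l1 + l2 + 1 ≤ 2 * k) :
    Multiset.card (RootsQ m l1 l2) ≤ 2 * k - 2 := by
  have hcard : Multiset.card (RootsQ m l1 l2) = (ee m l1 l2 - 1) + #(CallF m l1 l2) := by
    rw [RootsQ]; simp
  have hIco1 : #(Finset.Ico 1 l1) = l1 - 1 := by rw [Nat.card_Ico]
  have hIco2 : #(Finset.Ico (m-l2) (m-1)) = l2 - 1 := by rw [Nat.card_Ico]; omega
  have hunion : #((Finset.Ico 1 l1) ∪ (Finset.Ico (m-l2) (m-1))) ≤ (l1-1) + (l2-1) := by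
    calc _ ≤ _ := card_union_le _ _
    _ = _ := by rw [hIco1, hIco2]
  by_cases h2 : l2 = m
  · have h0 : 0 ∈ (Finset.Ico 1 l1) ∪ (Finset.Ico (m-l2) (m-1)) := by
      simp only [mem_union, mem_Ico]; omega
    have : #(CallF m l1 l2) = #((Finset.Ico 1 l1) ∪ (Finset.Ico (m-l2) (m-1))) - 1 := by
      rw [CallF, card_erase_of_mem h0]
    have hee : ee m l1 l2 = 2 := by rw [ee, if_pos (Or.inr h2)]
    omega
  · have : #(CallF m l1 l2) ≤ #((Finset.Ico 1 l1) ∪ (Finset.Ico (m-l2) (m-1))) :=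
      card_le_card (erase_subset _ _)
    have hee : ee m l1 l2 ≤ 2 := by rw [ee]; split <;> omega
    by_cases h1 : 1 ≤ l1
    · have hee : ee m l1 l2 = 2 := by rw [ee, if_pos (Or.inl h1)]
      omega
    · have hee : ee m l1 l2 = 1 := by rw [ee, if_neg]; push_neg; omega
      have hl10 : l1 = 0 := by omega
      have : #(CallF m l1 l2) ≤ l2 - 1 := by omega
      omega

/-! #### The master vanishing lemma -/

lemma master (m l1 l2 k : ℕ) (hm : 2 ≤ m) (hl1 : l1 ≤ m-1) (hl2 : 1 ≤ l2) (hl2m : l2 ≤ m)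
    (hk : l1 + l2 + 1 ≤ 2*k)
    (S : Finset ℕ) (ε : ℕ) (hSD : ∀ c ∈ S, c ≤ m-1)
    (h0 : 0 ∈ S → ee m l1 l2 = 2) (hD : (m-1) ∈ S → ε = 1)
    (hC : ∀ c ∈ S, c ≠ 0 → c ≠ m-1 → c ∈ CallF m l1 l2)
    (hne : ε = 1 → S.Nonempty) (hε : ε ≤ 1) (K : ℝ) :
    ∑ j ∈ range (2*k), lam m l1 l2 k j *
      (K * (zf m j - ((m:ℝ)-1))^ε * (∏ c ∈ S, (zf m j - (c:ℝ)))⁻¹) = 0 := by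
  classical
  set D : ℝ := (m:ℝ) - 1 with hDdef
  set Den : Multiset ℝ := S.val.map (Nat.cast) with hDen
  set Num : Multiset ℝ := RootsQ m l1 l2 + ε • ({D} : Multiset ℝ) with hNum
  have hcastD : ((m-1 : ℕ) : ℝ) = D := by
    have : 1 ≤ m := by omega
    rw [hDdef]; push_cast [this]; ring
  have hle : Den ≤ Num := by
    rw [Multiset.le_iff_count]
    intro a
    have hnodup : Den.Nodup := (S.nodup).map (fun x y => by exact_mod_cast id)
    have h1 : Den.count a ≤ 1 := Multiset.nodup_iff_count_le_one.mp hnodup a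
    rcases Nat.eq_zero_or_pos (Den.count a) with h | h
    · omega
    · have ha : a ∈ Den := Multiset.count_pos.mp h
      rcases Multiset.mem_map.mp ha with ⟨c, hcS, rfl⟩
      have hcS' : c ∈ S := hcS
      have hge : 1 ≤ Num.count ((c:ℕ):ℝ) := by
        rw [Multiset.one_le_count_iff_mem, hNum, Multiset.mem_add]
        by_cases hc0 : c = 0
        · left
          rw [RootsQ, Multiset.mem_add]; left
          rw [Multiset.mem_nsmul]
          constructor
          · have := h0 (hc0 ▸ hcS'); omega
          · simp [hc0]
        · by_cases hcD : c = m-1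
          · right
            have : ε = 1 := hD (hcD ▸ hcS')
            rw [this, one_smul, Multiset.mem_singleton, ← hcastD, hcD]
          · left
            rw [RootsQ, Multiset.mem_add]; right
            exact Multiset.mem_map_of_mem _ (hC c hcS' hc0 hcD)
      omega
  set g : ℝ[X] := ((Num - Den).map (fun c => X - C c)).prod with hg
  have hmono : g.Monic := monic_multiset_prod_of_monic _ _ (fun a _ => monic_X_sub_C a)
  have hdegg : g.natDegree = Multiset.card (Num - Den) := by
    rw [hg, natDegree_multiset_prod_X_sub_C_eq_card]
  have hcardQ := card_rootsQ_le m l1 l2 k hm hl1 hl2 hl2m hk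
  have hk1 : 1 ≤ k := by omega
  have hdeglt : g.degree < ((#(range (2*k)) : ℕ) - 1 : ℕ) := by
    rw [Polynomial.degree_eq_natDegree hmono.ne_zero]
    have hcard : Multiset.card (Num - Den) < 2*k - 1 := by
      have hsub := Multiset.card_sub hle
      have hNumc : Multiset.card Num = Multiset.card (RootsQ m l1 l2) + ε := by
        rw [hNum]; simp
      have hDenc : Multiset.card Den = #S := by rw [hDen]; simp
      have hS1 : ε = 1 → 1 ≤ #S := fun h => card_pos.mpr (hne h)
      interval_cases ε <;> omega
    rw [hdegg]
    rw [card_range]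
    exact_mod_cast hcard
  have hpoint : ∀ j ∈ range (2*k), lam m l1 l2 k j *
      (K * (zf m j - D)^ε * (∏ c ∈ S, (zf m j - (c:ℝ)))⁻¹)
      = K * (g.eval (zf m j) * Lagrange.nodalWeight (range (2*k)) (zf m) j) := by
    intro j _
    set z : ℝ := zf m j with hz
    have hzD : D < z := zf_gt m j hm
    have hprodS_pos : 0 < ∏ c ∈ S, (z - (c:ℝ)) := by
      apply Finset.prod_pos
      intro c hcS
      have h1 : (c:ℝ) ≤ ((m-1 : ℕ):ℝ) := by exact_mod_cast hSD c hcS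
      rw [hcastD] at h1
      linarith
    have hprodS_ne : (∏ c ∈ S, (z - (c:ℝ))) ≠ 0 := ne_of_gt hprodS_pos
    have hevalE : ∀ M : Multiset ℝ, ((M.map (fun c => X - C c)).prod).eval z
        = (M.map (fun c => z - c)).prod := by
      intro M
      rw [eval_multiset_prod, Multiset.map_map]
      congr 1
      apply Multiset.map_congr rfl
      intro c _
      simp
    have hDenE : (Den.map (fun c => z - c)).prod = ∏ c ∈ S, (z - (c:ℝ)) := by
      rw [hDen, Multiset.map_map]
      rfl
    have hkey : g.eval z * (∏ c ∈ S, (z - (c:ℝ)))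
        = (Qp m l1 l2).eval z * (z - D)^ε := by
      rw [hg, hevalE, ← hDenE, ← Multiset.prod_add, ← Multiset.map_add,
        tsub_add_cancel_of_le hle, hNum, Multiset.map_add, Multiset.prod_add, Qp, hevalE]
      congr 1
      rw [Multiset.map_nsmul, Multiset.map_singleton, Multiset.prod_nsmul,
        Multiset.prod_singleton]
    set w : ℝ := Lagrange.nodalWeight (range (2*k)) (zf m) j with hw
    set P : ℝ := ∏ c ∈ S, (z - (c:ℝ)) with hP
    calc lam m l1 l2 k j * (K * (z - D)^ε * P⁻¹)
        = K * ((Qp m l1 l2).eval z * (z - D)^ε) * (w * P⁻¹) := by rw [lam]; ring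
      _ = K * (g.eval z * P) * (w * P⁻¹) := by rw [← hkey]
      _ = K * (g.eval z * w) * (P * P⁻¹) := by ring
      _ = K * (g.eval z * w) := by rw [mul_inv_cancel₀ hprodS_ne, mul_one]
  rw [Finset.sum_congr rfl hpoint, ← Finset.mul_sum]
  rw [dd_sum ((zf_inj m).injOn) hdeglt, mul_zero]

/-! #### Signs of the weights -/

lemma prod_neg' (s : Finset ℕ) (f : ℕ → ℝ) :
    ∏ i ∈ s, (-(f i)) = (-1)^#s * ∏ i ∈ s, f i := by
  rw [← Finset.prod_const (-1:ℝ), ← Finset.prod_mul_distrib]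
  simp

lemma Qp_eval_pos (m l1 l2 j : ℕ) (hm : 2 ≤ m) (hl1 : l1 ≤ m - 1) :
    0 < (Qp m l1 l2).eval (zf m j) := by
  rw [Qp, Polynomial.eval_multiset_prod, Multiset.map_map]
  apply Multiset.prod_pos
  intro a ha
  rcases Multiset.mem_map.mp ha with ⟨c, hc, rfl⟩
  have h1 := rootsQ_le m l1 l2 hl1 hm c hc
  have h2 := zf_gt m j hm
  simp only [Function.comp_apply, Polynomial.eval_sub, Polynomial.eval_X, Polynomial.eval_C]
  linarith

lemma erase_split (n j : ℕ) (hj : j < n) :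
    (range n).erase j = range j ∪ Finset.Ico (j+1) n := by
  ext i
  simp only [mem_erase, mem_range, mem_union, mem_Ico]
  omega

lemma lam_sign (m l1 l2 k j : ℕ) (hm : 2 ≤ m) (hl1 : l1 ≤ m - 1) (hj : j < 2*k) :
    0 < (-1)^(j+1) * lam m l1 l2 k j := by
  rw [lam, Lagrange.nodalWeight, erase_split (2*k) j hj]
  rw [Finset.prod_union (by
    rw [Finset.disjoint_left]
    intro a ha hb
    simp only [mem_range] at ha
    simp only [mem_Ico] at hb
    omega)]
  have hA : 0 < ∏ i ∈ range j, (zf m j - zf m i)⁻¹ := by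
    apply Finset.prod_pos
    intro i hi
    simp only [mem_range] at hi
    have h2 : zf m i < zf m j := by
      simp only [zf]
      have : (i:ℝ) < j := by exact_mod_cast hi
      linarith
    exact inv_pos.mpr (by linarith)
  have hB : ∏ i ∈ Finset.Ico (j+1) (2*k), (zf m j - zf m i)⁻¹
      = (-1)^(2*k - (j+1)) * ∏ i ∈ Finset.Ico (j+1) (2*k), (zf m i - zf m j)⁻¹ := by
    calc ∏ i ∈ Finset.Ico (j+1) (2*k), (zf m j - zf m i)⁻¹
        = ∏ i ∈ Finset.Ico (j+1) (2*k), (-((zf m i - zf m j)⁻¹)) := by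
          apply Finset.prod_congr rfl
          intro i _
          rw [← neg_sub (zf m i) (zf m j), neg_inv]
      _ = (-1)^#(Finset.Ico (j+1) (2*k)) * ∏ i ∈ Finset.Ico (j+1) (2*k), (zf m i - zf m j)⁻¹ :=
          prod_neg' _ _
      _ = (-1)^(2*k - (j+1)) * ∏ i ∈ Finset.Ico (j+1) (2*k), (zf m i - zf m j)⁻¹ := by
          rw [Nat.card_Ico]
  have hBpos : 0 < ∏ i ∈ Finset.Ico (j+1) (2*k), (zf m i - zf m j)⁻¹ := by
    apply Finset.prod_pos
    intro i hi
    simp only [mem_Ico] at hi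
    have h2 : zf m j < zf m i := by
      simp only [zf]
      have : (j:ℝ) < i := by exact_mod_cast hi.1
      linarith
    exact inv_pos.mpr (by linarith)
  have hQ := Qp_eval_pos m l1 l2 j hm hl1
  rw [hB]
  have hsign : ((-1:ℝ))^(j+1) * ((-1:ℝ))^(2*k - (j+1)) = 1 := by
    rw [← pow_add]
    have : j + 1 + (2*k - (j+1)) = 2*k := by omega
    rw [this, pow_mul]
    norm_num
  calc (0:ℝ) < ((Qp m l1 l2).eval (zf m j) * ((∏ i ∈ range j, (zf m j - zf m i)⁻¹)
        * (∏ i ∈ Finset.Ico (j+1) (2*k), (zf m i - zf m j)⁻¹)))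
        * (((-1:ℝ))^(j+1) * ((-1:ℝ))^(2*k - (j+1))) := by
        rw [hsign, mul_one]; positivity
    _ = (-1)^(j+1) * ((Qp m l1 l2).eval (zf m j) *
        ((∏ i ∈ range j, (zf m j - zf m i)⁻¹) *
         ((-1)^(2*k-(j+1)) * ∏ i ∈ Finset.Ico (j+1) (2*k), (zf m i - zf m j)⁻¹))) := by ring

end Aux

/-! ### Counting and summation helpers -/

lemma filter_lt_card {l : ℕ} (p : Fin l) : #(univ.filter (fun q => q < p)) = (p:ℕ) := by
  have : univ.filter (fun q => q < p) = Finset.Iio p := by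
    ext q; simp
  rw [this, Fin.card_Iio]

lemma filter_le_card {l : ℕ} (p : Fin l) : #(univ.filter (fun q => p ≤ q)) = l - (p:ℕ) := by
  have : univ.filter (fun q => p ≤ q) = Finset.Ici p := by
    ext q; simp
  rw [this, Fin.card_Ici]

lemma sum_theta_nospec {m l : ℕ} (y : ℝ) (σ : Fin l → Fin m) (F : Finset (Fin l))
    (h : ∀ q ∈ F, ((σ q : ℕ) ≠ m - 1)) :
    ∑ q ∈ F, thf m y (σ q) = #F * (y/((m:ℝ)-1)) := by
  rw [Finset.sum_congr rfl (fun q hq => by rw [thf, if_neg (h q hq)])]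
  rw [Finset.sum_const, nsmul_eq_mul]

lemma sum_theta_spec {m l : ℕ} (y : ℝ) (σ : Fin l → Fin m) (hσ : Function.Injective σ)
    (F : Finset (Fin l)) (p₀ : Fin l) (hp₀ : p₀ ∈ F) (hsp : (σ p₀ : ℕ) = m - 1) :
    ∑ q ∈ F, thf m y (σ q) = #F * (y/((m:ℝ)-1)) + (1 - y - y/((m:ℝ)-1)) := by
  have key : ∀ q ∈ F, thf m y (σ q)
      = y/((m:ℝ)-1) + (if q = p₀ then (1 - y - y/((m:ℝ)-1)) else 0) := by
    intro q _
    by_cases hq : q = p₀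
    · subst hq
      rw [thf, if_pos hsp, if_pos rfl]; ring
    · have : (σ q : ℕ) ≠ m - 1 := by
        intro hc
        exact hq (hσ (Fin.ext (hc.trans hsp.symm)))
      rw [thf, if_neg this, if_neg hq, add_zero]
  rw [Finset.sum_congr rfl key, Finset.sum_add_distrib, Finset.sum_const, nsmul_eq_mul,
    Finset.sum_ite_eq' F p₀ (fun _ => (1 - y - y/((m:ℝ)-1))), if_pos hp₀]

lemma factor1 {z c : ℝ} (hz : z ≠ 0) (hzc : z - c ≠ 0) : z⁻¹ / (1 - c * z⁻¹) = (z - c)⁻¹ := by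
  have h1 : (z - c) / z = 1 - c * z⁻¹ := by rw [sub_div, div_self hz, div_eq_mul_inv]
  rw [← h1, div_div_eq_mul_div, inv_mul_cancel₀ hz, one_div]

lemma factor4 {z n : ℝ} (hz : z ≠ 0) (hn : n ≠ 0) : z⁻¹ / (n * z⁻¹) = n⁻¹ := by
  field_simp

lemma cast_le_sub {m c j : ℕ} (h : c ≤ m - j) (hj : j ≤ m) : (c:ℝ) ≤ (m:ℝ) - j := by
  have h2 : ((m - j : ℕ):ℝ) = (m:ℝ) - j := by
    push_cast [Nat.cast_sub hj]; ring
  calc (c:ℝ) ≤ ((m-j:ℕ):ℝ) := by exact_mod_cast h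
    _ = _ := h2

lemma sum_split (k : ℕ) (v : ℕ → ℝ) :
    ∑ j ∈ Finset.range (2*k), v j
      = (∑ r ∈ Finset.range k, v (2*r)) + ∑ r ∈ Finset.range k, v (2*r+1) := by
  induction k with
  | zero => simp
  | succ k ih =>
    have h : 2*(k+1) = 2*k + 1 + 1 := by omega
    rw [h, Finset.sum_range_succ, Finset.sum_range_succ, Finset.sum_range_succ,
      Finset.sum_range_succ, ih]
    ring

lemma thf_isPL (m : ℕ) (hm : 2 ≤ m) (y : ℝ) (hy0 : 0 < y) (hy1 : y < 1) :
    IsPLParam (thf m y) := by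
  have hm2 : (2:ℝ) ≤ (m:ℝ) := by exact_mod_cast hm
  constructor
  · intro i
    rw [thf]
    split
    · linarith
    · have : (0:ℝ) < (m:ℝ) - 1 := by linarith
      positivity
  · have hsp : ∀ i : Fin m, thf m y i
        = y/((m:ℝ)-1) + (if i = (⟨m-1, by omega⟩ : Fin m) then (1 - y - y/((m:ℝ)-1)) else 0) := by
      intro i
      rw [thf]
      by_cases h : (i:ℕ) = m - 1
      · rw [if_pos h, if_pos (Fin.ext h), ]; ring
      · rw [if_neg h, if_neg (fun hc => h (by rw [hc])), add_zero]
    rw [Finset.sum_congr rfl (fun i _ => hsp i), Finset.sum_add_distrib, Finset.sum_const,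
      Finset.sum_ite_eq' univ (⟨m-1, by omega⟩ : Fin m) (fun _ => (1 - y - y/((m:ℝ)-1))),
      if_pos (mem_univ _)]
    simp only [card_univ, Fintype.card_fin, nsmul_eq_mul]
    have hDne : (m:ℝ) - 1 ≠ 0 := by linarith
    field_simp
    ring

lemma thf_inj (m : ℕ) (hm : 2 ≤ m) {y y' : ℝ} (h : thf m y = thf m y') : y = y' := by
  have := congrFun h (⟨m-1, by omega⟩ : Fin m)
  rw [thf, thf] at this
  simp only [eq_self_iff_true, if_true] at this
  linarith

/-! ### The two evaluation lemmas -/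

lemma top_eval (m l1 l2 l : ℕ) (hm : 2 ≤ m) (hl1 : l1 ≤ m-1) (hl : l ≤ l1)
    (σ : Fin l → Fin m) (hσ : Function.Injective σ) :
    ∃ (K : ℝ) (S : Finset ℕ) (ε : ℕ), ε ≤ 1 ∧ (∀ c ∈ S, c ≤ m-1) ∧
      (0 ∈ S → ee m l1 l2 = 2) ∧ ((m-1) ∈ S → ε = 1) ∧
      (∀ c ∈ S, c ≠ 0 → c ≠ m-1 → c ∈ CallF m l1 l2) ∧ (ε = 1 → S.Nonempty) ∧
      ∀ z : ℝ, (m:ℝ) - 1 < z →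
        PLtop (thf m (((m:ℝ)-1)/z)) σ = K * (z - ((m:ℝ)-1))^ε * (∏ c ∈ S, (z - (c:ℝ)))⁻¹ := by
  classical
  by_cases hspec : ∃ p₀ : Fin l, (σ p₀ : ℕ) = m - 1
  case neg =>
    refine ⟨1, Finset.range l, 0, by norm_num, ?_, ?_, ?_, ?_, by simp, ?_⟩
    · intro c hc; rw [mem_range] at hc; omega
    · intro h0; rw [mem_range] at h0
      rw [ee, if_pos (Or.inl (by omega))]
    · intro hD; rw [mem_range] at hD; omega
    · intro c hc hc0 hcD; rw [mem_range] at hc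
      rw [CallF, mem_erase]
      exact ⟨hc0, mem_union_left _ (mem_Ico.mpr ⟨by omega, by omega⟩)⟩
    · intro z hz
      push_neg at hspec
      set D : ℝ := (m:ℝ) - 1 with hD
      have hm2 : (2:ℝ) ≤ (m:ℝ) := by exact_mod_cast hm
      have hD1 : (1:ℝ) ≤ D := by rw [hD]; linarith
      have hz0 : (0:ℝ) < z := by linarith
      have hDne : D ≠ 0 := by linarith
      have hzne : z ≠ 0 := ne_of_gt hz0
      have hyD : (D/z)/D = z⁻¹ := by field_simp
      have hfac : ∀ p : Fin l, thf m (D/z) (σ p) /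
          (1 - ∑ q ∈ univ.filter (fun q : Fin l => q < p), thf m (D/z) (σ q))
          = (z - ((p:ℕ):ℝ))⁻¹ := by
        intro p
        have hpl : (p:ℕ) < l := p.isLt
        have hzp : z - ((p:ℕ):ℝ) > 0 := by
          have : ((p:ℕ):ℝ) ≤ (m:ℝ) - 2 := cast_le_sub (m := m) (c := (p:ℕ)) (j := 2)
            (by omega) (by omega)
          rw [hD] at hz; linarith
        rw [sum_theta_nospec _ σ _ (fun q _ => hspec q), filter_lt_card p,
          thf, if_neg (hspec p), ← hD, hyD]
        exact factor1 hzne hzp.ne'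
      rw [PLtop, Finset.prod_congr rfl (fun p _ => hfac p)]
      rw [Fin.prod_univ_eq_prod_range (fun c : ℕ => (z - (c:ℝ))⁻¹) l]
      rw [← Finset.prod_inv_distrib]
      norm_num
  case pos =>
    obtain ⟨p₀, hp₀⟩ := hspec
    have hp₀l : (p₀:ℕ) < l := p₀.isLt
    have hl1pos : 1 ≤ l1 := by omega
    refine ⟨∏ c ∈ Finset.Ico ((p₀:ℕ)+1) l, ((m:ℝ) - (c:ℝ))⁻¹,
      Finset.range ((p₀:ℕ)+1), 1, le_refl 1, ?_, ?_, ?_, ?_, ?_, ?_⟩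
    · intro c hc; rw [mem_range] at hc; omega
    · intro _; rw [ee, if_pos (Or.inl hl1pos)]
    · intro _; rfl
    · intro c hc hc0 hcD; rw [mem_range] at hc
      rw [CallF, mem_erase]
      exact ⟨hc0, mem_union_left _ (mem_Ico.mpr ⟨by omega, by omega⟩)⟩
    · intro _; exact ⟨0, by simp⟩
    · intro z hz
      set D : ℝ := (m:ℝ) - 1 with hD
      have hm2 : (2:ℝ) ≤ (m:ℝ) := by exact_mod_cast hm
      have hD1 : (1:ℝ) ≤ D := by rw [hD]; linarith
      have hz0 : (0:ℝ) < z := by linarith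
      have hDne : D ≠ 0 := by linarith
      have hzne : z ≠ 0 := ne_of_gt hz0
      have hyD : (D/z)/D = z⁻¹ := by field_simp
      have hnospec : ∀ p : Fin l, (p:ℕ) ≤ (p₀:ℕ) →
          ∀ q ∈ univ.filter (fun q : Fin l => q < p), ((σ q : ℕ) ≠ m - 1) := by
        intro p hp q hq hcontra
        rw [mem_filter] at hq
        have : σ q = σ p₀ := Fin.ext (by rw [hcontra, hp₀])
        have : q = p₀ := hσ this
        subst this
        have := hq.2
        rw [Fin.lt_def] at this
        omega
      set G : ℕ → ℝ := fun c => if c < (p₀:ℕ) then (z - (c:ℝ))⁻¹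
        else if c = (p₀:ℕ) then (z - D) * (z - ((p₀:ℕ):ℝ))⁻¹
        else ((m:ℝ) - (c:ℝ))⁻¹ with hG
      have hzc : ∀ c : ℕ, c < l → z - (c:ℝ) > 0 := by
        intro c hc
        have : (c:ℝ) ≤ (m:ℝ) - 2 := cast_le_sub (m := m) (c := c) (j := 2) (by omega) (by omega)
        rw [hD] at hz; linarith
      have hfac : ∀ p : Fin l, thf m (D/z) (σ p) /
          (1 - ∑ q ∈ univ.filter (fun q : Fin l => q < p), thf m (D/z) (σ q))
          = G (p:ℕ) := by
        intro p
        have hpl : (p:ℕ) < l := p.isLt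
        rcases lt_trichotomy ((p:ℕ)) ((p₀:ℕ)) with hlt | heq | hgt
        · have hne : (σ p : ℕ) ≠ m - 1 := by
            intro hcontra
            have : p = p₀ := hσ (Fin.ext (by rw [hcontra, hp₀]))
            omega
          rw [sum_theta_nospec _ σ _ (hnospec p (le_of_lt hlt)), filter_lt_card p,
            thf, if_neg hne, ← hD, hyD, hG]
          simp only [if_pos hlt]
          exact factor1 hzne (hzc (p:ℕ) hpl).ne'
        · have hpp : p = p₀ := Fin.ext heq
          subst hpp
          rw [sum_theta_nospec _ σ _ (hnospec p (le_refl _)), filter_lt_card p,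
            thf, if_pos hp₀, ← hD, hyD, hG]
          simp only [lt_irrefl, ite_false, eq_self_iff_true, if_true]
          have h1 : (1:ℝ) - (p:ℕ) * z⁻¹ = (z - (p:ℕ)) / z := by
            field_simp
          rw [h1]
          rw [div_div_eq_mul_div, div_eq_mul_inv]
          congr 1
          have hy : 1 - D/z = (z - D)/z := by field_simp
          rw [hy]
          exact div_mul_cancel₀ _ hzne
        · have hp₀mem : p₀ ∈ univ.filter (fun q : Fin l => q < p) := by
            rw [mem_filter]
            exact ⟨mem_univ _, by rw [Fin.lt_def]; omega⟩
          rw [sum_theta_spec _ σ hσ _ p₀ hp₀mem hp₀, filter_lt_card p,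
            thf, ← hD]
          have hne : (σ p : ℕ) ≠ m - 1 := by
            intro hcontra
            have : p = p₀ := hσ (Fin.ext (by rw [hcontra, hp₀]))
            omega
          rw [if_neg hne, hyD, hG]
          simp only [if_neg (by omega : ¬ (p:ℕ) < (p₀:ℕ)), if_neg (by omega : ¬ (p:ℕ) = (p₀:ℕ))]
          have hmp : (m:ℝ) - (p:ℕ) ≥ 2 := by
            have : ((p:ℕ):ℝ) ≤ (m:ℝ) - 2 := cast_le_sub (m := m) (c := (p:ℕ)) (j := 2)
              (by omega) (by omega)
            linarith
          have hden : 1 - ((p:ℕ) * z⁻¹ + (1 - D/z - z⁻¹)) = ((m:ℝ) - (p:ℕ))/z := by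
            rw [hD]; field_simp; ring
          rw [hden, div_div_eq_mul_div, inv_mul_cancel₀ hzne, one_div]
      rw [PLtop, Finset.prod_congr rfl (fun p _ => hfac p)]
      rw [Fin.prod_univ_eq_prod_range G l]
      have hsplit : ∏ c ∈ range l, G c
          = (∏ c ∈ range ((p₀:ℕ)+1), G c) * ∏ c ∈ Finset.Ico ((p₀:ℕ)+1) l, G c := by
        rw [range_eq_Ico, range_eq_Ico]
        exact (Finset.prod_Ico_consecutive G (Nat.zero_le _) (by omega : (p₀:ℕ)+1 ≤ l)).symm
      rw [hsplit, Finset.prod_range_succ]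
      have h1 : ∀ c ∈ range (p₀:ℕ), G c = (z - (c:ℝ))⁻¹ := by
        intro c hc
        rw [hG]
        simp only [if_pos (mem_range.mp hc)]
      have h2 : G (p₀:ℕ) = (z - D) * (z - ((p₀:ℕ):ℝ))⁻¹ := by
        rw [hG]
        simp only [lt_irrefl, ite_false, ite_true, if_neg (lt_irrefl _), if_pos rfl]
      have h3 : ∀ c ∈ Finset.Ico ((p₀:ℕ)+1) l, G c = ((m:ℝ) - (c:ℝ))⁻¹ := by
        intro c hc
        rw [mem_Ico] at hc
        rw [hG]
        simp only [if_neg (by omega : ¬ c < (p₀:ℕ)), if_neg (by omega : ¬ c = (p₀:ℕ))]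
      rw [Finset.prod_congr rfl h1, Finset.prod_congr rfl h3, h2,
        pow_one, Finset.prod_range_succ (fun c : ℕ => z - (c:ℝ)), mul_inv,
        ← Finset.prod_inv_distrib]
      ring

lemma way_eval (m l1 l2 l : ℕ) (hm : 2 ≤ m) (hl2 : 1 ≤ l2) (hl2m : l2 ≤ m) (hl : l ≤ l2)
    (σ : Fin l → Fin m) (hσ : Function.Injective σ) :
    ∃ (K : ℝ) (S : Finset ℕ) (ε : ℕ), ε ≤ 1 ∧ (∀ c ∈ S, c ≤ m-1) ∧
      (0 ∈ S → ee m l1 l2 = 2) ∧ ((m-1) ∈ S → ε = 1) ∧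
      (∀ c ∈ S, c ≠ 0 → c ≠ m-1 → c ∈ CallF m l1 l2) ∧ (ε = 1 → S.Nonempty) ∧
      ∀ z : ℝ, (m:ℝ) - 1 < z →
        PLway (thf m (((m:ℝ)-1)/z)) σ = K * (z - ((m:ℝ)-1))^ε * (∏ c ∈ S, (z - (c:ℝ)))⁻¹ := by
  classical
  have hlm : l ≤ m := le_trans hl hl2m
  by_cases hspec : ∃ p₀ : Fin l, (σ p₀ : ℕ) = m - 1
  case neg =>
    refine ⟨∏ c ∈ Finset.range l, ((l:ℝ) - (c:ℝ))⁻¹, ∅, 0, by norm_num, by simp, by simp,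
      by simp, by simp, by simp, ?_⟩
    intro z hz
    push_neg at hspec
    set D : ℝ := (m:ℝ) - 1 with hD
    have hm2 : (2:ℝ) ≤ (m:ℝ) := by exact_mod_cast hm
    have hD1 : (1:ℝ) ≤ D := by rw [hD]; linarith
    have hz0 : (0:ℝ) < z := by linarith
    have hDne : D ≠ 0 := by linarith
    have hzne : z ≠ 0 := ne_of_gt hz0
    have hyD : (D/z)/D = z⁻¹ := by field_simp
    have hfac : ∀ p : Fin l, thf m (D/z) (σ p) /
        (∑ q ∈ univ.filter (fun q : Fin l => p ≤ q), thf m (D/z) (σ q))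
        = ((l:ℝ) - ((p:ℕ):ℝ))⁻¹ := by
      intro p
      have hpl : (p:ℕ) < l := p.isLt
      have hlp : (1:ℝ) ≤ (l:ℝ) - ((p:ℕ):ℝ) := by
        have h1 : ((p:ℕ):ℝ) + 1 ≤ (l:ℝ) := by exact_mod_cast hpl
        linarith
      rw [sum_theta_nospec _ σ _ (fun q _ => hspec q), filter_le_card p,
        thf, if_neg (hspec p), ← hD, hyD]
      have hcast : ((l - (p:ℕ) : ℕ):ℝ) = (l:ℝ) - ((p:ℕ):ℝ) := by
        rw [Nat.cast_sub (le_of_lt hpl)]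
      rw [hcast, factor4 hzne (by linarith)]
    rw [PLway, Finset.prod_congr rfl (fun p _ => hfac p)]
    rw [Fin.prod_univ_eq_prod_range (fun c : ℕ => ((l:ℝ) - (c:ℝ))⁻¹) l]
    norm_num
  case pos =>
    obtain ⟨p₀, hp₀⟩ := hspec
    have hp₀l : (p₀:ℕ) < l := p₀.isLt
    refine ⟨∏ c ∈ Finset.Ico ((p₀:ℕ)+1) l, ((l:ℝ) - (c:ℝ))⁻¹,
      Finset.Ico (m-l) (m-l+(p₀:ℕ)+1), 1, le_refl 1, ?_, ?_, ?_, ?_, ?_, ?_⟩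
    · intro c hc; rw [mem_Ico] at hc; omega
    · intro h0; rw [mem_Ico] at h0
      have : l2 = m := by omega
      rw [ee, if_pos (Or.inr this)]
    · intro _; rfl
    · intro c hc hc0 hcD; rw [mem_Ico] at hc
      rw [CallF, mem_erase]
      exact ⟨hc0, mem_union_right _ (mem_Ico.mpr ⟨by omega, by omega⟩)⟩
    · intro _; exact ⟨m-l, mem_Ico.mpr ⟨le_refl _, by omega⟩⟩
    · intro z hz
      set D : ℝ := (m:ℝ) - 1 with hD
      have hm2 : (2:ℝ) ≤ (m:ℝ) := by exact_mod_cast hm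
      have hD1 : (1:ℝ) ≤ D := by rw [hD]; linarith
      have hz0 : (0:ℝ) < z := by linarith
      have hDne : D ≠ 0 := by linarith
      have hzne : z ≠ 0 := ne_of_gt hz0
      have hyD : (D/z)/D = z⁻¹ := by field_simp
      have hspecq : ∀ p : Fin l, (p₀:ℕ) < (p:ℕ) →
          ∀ q ∈ univ.filter (fun q : Fin l => p ≤ q), ((σ q : ℕ) ≠ m - 1) := by
        intro p hp q hq hcontra
        rw [mem_filter] at hq
        have : q = p₀ := hσ (Fin.ext (by rw [hcontra, hp₀]))
        subst this
        have := hq.2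
        rw [Fin.le_def] at this
        omega
      set G : ℕ → ℝ := fun c => if c < (p₀:ℕ) then (z - ((m-l+c:ℕ):ℝ))⁻¹
        else if c = (p₀:ℕ) then (z - D) * (z - ((m-l+c:ℕ):ℝ))⁻¹
        else ((l:ℝ) - (c:ℝ))⁻¹ with hG
      have hcastml : ∀ c : ℕ, ((m-l+c:ℕ):ℝ) = (m:ℝ) - l + c := by
        intro c
        push_cast [Nat.cast_sub hlm]
        ring
      have hzc : ∀ c : ℕ, c ≤ (p₀:ℕ) → z - ((m-l+c:ℕ):ℝ) > 0 := by
        intro c hc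
        have h1 : (m-l+c:ℕ) ≤ m - 1 := by omega
        have h2 := cast_le_sub (m := m) (c := m-l+c) (j := 1) (by omega) (by omega)
        norm_num at h2
        rw [Nat.cast_sub hlm] at h2
        rw [hcastml]
        rw [hD] at hz
        have h3 : (m:ℝ) - l + c ≤ (m:ℝ) - 1 := by linarith
        linarith
      have hsum_le : ∀ p : Fin l, (p:ℕ) ≤ (p₀:ℕ) →
          (∑ q ∈ univ.filter (fun q : Fin l => p ≤ q), thf m (D/z) (σ q))
          = (z - ((m-l+(p:ℕ):ℕ):ℝ))/z := by
        intro p hp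
        have hp₀mem : p₀ ∈ univ.filter (fun q : Fin l => p ≤ q) := by
          rw [mem_filter]
          exact ⟨mem_univ _, by rw [Fin.le_def]; omega⟩
        rw [sum_theta_spec _ σ hσ _ p₀ hp₀mem hp₀, filter_le_card p, ← hD, hyD]
        have hcast : ((l - (p:ℕ) : ℕ):ℝ) = (l:ℝ) - ((p:ℕ):ℝ) := by
          rw [Nat.cast_sub (le_of_lt p.isLt)]
        rw [hcast, hcastml]
        simp only [hD]
        field_simp
        ring
      have hfac : ∀ p : Fin l, thf m (D/z) (σ p) /
          (∑ q ∈ univ.filter (fun q : Fin l => p ≤ q), thf m (D/z) (σ q))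
          = G (p:ℕ) := by
        intro p
        have hpl : (p:ℕ) < l := p.isLt
        rcases lt_trichotomy ((p:ℕ)) ((p₀:ℕ)) with hlt | heq | hgt
        · have hne : (σ p : ℕ) ≠ m - 1 := by
            intro hcontra
            have : p = p₀ := hσ (Fin.ext (by rw [hcontra, hp₀]))
            omega
          rw [hsum_le p (le_of_lt hlt), thf, if_neg hne, ← hD, hyD, hG]
          simp only [if_pos hlt]
          rw [div_div_eq_mul_div, inv_mul_cancel₀ hzne, one_div]
        · have hpp : p = p₀ := Fin.ext heq
          subst hpp
          rw [hsum_le p (le_refl _), thf, if_pos hp₀, hG]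
          simp only [lt_irrefl, ite_false, eq_self_iff_true, if_true]
          have hy : 1 - D/z = (z - D)/z := by field_simp
          rw [hy, div_div_eq_mul_div, div_mul_cancel₀ _ hzne, div_eq_mul_inv]
        · have hne : (σ p : ℕ) ≠ m - 1 := by
            intro hcontra
            have : p = p₀ := hσ (Fin.ext (by rw [hcontra, hp₀]))
            omega
          rw [sum_theta_nospec _ σ _ (hspecq p hgt), filter_le_card p,
            thf, if_neg hne, ← hD, hyD, hG]
          simp only [if_neg (by omega : ¬ (p:ℕ) < (p₀:ℕ)), if_neg (by omega : ¬ (p:ℕ) = (p₀:ℕ))]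
          have hlp : (1:ℝ) ≤ (l:ℝ) - ((p:ℕ):ℝ) := by
            have h1 : ((p:ℕ):ℝ) + 1 ≤ (l:ℝ) := by exact_mod_cast hpl
            linarith
          have hcast : ((l - (p:ℕ) : ℕ):ℝ) = (l:ℝ) - ((p:ℕ):ℝ) := by
            rw [Nat.cast_sub (le_of_lt hpl)]
          rw [hcast, factor4 hzne (by linarith)]
      rw [PLway, Finset.prod_congr rfl (fun p _ => hfac p)]
      rw [Fin.prod_univ_eq_prod_range G l]
      have hsplit : ∏ c ∈ range l, G c
          = (∏ c ∈ range ((p₀:ℕ)+1), G c) * ∏ c ∈ Finset.Ico ((p₀:ℕ)+1) l, G c := by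
        rw [range_eq_Ico, range_eq_Ico]
        exact (Finset.prod_Ico_consecutive G (Nat.zero_le _) (by omega : (p₀:ℕ)+1 ≤ l)).symm
      rw [hsplit, Finset.prod_range_succ]
      have h1 : ∀ c ∈ range (p₀:ℕ), G c = (z - ((m-l+c:ℕ):ℝ))⁻¹ := by
        intro c hc
        rw [hG]
        simp only [if_pos (mem_range.mp hc)]
      have h2 : G (p₀:ℕ) = (z - D) * (z - ((m-l+(p₀:ℕ):ℕ):ℝ))⁻¹ := by
        rw [hG]
        simp only [lt_irrefl, ite_false, eq_self_iff_true, if_true]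
      have h3 : ∀ c ∈ Finset.Ico ((p₀:ℕ)+1) l, G c = ((l:ℝ) - (c:ℝ))⁻¹ := by
        intro c hc
        rw [mem_Ico] at hc
        rw [hG]
        simp only [if_neg (by omega : ¬ c < (p₀:ℕ)), if_neg (by omega : ¬ c = (p₀:ℕ))]
      rw [Finset.prod_congr rfl h1, Finset.prod_congr rfl h3, h2, pow_one]
      have hSprod : ∏ c ∈ Finset.Ico (m-l) (m-l+(p₀:ℕ)+1), (z - (c:ℝ))
          = (∏ c ∈ range (p₀:ℕ), (z - ((m-l+c:ℕ):ℝ))) * (z - ((m-l+(p₀:ℕ):ℕ):ℝ)) := by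
        rw [Finset.prod_Ico_eq_prod_range]
        have h4 : m - l + (p₀:ℕ) + 1 - (m-l) = (p₀:ℕ) + 1 := by omega
        rw [h4, Finset.prod_range_succ]
      rw [hSprod, mul_inv, ← Finset.prod_inv_distrib]
      ring
-- appended to final.lean
/-- **Non-identifiability of `k`-PL from ranked top-`l₁` and `l₂`-way data**
(Theorem 1): if `m ≥ 2`, `l₁ ≤ m - 1`, `1 ≤ l₂ ≤ m` and `k ≥ (l₁+l₂+1)/2`,
then there are two `k`-PL parameters with different mixing measures giving the
same marginal probability to every ranked top-`l` order with `l ≤ l₁` and to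
every `l`-way order with `l ≤ l₂`. -/
theorem kPL_nonidentifiable_top_way
    (m l1 l2 k : ℕ) (hm : 2 ≤ m) (hl1 : l1 ≤ m - 1) (hl2 : 1 ≤ l2) (hl2m : l2 ≤ m)
    (hk : l1 + l2 + 1 ≤ 2 * k) :
    ∃ (α α' : Fin k → ℝ) (θ θ' : Fin k → Fin m → ℝ),
      (∀ r, 0 < α r) ∧ (∑ r, α r = 1) ∧ (∀ r, IsPLParam (θ r)) ∧
      (∀ r, 0 < α' r) ∧ (∑ r, α' r = 1) ∧ (∀ r, IsPLParam (θ' r)) ∧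
      mixingMeasure α θ ≠ mixingMeasure α' θ' ∧
      (∀ (l : ℕ), l ≤ l1 → ∀ σ : Fin l → Fin m, Function.Injective σ →
        ∑ r, α r * PLtop (θ r) σ = ∑ r, α' r * PLtop (θ' r) σ) ∧
      (∀ (l : ℕ), l ≤ l2 → ∀ σ : Fin l → Fin m, Function.Injective σ →
        ∑ r, α r * PLway (θ r) σ = ∑ r, α' r * PLway (θ' r) σ) := by
  classical
  have hk1 : 1 ≤ k := by omega
  have hm2 : (2:ℝ) ≤ (m:ℝ) := by exact_mod_cast hm
  have hzgt : ∀ j, (m:ℝ) - 1 < zf m j := fun j => zf_gt m j hm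
  set yv : ℕ → ℝ := fun j => ((m:ℝ)-1)/(zf m j) with hyv
  have hy0 : ∀ j, 0 < yv j := fun j => div_pos (by linarith) (by linarith [hzgt j])
  have hy1 : ∀ j, yv j < 1 := fun j => (div_lt_one (by linarith [hzgt j])).mpr (hzgt j)
  have hyinj : ∀ a b : ℕ, yv a = yv b → a = b := by
    intro a b hab
    simp only [hyv] at hab
    have hza := hzgt a
    have hzb := hzgt b
    have h1 : zf m a ≠ 0 := by linarith
    have h2 : zf m b ≠ 0 := by linarith
    have h3 : ((m:ℝ)-1) ≠ 0 := by linarith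
    rw [div_eq_div_iff h1 h2] at hab
    have h5 := mul_left_cancel₀ h3 (by linarith : ((m:ℝ)-1) * zf m a = ((m:ℝ)-1) * zf m b)
    exact zf_inj m h5
  have hodd : ∀ r, r < k → 0 < lam m l1 l2 k (2*r+1) := by
    intro r hr
    have h := lam_sign m l1 l2 k (2*r+1) hm hl1 (by omega)
    have hpow : ((-1:ℝ))^(2*r+1+1) = 1 := by
      rw [show 2*r+1+1 = 2*(r+1) by ring, pow_mul]; norm_num
    rw [hpow, one_mul] at h
    exact h
  have heven : ∀ r, r < k → lam m l1 l2 k (2*r) < 0 := by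
    intro r hr
    have h := lam_sign m l1 l2 k (2*r) hm hl1 (by omega)
    have hpow : ((-1:ℝ))^(2*r+1) = -1 := by
      rw [pow_succ, pow_mul]; norm_num
    rw [hpow] at h
    linarith
  have hsum0 : ∑ j ∈ Finset.range (2*k), lam m l1 l2 k j = 0 := by
    have h := master m l1 l2 k hm hl1 hl2 hl2m hk ∅ 0 (by simp) (by simp) (by simp)
      (by simp) (by simp) (by norm_num) 1
    simpa using h
  set s : ℝ := ∑ r ∈ Finset.range k, lam m l1 l2 k (2*r+1) with hs
  have hspos : 0 < s :=
    Finset.sum_pos (fun r hr => hodd r (mem_range.mp hr)) ⟨0, mem_range.mpr (by omega)⟩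
  have hsne : s ≠ 0 := ne_of_gt hspos
  have hevensum : ∑ r ∈ Finset.range k, lam m l1 l2 k (2*r) = -s := by
    have h := sum_split k (lam m l1 l2 k)
    rw [hsum0] at h
    rw [hs]
    linarith
  refine ⟨fun r => lam m l1 l2 k (2*(r:ℕ)+1)/s, fun r => -(lam m l1 l2 k (2*(r:ℕ)))/s,
    fun r => thf m (yv (2*(r:ℕ)+1)), fun r => thf m (yv (2*(r:ℕ))),
    ?_, ?_, ?_, ?_, ?_, ?_, ?_, ?_, ?_⟩
  · intro r
    exact div_pos (hodd (r:ℕ) r.isLt) hspos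
  · rw [Fin.sum_univ_eq_sum_range (fun j => lam m l1 l2 k (2*j+1)/s) k, ← Finset.sum_div,
      ← hs, div_self hsne]
  · intro r
    exact thf_isPL m hm _ (hy0 _) (hy1 _)
  · intro r
    have := heven (r:ℕ) r.isLt
    have h2 : 0 < -(lam m l1 l2 k (2*(r:ℕ))) := by linarith
    exact div_pos h2 hspos
  · rw [Fin.sum_univ_eq_sum_range (fun j => -(lam m l1 l2 k (2*j))/s) k, ← Finset.sum_div]
    have h3 : ∑ j ∈ Finset.range k, -(lam m l1 l2 k (2*j)) = s := by
      rw [Finset.sum_neg_distrib, hevensum, neg_neg]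
    rw [h3, div_self hsne]
  · intro r
    exact thf_isPL m hm _ (hy0 _) (hy1 _)
  · -- distinct mixing measures
    intro hcontra
    have h1 := congrFun hcontra (thf m (yv 1))
    simp only [mixingMeasure] at h1
    have hLHS : 0 < ∑ r : Fin k,
        if thf m (yv (2*(r:ℕ)+1)) = thf m (yv 1) then lam m l1 l2 k (2*(r:ℕ)+1)/s else 0 := by
      apply Finset.sum_pos'
      · intro r _
        split
        · exact le_of_lt (div_pos (hodd (r:ℕ) r.isLt) hspos)
        · exact le_refl 0
      · refine ⟨⟨0, by omega⟩, mem_univ _, ?_⟩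
        have hc : thf m (yv (2*((⟨0, by omega⟩ : Fin k):ℕ)+1)) = thf m (yv 1) := by norm_num
        rw [if_pos hc]
        exact div_pos (hodd 0 (by omega)) hspos
    have hRHS : (∑ r : Fin k,
        if thf m (yv (2*(r:ℕ))) = thf m (yv 1) then -(lam m l1 l2 k (2*(r:ℕ)))/s else 0) = 0 := by
      apply Finset.sum_eq_zero
      intro r _
      rw [if_neg]
      intro hc
      have := hyinj _ _ (thf_inj m hm hc)
      omega
    rw [h1, hRHS] at hLHS
    exact lt_irrefl 0 hLHS
  · -- top queries
    intro l hl σ hσ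
    obtain ⟨K, S, ε, hε, hSD, h0, hDe, hC, hne, hform⟩ := top_eval m l1 l2 l hm hl1 hl σ hσ
    have hform' : ∀ j : ℕ, PLtop (thf m (yv j)) σ
        = K * (zf m j - ((m:ℝ)-1))^ε * (∏ c ∈ S, (zf m j - (c:ℝ)))⁻¹ :=
      fun j => hform (zf m j) (hzgt j)
    have h0' : ∑ j ∈ Finset.range (2*k), lam m l1 l2 k j * PLtop (thf m (yv j)) σ = 0 := by
      rw [Finset.sum_congr rfl (fun j _ => by rw [hform' j])]
      exact master m l1 l2 k hm hl1 hl2 hl2m hk S ε hSD h0 hDe hC hne hε K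
    rw [sum_split k (fun j => lam m l1 l2 k j * PLtop (thf m (yv j)) σ)] at h0'
    rw [Fin.sum_univ_eq_sum_range
      (fun j => lam m l1 l2 k (2*j+1)/s * PLtop (thf m (yv (2*j+1))) σ) k]
    rw [Fin.sum_univ_eq_sum_range
      (fun j => -(lam m l1 l2 k (2*j))/s * PLtop (thf m (yv (2*j))) σ) k]
    rw [← sub_eq_zero, ← Finset.sum_sub_distrib]
    have hterm : ∀ j ∈ Finset.range k,
        lam m l1 l2 k (2*j+1)/s * PLtop (thf m (yv (2*j+1))) σ
          - (-(lam m l1 l2 k (2*j))/s * PLtop (thf m (yv (2*j))) σ)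
        = (lam m l1 l2 k (2*j+1) * PLtop (thf m (yv (2*j+1))) σ
            + lam m l1 l2 k (2*j) * PLtop (thf m (yv (2*j))) σ)/s := by
      intro j _
      ring
    rw [Finset.sum_congr rfl hterm, ← Finset.sum_div]
    have hnum : ∑ j ∈ Finset.range k,
        (lam m l1 l2 k (2*j+1) * PLtop (thf m (yv (2*j+1))) σ
          + lam m l1 l2 k (2*j) * PLtop (thf m (yv (2*j))) σ) = 0 := by
      rw [Finset.sum_add_distrib]
      linarith
    rw [hnum, zero_div]
  · -- way queries
    intro l hl σ hσ
    obtain ⟨K, S, ε, hε, hSD, h0, hDe, hC, hne, hform⟩ := way_eval m l1 l2 l hm hl2 hl2m hl σ hσ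
    have hform' : ∀ j : ℕ, PLway (thf m (yv j)) σ
        = K * (zf m j - ((m:ℝ)-1))^ε * (∏ c ∈ S, (zf m j - (c:ℝ)))⁻¹ :=
      fun j => hform (zf m j) (hzgt j)
    have h0' : ∑ j ∈ Finset.range (2*k), lam m l1 l2 k j * PLway (thf m (yv j)) σ = 0 := by
      rw [Finset.sum_congr rfl (fun j _ => by rw [hform' j])]
      exact master m l1 l2 k hm hl1 hl2 hl2m hk S ε hSD h0 hDe hC hne hε K
    rw [sum_split k (fun j => lam m l1 l2 k j * PLway (thf m (yv j)) σ)] at h0'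
    rw [Fin.sum_univ_eq_sum_range
      (fun j => lam m l1 l2 k (2*j+1)/s * PLway (thf m (yv (2*j+1))) σ) k]
    rw [Fin.sum_univ_eq_sum_range
      (fun j => -(lam m l1 l2 k (2*j))/s * PLway (thf m (yv (2*j))) σ) k]
    rw [← sub_eq_zero, ← Finset.sum_sub_distrib]
    have hterm : ∀ j ∈ Finset.range k,
        lam m l1 l2 k (2*j+1)/s * PLway (thf m (yv (2*j+1))) σ
          - (-(lam m l1 l2 k (2*j))/s * PLway (thf m (yv (2*j))) σ)
        = (lam m l1 l2 k (2*j+1) * PLway (thf m (yv (2*j+1))) σ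
            + lam m l1 l2 k (2*j) * PLway (thf m (yv (2*j))) σ)/s := by
      intro j _
      ring
    rw [Finset.sum_congr rfl hterm, ← Finset.sum_div]
    have hnum : ∑ j ∈ Finset.range k,
        (lam m l1 l2 k (2*j+1) * PLway (thf m (yv (2*j+1))) σ
          + lam m l1 l2 k (2*j) * PLway (thf m (yv (2*j))) σ) = 0 := by
      rw [Finset.sum_add_distrib]
      linarith
    rw [hnum, zero_div]
end

section
/- Fix a set of m ≥ 2 alternatives, integers l1 with 0 ≤ l1 ≤ m−1 and l3 with 1 ≤ l3 ≤ m, and any integer k ≥ (l1+l3+1)/2. Then the mixture of k Plackett-Luce models is not identifiable from ranked top orders of length at most l1 together with choice data over subsets of size at most l3: there exist two k-PL parameters whose mixing measures differ, yet for every ranked top-l order with l ≤ l1 and every choice-l order (A', a) with |A'| = l ≤ l3, the two mixtures assign the same marginal probability. -/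
open Finset

/-- PL marginal probability of the choice order `(A', a)`: alternative `a` is
chosen from the subset `A'`. -/
noncomputable def PLchoice {m : ℕ} (θ : Fin m → ℝ) (A' : Finset (Fin m)) (a : Fin m) : ℝ :=
  θ a / ∑ j ∈ A', θ j

section Aux

open Polynomial

/-- Divided-difference identity: a weighted sum of values of a polynomial of low degree,
with Lagrange-type weights, vanishes. -/
lemma pl_master {ι : Type*} [DecidableEq ι] (s : Finset ι) (v : ι → ℝ) (hv : Set.InjOn v s)
    (g : ℝ[X]) (hg : g.natDegree + 2 ≤ s.card) :
    ∑ j ∈ s, g.eval (v j) * ∏ i ∈ s.erase j, (v j - v i)⁻¹ = 0 := by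
  have hs2 : 2 ≤ s.card := le_trans (by omega) hg
  have hdeg : g.degree < (s.card : WithBot ℕ) := by
    refine lt_of_le_of_lt degree_le_natDegree ?_
    exact_mod_cast (by omega : g.natDegree < s.card)
  have hinterp := Lagrange.eq_interpolate hv hdeg
  have hco : g.coeff (s.card - 1) = 0 :=
    coeff_eq_zero_of_natDegree_lt (by omega)
  have hbasis : ∀ j ∈ s, (Lagrange.basis s v j).coeff (s.card - 1)
      = ∏ i ∈ s.erase j, (v j - v i)⁻¹ := by
    intro j hj
    have h1 : Lagrange.basis s v j
        = C (∏ i ∈ s.erase j, (v j - v i)⁻¹) * ∏ i ∈ s.erase j, (X - C (v i)) := by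
      unfold Lagrange.basis Lagrange.basisDivisor
      rw [Finset.prod_mul_distrib, ← map_prod]
    have hmon : (∏ i ∈ s.erase j, (X - C (v i))).Monic :=
      monic_prod_of_monic _ _ fun i _ => monic_X_sub_C _
    have hnd : (∏ i ∈ s.erase j, (X - C (v i))).natDegree = s.card - 1 := by
      rw [natDegree_prod_of_monic _ _ fun i _ => monic_X_sub_C _]
      simp [Finset.card_erase_of_mem hj]
    rw [h1, coeff_C_mul, ← hnd, hmon.coeff_natDegree, mul_one]
  calc ∑ j ∈ s, g.eval (v j) * ∏ i ∈ s.erase j, (v j - v i)⁻¹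
      = (Lagrange.interpolate s v fun i => g.eval (v i)).coeff (s.card - 1) := by
        rw [Lagrange.interpolate_apply, Polynomial.finset_sum_coeff]
        refine Finset.sum_congr rfl fun j hj => ?_
        rw [coeff_C_mul, hbasis j hj]
    _ = g.coeff (s.card - 1) := by rw [← hinterp]
    _ = 0 := hco

lemma pl_sum_range_two_mul (k : ℕ) (v : ℕ → ℝ) :
    ∑ j ∈ range (2*k), v j = ∑ r ∈ range k, (v (2*r) + v (2*r+1)) := by
  induction k with
  | zero => simp
  | succ n ih =>
    have h : 2*(n+1) = (2*n+1)+1 := by ring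
    rw [h, Finset.sum_range_succ, Finset.sum_range_succ, ih, Finset.sum_range_succ]
    ring

lemma pl_sign_lemma (n j : ℕ) (hj : j < n) (x : ℕ → ℝ) (hx : StrictMono x) :
    (0:ℝ) < (-1)^(n-1-j) * ∏ i ∈ (range n).erase j, (x j - x i)⁻¹ := by
  have hsplit : (range n).erase j = range j ∪ Finset.Ico (j+1) n := by
    ext i
    simp only [mem_erase, mem_range, mem_union, Finset.mem_Ico]
    omega
  rw [hsplit, Finset.prod_union (by rw [Finset.disjoint_left]; intro a; simp; omega)]
  have h1 : (0:ℝ) < ∏ i ∈ range j, (x j - x i)⁻¹ :=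
    Finset.prod_pos fun i hi => inv_pos.2 (sub_pos.2 (hx (mem_range.1 hi)))
  have h2 : ∏ i ∈ Finset.Ico (j+1) n, (x j - x i)⁻¹
      = (-1)^(n-1-j) * ∏ i ∈ Finset.Ico (j+1) n, (x i - x j)⁻¹ := by
    rw [show ((-1:ℝ))^(n-1-j) = ∏ i ∈ Finset.Ico (j+1) n, (-1:ℝ) by
      rw [Finset.prod_const, Nat.card_Ico]; congr 1; omega,
      ← Finset.prod_mul_distrib]
    refine Finset.prod_congr rfl fun i hi => ?_
    rw [show x j - x i = -(x i - x j) by ring, inv_neg]; ring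
  have h3 : (0:ℝ) < ∏ i ∈ Finset.Ico (j+1) n, (x i - x j)⁻¹ :=
    Finset.prod_pos fun i hi => inv_pos.2 (sub_pos.2 (hx (by simp at hi; omega)))
  have h4 : ((-1:ℝ))^(n-1-j) * ((-1:ℝ))^(n-1-j) = 1 := by
    rw [← pow_add]
    exact (neg_one_pow_eq_one_iff_even (by norm_num)).2 ⟨n-1-j, by ring⟩
  rw [h2]
  calc (0:ℝ) < (∏ i ∈ range j, (x j - x i)⁻¹) * ∏ i ∈ Finset.Ico (j+1) n, (x i - x j)⁻¹ :=
        mul_pos h1 h3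
    _ = (-1)^(n-1-j) * ((∏ i ∈ range j, (x j - x i)⁻¹) *
        ((-1)^(n-1-j) * ∏ i ∈ Finset.Ico (j+1) n, (x i - x j)⁻¹)) := by
        generalize hc : ((-1:ℝ))^(n-1-j) = c at h4 ⊢
        generalize (∏ i ∈ range j, (x j - x i)⁻¹) = a
        generalize (∏ i ∈ Finset.Ico (j+1) n, (x i - x j)⁻¹) = b
        linear_combination (-(a*b)) * h4

/-- The one-parameter family of PL parameters used in the construction. -/
noncomputable def PLf (m : ℕ) (x : ℝ) : Fin m → ℝ :=
  fun i => if (i:ℕ) = m - 1 then 1/m + ((m:ℝ)-1)*x else 1/m - x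

noncomputable def PLpoly (m : ℕ) (i : Fin m) : Polynomial ℝ :=
  if (i:ℕ) = m - 1 then C ((1:ℝ)/m) + C ((m:ℝ)-1) * X else C ((1:ℝ)/m) - X

lemma PLpoly_eval (m : ℕ) (i : Fin m) (x : ℝ) : (PLpoly m i).eval x = PLf m x i := by
  unfold PLpoly PLf
  split <;> simp

lemma PLpoly_natDegree (m : ℕ) (i : Fin m) : (PLpoly m i).natDegree ≤ 1 := by
  unfold PLpoly
  split
  · refine le_trans (natDegree_add_le _ _) ?_
    simp only [natDegree_C, max_le_iff]
    exact ⟨by omega, le_trans (natDegree_C_mul_le _ _) (by simp)⟩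
  · refine le_trans (natDegree_sub_le _ _) ?_
    simp

lemma PLf_split {m : ℕ} (hm : 2 ≤ m) (x : ℝ) (i : Fin m) :
    PLf m x i = (1/m - x) + (if (i:ℕ) = m - 1 then (m:ℝ)*x else 0) := by
  unfold PLf
  split
  · have : (1:ℝ) ≤ m := by exact_mod_cast Nat.one_le_of_lt hm
    ring
  · ring

lemma PLf_pos {m : ℕ} (hm : 2 ≤ m) {x : ℝ} (h0 : 0 < x) (h1 : x < 1/m) (i : Fin m) :
    0 < PLf m x i := by
  have hm0 : (0:ℝ) < m := by positivity
  unfold PLf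
  split
  · have : (0:ℝ) ≤ ((m:ℝ)-1) := by
      have : (1:ℝ) ≤ m := by exact_mod_cast Nat.one_le_of_lt hm
      linarith
    positivity
  · linarith

lemma pl_indic_sum {m : ℕ} (hm : 2 ≤ m) (A : Finset (Fin m)) (c : ℝ) :
    ∑ i ∈ A, (if (i:ℕ) = m - 1 then c else 0)
      = if (⟨m-1, by omega⟩ : Fin m) ∈ A then c else 0 := by
  rw [show (fun i : Fin m => if (i:ℕ) = m - 1 then c else 0)
      = fun i : Fin m => if i = (⟨m-1, by omega⟩ : Fin m) then c else 0 by
    funext i; congr 1; simp [Fin.ext_iff]]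
  exact Finset.sum_ite_eq' A _ _

lemma PLf_sumA {m : ℕ} (hm : 2 ≤ m) (x : ℝ) (A : Finset (Fin m)) :
    ∑ i ∈ A, PLf m x i
      = A.card * (1/m - x) + if (⟨m-1, by omega⟩ : Fin m) ∈ A then (m:ℝ)*x else 0 := by
  rw [Finset.sum_congr rfl fun i _ => PLf_split hm x i, Finset.sum_add_distrib,
    Finset.sum_const, pl_indic_sum hm]
  simp [nsmul_eq_mul]

lemma PLf_isParam {m : ℕ} (hm : 2 ≤ m) {x : ℝ} (h0 : 0 < x) (h1 : x < 1/m) :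
    IsPLParam (PLf m x) := by
  constructor
  · exact PLf_pos hm h0 h1
  · have := PLf_sumA hm x (univ : Finset (Fin m))
    rw [show (∑ i, PLf m x i) = ∑ i ∈ univ, PLf m x i from rfl, this]
    have hmem : (⟨m-1, by omega⟩ : Fin m) ∈ (univ : Finset (Fin m)) := mem_univ _
    rw [if_pos hmem, card_univ, Fintype.card_fin]
    have hm0 : (m:ℝ) ≠ 0 := by positivity
    field_simp
    ring

lemma PLf_inj {m : ℕ} (hm : 2 ≤ m) {x y : ℝ} (h : PLf m x = PLf m y) : x = y := by
  have := congrFun h ⟨0, by omega⟩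
  unfold PLf at this
  simp only [Fin.val_mk] at this
  rw [if_neg (by omega), if_neg (by omega)] at this
  linarith

lemma pl_prodC_natDegree (C' : Finset ℝ) :
    (∏ c ∈ C', (X - Polynomial.C c)).natDegree = C'.card := by
  rw [natDegree_prod_of_monic _ _ fun c _ => monic_X_sub_C c]
  simp

end Aux

section Construct

open Polynomial

lemma pl_choice_g (m l3 : ℕ) (hm : 2 ≤ m) (C' : Finset ℝ)
    (hch : ∀ s : ℕ, 2 ≤ s → s ≤ l3 → s < m → (-((s:ℝ)/(m*((m:ℝ)-s)))) ∈ C')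
    (A' : Finset (Fin m)) (hA : A'.card ≤ l3) (hA2 : 2 ≤ A'.card)
    (a : Fin m) (ha : a ∈ A') :
    ∃ g : ℝ[X], (g.natDegree ≤ C'.card + 1 ∧ (A'.card < m → g.natDegree ≤ C'.card)) ∧
      ∀ x : ℝ, 0 < x → x < 1/m →
      PLchoice (PLf m x) A' a * ∏ c ∈ C', (x - c) = eval x g := by
  classical
  have hm0 : (0:ℝ) < m := by positivity
  by_cases hi0 : (⟨m-1, by omega⟩ : Fin m) ∈ A'
  · by_cases hsm : A'.card = m
    · have hA'univ : A' = univ := by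
        apply Finset.eq_univ_of_card
        rw [hsm, Fintype.card_fin]
      refine ⟨PLpoly m a * ∏ c ∈ C', (X - C c), ⟨?_, fun hlt => absurd hsm (by omega)⟩, ?_⟩
      · refine le_trans (natDegree_mul_le) ?_
        rw [pl_prodC_natDegree]
        have := PLpoly_natDegree m a
        omega
      · intro x h0 h1
        have hsum1 : ∑ j ∈ A', PLf m x j = 1 := by
          rw [hA'univ]; exact (PLf_isParam hm h0 h1).2
        rw [PLchoice, hsum1]
        simp [eval_prod, PLpoly_eval]
    · have hslt : A'.card < m := by
        have : A'.card ≤ m := by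
          have := Finset.card_le_univ A'
          simpa [Fintype.card_fin] using this
        omega
      set s : ℕ := A'.card with hs
      have hms : (0:ℝ) < (m:ℝ) - s := by
        have : (s:ℝ) < m := by exact_mod_cast hslt
        linarith
      set cs : ℝ := -((s:ℝ)/(m*((m:ℝ)-s))) with hcs_def
      have hcs : cs ∈ C' := hch s hA2 hA hslt
      have hcsneg : cs < 0 := by
        rw [hcs_def]
        have : (0:ℝ) < (s:ℝ)/(m*((m:ℝ)-s)) := by
          have hs0 : (0:ℝ) < (s:ℝ) := by exact_mod_cast lt_of_lt_of_le (by norm_num) hA2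
          positivity
        linarith
      have hden : ∀ x : ℝ, ∑ j ∈ A', PLf m x j = ((m:ℝ)-s)*(x - cs) := by
        intro x
        rw [PLf_sumA hm, if_pos hi0, hcs_def]
        field_simp
        ring
      have hdeg : (C (((m:ℝ)-s)⁻¹) * (PLpoly m a * ∏ c ∈ C'.erase cs,
          (X - C c))).natDegree ≤ C'.card := by
        refine le_trans natDegree_mul_le ?_
        refine le_trans (add_le_add (natDegree_C _).le natDegree_mul_le) ?_
        rw [pl_prodC_natDegree, Finset.card_erase_of_mem hcs]
        have h1 := PLpoly_natDegree m a
        have h2 : 1 ≤ C'.card := Finset.card_pos.2 ⟨cs, hcs⟩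
        omega
      refine ⟨C (((m:ℝ)-s)⁻¹) * (PLpoly m a * ∏ c ∈ C'.erase cs, (X - C c)),
        ⟨le_trans hdeg (by omega), fun _ => hdeg⟩, ?_⟩
      · intro x h0 h1
        have hx : x - cs ≠ 0 := by linarith
        rw [PLchoice, hden x]
        rw [← Finset.mul_prod_erase C' (fun c => (x - c)) hcs]
        simp only [eval_mul, eval_C, eval_prod, eval_sub, eval_X, PLpoly_eval]
        field_simp
  · have has : (0:ℝ) < A'.card := by exact_mod_cast lt_of_lt_of_le (by norm_num) hA2
    have hden : ∀ x : ℝ, ∑ j ∈ A', PLf m x j = (A'.card : ℝ)*(1/m - x) := by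
      intro x
      rw [PLf_sumA hm, if_neg hi0, add_zero]
    have hdeg : (C (((A'.card):ℝ)⁻¹) * ∏ c ∈ C', (X - C c)).natDegree ≤ C'.card := by
      refine le_trans natDegree_mul_le ?_
      rw [pl_prodC_natDegree, natDegree_C]
      omega
    refine ⟨C (((A'.card):ℝ)⁻¹) * ∏ c ∈ C', (X - C c),
      ⟨le_trans hdeg (by omega), fun _ => hdeg⟩, ?_⟩
    · intro x h0 h1
      have hxm : 1/(m:ℝ) - x ≠ 0 := by linarith
      have hanum : PLf m x a = 1/m - x := by
        unfold PLf
        rw [if_neg ?_]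
        intro hval
        exact hi0 (by rwa [show (⟨m-1, by omega⟩ : Fin m) = a from (Fin.ext hval.symm)])
      rw [PLchoice, hden x, hanum]
      simp only [eval_mul, eval_C, eval_prod, eval_sub, eval_X]
      have hd : (1/(m:ℝ) - x) / ((A'.card:ℝ) * (1/(m:ℝ) - x)) = ((A'.card:ℝ))⁻¹ := by
        rw [mul_comm, div_mul_cancel_left₀ hxm]
      rw [hd]



lemma pl_top_g (m l1 : ℕ) (hm : 2 ≤ m) (hl1m : l1 + 1 ≤ m) (C' : Finset ℝ)
    (htop : ∀ p : ℕ, 1 ≤ p → p + 1 ≤ l1 → ((1:ℝ)/m - 1/p) ∈ C')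
    (l : ℕ) (hl : l ≤ l1) (hl0 : 1 ≤ l) (σ : Fin l → Fin m) (hσ : Function.Injective σ) :
    ∃ g : ℝ[X], g.natDegree ≤ C'.card + 1 ∧ ∀ x : ℝ, 0 < x → x < 1/m →
      PLtop (PLf m x) σ * ∏ c ∈ C', (x - c) = eval x g := by
  classical
  have hm0 : (0:ℝ) < m := by positivity
  set i0 : Fin m := ⟨m-1, by omega⟩ with hi0_def
  set E : Fin l → Prop := fun p => ∃ q, q < p ∧ σ q = i0 with hE_def
  -- prefix cardinality
  have hfiltcard : ∀ p : Fin l, (univ.filter (fun q : Fin l => q < p)).card = (p:ℕ) := by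
    intro p
    rw [show (univ.filter (fun q : Fin l => q < p)) = Finset.Iio p by
      ext q; simp]
    exact Fin.card_Iio p
  -- prefix sums
  have hpre : ∀ (x : ℝ) (p : Fin l),
      ∑ q ∈ univ.filter (fun q : Fin l => q < p), PLf m x (σ q)
        = (p:ℕ)*(1/m - x) + (if E p then (m:ℝ)*x else 0) := by
    intro x p
    rw [Finset.sum_congr rfl fun q _ => PLf_split hm x (σ q), Finset.sum_add_distrib,
      Finset.sum_const, hfiltcard, nsmul_eq_mul]
    congr 1
    by_cases hEp : E p
    · obtain ⟨q0, hq0lt, hq0⟩ := hEp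
      rw [if_pos (⟨q0, hq0lt, hq0⟩ : E p)]
      rw [Finset.sum_eq_single_of_mem q0 (by simp [hq0lt])]
      · rw [if_pos (by rw [hq0])]
      · intro q hq hne
        rw [if_neg]
        intro hval
        exact hne (hσ (by rw [hq0]; exact Fin.ext hval))
    · rw [if_neg hEp]
      refine Finset.sum_eq_zero fun q hq => ?_
      rw [if_neg]
      intro hval
      exact hEp ⟨q, (Finset.mem_filter.1 hq).2, Fin.ext hval⟩
  -- denominator polynomials
  set P0 : ℝ[X] := C ((1:ℝ)/m) - X with hP0
  set P1 : ℝ[X] := C ((1:ℝ)/m) + C ((m:ℝ)-1) * X with hP1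
  set Dpoly : Fin l → ℝ[X] := fun p =>
    if E p then C ((m:ℝ) - (p:ℕ)) * P0
    else if (p:ℕ) = 0 then 1 else C (((p:ℕ)):ℝ) * (X - C ((1:ℝ)/m - 1/(p:ℕ))) with hD_def
  have hplm : ∀ p : Fin l, (p:ℕ) < m := fun p => by have := p.2; omega
  have hDeval : ∀ (x : ℝ) (p : Fin l),
      eval x (Dpoly p) = 1 - ∑ q ∈ univ.filter (fun q : Fin l => q < p), PLf m x (σ q) := by
    intro x p
    rw [hpre x p]
    have hpm := hplm p
    simp only [hD_def]
    split_ifs with h1 h2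
    · simp only [eval_mul, eval_C, eval_sub, eval_X, hP0]
      field_simp
      ring
    · simp [h2]
    · simp only [eval_mul, eval_C, eval_sub, eval_X]
      have hp0 : ((p:ℕ):ℝ) ≠ 0 := by
        simp only [ne_eq, Nat.cast_eq_zero]; exact h2
      field_simp
      ring
  have hDpos : ∀ (x : ℝ), 0 < x → x < 1/m → ∀ p : Fin l, 0 < eval x (Dpoly p) := by
    intro x h0 h1 p
    have hpm := hplm p
    have hpmR : ((p:ℕ):ℝ) < m := by exact_mod_cast hpm
    simp only [hD_def]
    split_ifs with hc1 hc2
    · simp only [eval_mul, eval_C, eval_sub, eval_X, hP0]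
      have : (0:ℝ) < (m:ℝ) - (p:ℕ) := by linarith
      have : (0:ℝ) < 1/(m:ℝ) - x := by linarith
      positivity
    · simp
    · simp only [eval_mul, eval_C, eval_sub, eval_X]
      have hp1 : (1:ℝ) ≤ ((p:ℕ):ℝ) := by
        exact_mod_cast Nat.one_le_iff_ne_zero.2 hc2
      have hfrac : 1/(m:ℝ) - 1/((p:ℕ):ℝ) ≤ 0 := by
        have h1m : 1/(m:ℝ) ≤ 1/((p:ℕ):ℝ) := by
          apply one_div_le_one_div_of_le
          · linarith
          · linarith
        linarith
      have : (0:ℝ) < x - (1/(m:ℝ) - 1/((p:ℕ):ℝ)) := by linarith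
      positivity
  have hPLtop : ∀ (x : ℝ), 0 < x → x < 1/m →
      PLtop (PLf m x) σ = (∏ p, eval x (PLpoly m (σ p))) / (∏ p, eval x (Dpoly p)) := by
    intro x h0 h1
    rw [PLtop, ← Finset.prod_div_distrib]
    exact Finset.prod_congr rfl fun p _ => by rw [PLpoly_eval, hDeval]
  -- index sets
  set W : Finset (Fin l) := univ.filter E with hW_def
  set U : Finset (Fin l) := univ.filter (fun p => ¬ E p ∧ (p:ℕ) ≠ 0) with hU_def
  set F1 : Finset (Fin l) := univ.filter (fun p => σ p = i0) with hF1_def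
  set e : ℕ := F1.card with he_def
  have he1 : e ≤ 1 := by
    rw [he_def]
    refine Finset.card_le_one.2 fun p hp q hq => ?_
    rw [hF1_def, Finset.mem_filter] at hp hq
    exact hσ (hp.2.trans hq.2.symm)
  have hWF1disj : Disjoint W F1 := by
    rw [Finset.disjoint_left]
    intro p hp hp'
    rw [hW_def, Finset.mem_filter] at hp
    rw [hF1_def, Finset.mem_filter] at hp'
    obtain ⟨q, hqlt, hq⟩ := hp.2
    exact absurd (hσ (hq.trans hp'.2.symm)) (by intro h; rw [h] at hqlt; exact lt_irrefl _ hqlt)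
  have hWe : W.card + e ≤ l := by
    have h1 : (W ∪ F1).card ≤ l := by
      have := Finset.card_le_univ (W ∪ F1)
      simpa using this
    rwa [Finset.card_union_of_disjoint hWF1disj] at h1
  have hUW : U.card + W.card = l - 1 := by
    have hdisj : Disjoint U W := by
      rw [Finset.disjoint_left]
      intro p hp hp'
      rw [hU_def, Finset.mem_filter] at hp
      rw [hW_def, Finset.mem_filter] at hp'
      exact hp.2.1 hp'.2
    have hunion : U ∪ W = univ.filter (fun p : Fin l => (p:ℕ) ≠ 0) := by
      ext p
      simp only [hU_def, hW_def, Finset.mem_union, Finset.mem_filter, mem_univ, true_and]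
      constructor
      · rintro (⟨h1, h2⟩ | h1)
        · exact h2
        · obtain ⟨q, hqlt, _⟩ := h1
          intro h0
          have : (q:ℕ) < (p:ℕ) := hqlt
          omega
      · intro h0
        by_cases hEp : E p
        · exact Or.inr hEp
        · exact Or.inl ⟨hEp, h0⟩
    have hcard : (univ.filter (fun p : Fin l => (p:ℕ) ≠ 0)).card = l - 1 := by
      rw [show (univ.filter (fun p : Fin l => (p:ℕ) ≠ 0)) = univ.erase ⟨0, by omega⟩ by
        ext p
        simp only [Finset.mem_filter, mem_univ, true_and, Finset.mem_erase, and_true]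
        simp [Fin.ext_iff]]
      rw [Finset.card_erase_of_mem (mem_univ _)]
      simp
    rw [← Finset.card_union_of_disjoint hdisj, hunion, hcard]
  -- pole values
  set cf : Fin l → ℝ := fun p => (1:ℝ)/m - 1/(p:ℕ) with hcf_def
  set S : Finset ℝ := U.image cf with hS_def
  have hUval : ∀ p ∈ U, 1 ≤ (p:ℕ) ∧ (p:ℕ) + 1 ≤ l1 := by
    intro p hp
    rw [hU_def, Finset.mem_filter] at hp
    have := p.2
    omega
  have hSsub : S ⊆ C' := by
    intro c hc
    rw [hS_def, Finset.mem_image] at hc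
    obtain ⟨p, hp, rfl⟩ := hc
    obtain ⟨h1, h2⟩ := hUval p hp
    exact htop (p:ℕ) h1 h2
  have hcfinj : ∀ p ∈ U, ∀ q ∈ U, cf p = cf q → p = q := by
    intro p hp q hq hpq
    obtain ⟨hp1, _⟩ := hUval p hp
    obtain ⟨hq1, _⟩ := hUval q hq
    rw [hcf_def] at hpq
    simp only [sub_right_inj] at hpq
    have hp0 : (0:ℝ) < ((p:ℕ):ℝ) := by exact_mod_cast hp1
    have hq0 : (0:ℝ) < ((q:ℕ):ℝ) := by exact_mod_cast hq1
    field_simp at hpq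
    have : ((p:ℕ):ℝ) = ((q:ℕ):ℝ) := by exact_mod_cast hpq.symm
    exact Fin.ext (by exact_mod_cast this)
  have hScard : S.card = U.card := Finset.card_image_of_injOn (fun p hp q hq => hcfinj p hp q hq)
  -- constants
  set KW : ℝ := ∏ p ∈ W, ((m:ℝ) - (p:ℕ)) with hKW_def
  set KU : ℝ := ∏ p ∈ U, (((p:ℕ)):ℝ) with hKU_def
  have hKWpos : 0 < KW := by
    rw [hKW_def]
    refine Finset.prod_pos fun p _ => ?_
    have := hplm p
    have : ((p:ℕ):ℝ) < m := by exact_mod_cast this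
    linarith
  have hKUpos : 0 < KU := by
    rw [hKU_def]
    refine Finset.prod_pos fun p hp => ?_
    have := (hUval p hp).1
    exact_mod_cast this
  -- product of denominators
  have h1 : ∏ p ∈ W, Dpoly p = C KW * P0^W.card := by
    calc ∏ p ∈ W, Dpoly p = ∏ p ∈ W, (C ((m:ℝ) - (p:ℕ)) * P0) := by
          refine Finset.prod_congr rfl fun p hp => ?_
          simp only [hD_def]
          rw [if_pos ((Finset.mem_filter.1 hp).2)]
      _ = (∏ p ∈ W, C ((m:ℝ) - (p:ℕ))) * ∏ p ∈ W, P0 := Finset.prod_mul_distrib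
      _ = C KW * P0^W.card := by
          rw [← map_prod, Finset.prod_const, hKW_def]
  have h2 : ∏ p ∈ univ.filter (fun p => ¬ E p), Dpoly p = C KU * ∏ c ∈ S, (X - C c) := by
    rw [← Finset.prod_filter_mul_prod_filter_not (univ.filter (fun p => ¬ E p))
      (fun p : Fin l => (p:ℕ) = 0)]
    have hz : ∏ p ∈ (univ.filter (fun p => ¬ E p)).filter (fun p : Fin l => (p:ℕ) = 0),
        Dpoly p = 1 := by
      refine Finset.prod_eq_one fun p hp => ?_
      obtain ⟨hpa, hpb⟩ := Finset.mem_filter.1 hp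
      obtain ⟨-, hpc⟩ := Finset.mem_filter.1 hpa
      simp only [hD_def]
      rw [if_neg hpc, if_pos hpb]
    have hU' : (univ.filter (fun p => ¬ E p)).filter (fun p : Fin l => ¬ (p:ℕ) = 0) = U := by
      rw [Finset.filter_filter, hU_def]
    rw [hz, one_mul, hU']
    calc ∏ p ∈ U, Dpoly p = ∏ p ∈ U, (C (((p:ℕ)):ℝ) * (X - C (cf p))) := by
          refine Finset.prod_congr rfl fun p hp => ?_
          rw [hU_def, Finset.mem_filter] at hp
          simp only [hD_def]
          rw [if_neg hp.2.1, if_neg hp.2.2, hcf_def]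
      _ = (∏ p ∈ U, C (((p:ℕ)):ℝ)) * ∏ p ∈ U, (X - C (cf p)) := Finset.prod_mul_distrib
      _ = C KU * ∏ c ∈ S, (X - C c) := by
          rw [← map_prod, hKU_def, hS_def, Finset.prod_image hcfinj]
  have hDsplit : ∏ p, Dpoly p = (C KW * P0^W.card) * (C KU * ∏ c ∈ S, (X - C c)) := by
    rw [← Finset.prod_filter_mul_prod_filter_not univ E Dpoly, ← hW_def, h1, h2]
  -- product of numerators
  have hNcongr : ∀ p : Fin l, PLpoly m (σ p) = if σ p = i0 then P1 else P0 := by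
    intro p
    unfold PLpoly
    rw [← hP1, ← hP0]
    by_cases h : σ p = i0
    · rw [if_pos (by rw [h]), if_pos h]
    · rw [if_neg (fun hv => h (Fin.ext (by simpa using hv))), if_neg h]
  have hecard : (univ.filter (fun p : Fin l => ¬ σ p = i0)).card = l - e := by
    have := Finset.card_filter_add_card_filter_not
      (s := (univ : Finset (Fin l))) (p := fun p => σ p = i0)
    rw [← hF1_def, ← he_def] at this
    simp only [card_univ, Fintype.card_fin] at this
    omega
  have hNprod : ∏ p, PLpoly m (σ p) = P1^e * P0^(l-e) := by
    rw [Finset.prod_congr rfl fun p _ => hNcongr p, Finset.prod_ite, Finset.prod_const,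
      Finset.prod_const, ← hF1_def, ← he_def, hecard]
  -- the polynomial
  set g : ℝ[X] := C ((KW * KU)⁻¹) *
    (P1^e * (P0^(l-e-W.card) * ∏ c ∈ C' \ S, (X - C c))) with hg_def
  have hwle : W.card ≤ l - e := by omega
  have hPI : g * ∏ p, Dpoly p = (∏ p, PLpoly m (σ p)) * ∏ c ∈ C', (X - C c) := by
    rw [hDsplit, hNprod, ← Finset.prod_sdiff hSsub]
    have hpow : P0^(l-e-W.card) * P0^W.card = P0^(l-e) := by
      rw [← pow_add]
      congr 1
      omega
    have hC : C ((KW * KU)⁻¹) * (C KW * C KU) = 1 := by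
      rw [← C_mul, ← C_mul,
        inv_mul_cancel₀ (ne_of_gt (mul_pos hKWpos hKUpos)), C_1]
    calc C ((KW * KU)⁻¹) * (P1^e * (P0^(l-e-W.card) * ∏ c ∈ C' \ S, (X - C c))) *
        ((C KW * P0^W.card) * (C KU * ∏ c ∈ S, (X - C c)))
        = (C ((KW * KU)⁻¹) * (C KW * C KU)) * (P1^e * ((P0^(l-e-W.card) * P0^W.card) *
          ((∏ c ∈ C' \ S, (X - C c)) * ∏ c ∈ S, (X - C c)))) := by ring
      _ = P1^e * P0^(l-e) * ((∏ c ∈ C' \ S, (X - C c)) * ∏ c ∈ S, (X - C c)) := by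
          rw [hC, hpow]; ring
  have hP0deg : P0.natDegree ≤ 1 := by
    rw [hP0]
    refine le_trans (natDegree_sub_le _ _) ?_
    simp
  have hP1deg : P1.natDegree ≤ 1 := by
    rw [hP1]
    refine le_trans (natDegree_add_le _ _) ?_
    simp only [natDegree_C, max_le_iff]
    exact ⟨by omega, le_trans (natDegree_C_mul_le _ _) (by simp)⟩
  have hgdeg : g.natDegree ≤ C'.card + 1 := by
    have hd1 : (P1^e).natDegree ≤ e := le_trans natDegree_pow_le
      (le_trans (Nat.mul_le_mul_left e hP1deg) (Nat.le_of_eq (mul_one e)))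
    have hd2 : (P0^(l-e-W.card)).natDegree ≤ l-e-W.card := le_trans natDegree_pow_le
      (le_trans (Nat.mul_le_mul_left _ hP0deg) (Nat.le_of_eq (mul_one _)))
    have hd3 : (∏ c ∈ C' \ S, (X - C c)).natDegree = C'.card - S.card := by
      rw [pl_prodC_natDegree, Finset.card_sdiff_of_subset hSsub]
    have hSC : S.card ≤ C'.card := Finset.card_le_card hSsub
    rw [hg_def]
    refine le_trans natDegree_mul_le ?_
    rw [natDegree_C]
    refine le_trans (Nat.add_le_add_left natDegree_mul_le _) ?_
    refine le_trans (Nat.add_le_add_left (Nat.add_le_add hd1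
      (le_trans natDegree_mul_le (Nat.add_le_add hd2 (le_of_eq hd3)))) _) ?_
    omega
  refine ⟨g, hgdeg, ?_⟩
  intro x h0 h1
  have hDne : (∏ p, eval x (Dpoly p)) ≠ 0 :=
    ne_of_gt (Finset.prod_pos fun p _ => hDpos x h0 h1 p)
  have hev := congrArg (eval x) hPI
  simp only [eval_mul, eval_prod, eval_sub, eval_X, eval_C] at hev
  rw [hPLtop x h0 h1, div_mul_eq_mul_div, div_eq_iff hDne]
  linarith [hev]

end Construct

set_option maxHeartbeats 2000000 in
open Polynomial in
/-- **Non-identifiability of `k`-PL from ranked top-`l₁` and choice-`l₃` data**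
(Corollary 1): if `m ≥ 2`, `l₁ ≤ m - 1`, `1 ≤ l₃ ≤ m` and `k ≥ (l₁+l₃+1)/2`,
then there are two `k`-PL parameters with different mixing measures giving the
same marginal probability to every ranked top-`l` order with `l ≤ l₁` and to
every choice-`l` order `(A', a)` with `|A'| = l ≤ l₃`. -/
theorem kPL_nonidentifiable_top_choice
    (m l1 l3 k : ℕ) (hm : 2 ≤ m) (hl1 : l1 ≤ m - 1) (hl3 : 1 ≤ l3) (hl3m : l3 ≤ m)
    (hk : l1 + l3 + 1 ≤ 2 * k) :
    ∃ (α α' : Fin k → ℝ) (θ θ' : Fin k → Fin m → ℝ),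
      (∀ r, 0 < α r) ∧ (∑ r, α r = 1) ∧ (∀ r, IsPLParam (θ r)) ∧
      (∀ r, 0 < α' r) ∧ (∑ r, α' r = 1) ∧ (∀ r, IsPLParam (θ' r)) ∧
      mixingMeasure α θ ≠ mixingMeasure α' θ' ∧
      (∀ (l : ℕ), l ≤ l1 → ∀ σ : Fin l → Fin m, Function.Injective σ →
        ∑ r, α r * PLtop (θ r) σ = ∑ r, α' r * PLtop (θ' r) σ) ∧
      (∀ (A' : Finset (Fin m)), A'.card ≤ l3 → ∀ a ∈ A',
        ∑ r, α r * PLchoice (θ r) A' a = ∑ r, α' r * PLchoice (θ' r) A' a) := by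
  classical
  have hk1 : 1 ≤ k := by omega
  have hm0 : (0:ℝ) < m := by positivity
  -- the sample points
  set xp : ℕ → ℝ := fun j => ((j:ℝ)+1) / ((2*(k:ℝ)+1) * m) with hxp_def
  have hdenpos : (0:ℝ) < (2*(k:ℝ)+1) * m := by positivity
  have hxmono : StrictMono xp := by
    intro a b hab
    rw [hxp_def]
    apply div_lt_div_of_pos_right ?_ hdenpos
    have : (a:ℝ) < b := by exact_mod_cast hab
    linarith
  have hx0 : ∀ j : ℕ, 0 < xp j := by
    intro j
    rw [hxp_def]
    positivity
  have hx1 : ∀ j : ℕ, j < 2*k → xp j < 1/m := by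
    intro j hj
    rw [hxp_def, div_lt_div_iff₀ hdenpos hm0]
    have : (j:ℝ)+1 ≤ 2*(k:ℝ) := by
      have : (j:ℝ) + 1 ≤ (2*k : ℕ) := by exact_mod_cast hj
      simpa using this
    nlinarith
  -- the pole set
  set Ctop : Finset ℝ := (Finset.Icc 1 (l1-1)).image (fun p : ℕ => (1:ℝ)/m - 1/p) with hCtop
  set Cch : Finset ℝ := (Finset.Icc 2 (min l3 (m-1))).image
    (fun s : ℕ => -((s:ℝ)/(m*((m:ℝ)-s)))) with hCch
  set Cb : Finset ℝ := Ctop ∪ Cch with hCb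
  have hCbneg : ∀ c ∈ Cb, -1 < c ∧ c < 0 := by
    intro c hc
    rw [hCb, Finset.mem_union] at hc
    rcases hc with hc | hc
    · rw [hCtop, Finset.mem_image] at hc
      obtain ⟨p, hp, rfl⟩ := hc
      rw [Finset.mem_Icc] at hp
      have hp1 : 1 ≤ p := hp.1
      have hpm : p < m := by omega
      have hpR : (0:ℝ) < p := by exact_mod_cast hp1
      have hpmR : (p:ℝ) < m := by exact_mod_cast hpm
      have h1 : (1:ℝ)/m < 1/p := by
        apply one_div_lt_one_div_of_lt hpR hpmR
      have h2 : (1:ℝ)/p ≤ 1 := by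
        rw [div_le_one hpR]
        exact_mod_cast hp1
      constructor
      · have : (0:ℝ) < 1/m := by positivity
        linarith
      · linarith
    · rw [hCch, Finset.mem_image] at hc
      obtain ⟨t, ht, rfl⟩ := hc
      rw [Finset.mem_Icc] at ht
      have ht2 : 2 ≤ t := ht.1
      have htm : t < m := by omega
      have htR : (0:ℝ) < t := by exact_mod_cast (by omega : 0 < t)
      have htmR : (t:ℝ) < m := by exact_mod_cast htm
      have hms : (0:ℝ) < (m:ℝ) - t := by linarith
      have hpos : (0:ℝ) < (t:ℝ)/(m*((m:ℝ)-t)) := by positivity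
      constructor
      · have hlt : (t:ℝ) < m*((m:ℝ)-t) := by
          have hnat : t < m * (m - t) := by
            have h1 : 1 ≤ m - t := by omega
            calc t < m := htm
              _ = m * 1 := (mul_one m).symm
              _ ≤ m * (m - t) := Nat.mul_le_mul_left m h1
          have : ((t:ℕ):ℝ) < ((m*(m-t) : ℕ):ℝ) := by exact_mod_cast hnat
          rwa [Nat.cast_mul, Nat.cast_sub (le_of_lt htm)] at this
        have hd : (0:ℝ) < m*((m:ℝ)-t) := by positivity
        rw [neg_lt, neg_neg, div_lt_one hd]
        exact hlt
      · linarith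
  have hqb : Cb.card ≤ (l1 - 1) + (min l3 (m-1) - 1) := by
    have h1 : Ctop.card ≤ l1 - 1 := by
      rw [hCtop]
      refine le_trans (Finset.card_image_le) ?_
      rw [Nat.card_Icc]
      omega
    have h2 : Cch.card ≤ min l3 (m-1) - 1 := by
      rw [hCch]
      refine le_trans (Finset.card_image_le) ?_
      rw [Nat.card_Icc]
      omega
    rw [hCb]
    exact le_trans (Finset.card_union_le _ _) (Nat.add_le_add h1 h2)
  set N : ℕ := max (2*k-3) Cb.card with hN
  have hNq : Cb.card ≤ N := le_max_right _ _
  have hNle : N ≤ 2*k-2 := by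
    have : Cb.card ≤ 2*k-2 := by omega
    omega
  have hNtop : 1 ≤ l1 → N = 2*k-3 := by
    intro h
    have : Cb.card ≤ 2*k-3 := by omega
    omega
  have hNuniv : l3 = m → N = 2*k-3 := by
    intro h
    have : Cb.card ≤ 2*k-3 := by omega
    omega
  set pads : Finset ℝ := (Finset.range (N-Cb.card)).image
    (fun t : ℕ => (-1:ℝ) - t) with hpads
  have hpadinj : Function.Injective (fun t : ℕ => (-1:ℝ) - t) := by
    intro a b hab
    simp only [sub_right_inj] at hab
    exact_mod_cast hab
  have hpadcard : pads.card = N-Cb.card := by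
    rw [hpads, Finset.card_image_of_injective _ hpadinj, Finset.card_range]
  have hpadle : ∀ c ∈ pads, c ≤ -1 := by
    intro c hc
    rw [hpads, Finset.mem_image] at hc
    obtain ⟨t, _, rfl⟩ := hc
    have : (0:ℝ) ≤ t := by positivity
    linarith
  set C' : Finset ℝ := Cb ∪ pads with hC'
  have hCdisj : Disjoint Cb pads := by
    rw [Finset.disjoint_left]
    intro c hc1 hc2
    have := (hCbneg c hc1).1
    have := hpadle c hc2
    linarith
  have hC'card : C'.card = N := by
    rw [hC', Finset.card_union_of_disjoint hCdisj, hpadcard]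
    omega
  have hC'neg : ∀ c ∈ C', c < 0 := by
    intro c hc
    rw [hC', Finset.mem_union] at hc
    rcases hc with hc | hc
    · exact (hCbneg c hc).2
    · linarith [hpadle c hc]
  -- membership of the actual poles
  have htopmem : ∀ p : ℕ, 1 ≤ p → p + 1 ≤ l1 → ((1:ℝ)/m - 1/p) ∈ C' := by
    intro p h1 h2
    rw [hC']
    refine Finset.mem_union_left _ ?_
    rw [hCb]
    refine Finset.mem_union_left _ ?_
    rw [hCtop]
    exact Finset.mem_image_of_mem _ (Finset.mem_Icc.2 ⟨h1, by omega⟩)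
  have hchmem : ∀ s : ℕ, 2 ≤ s → s ≤ l3 → s < m → (-((s:ℝ)/(m*((m:ℝ)-s)))) ∈ C' := by
    intro s h1 h2 h3
    rw [hC']
    refine Finset.mem_union_left _ ?_
    rw [hCb]
    refine Finset.mem_union_right _ ?_
    rw [hCch]
    exact Finset.mem_image_of_mem _ (Finset.mem_Icc.2 ⟨h1, by omega⟩)
  -- the polynomial A and the weights u
  set A : ℝ[X] := ∏ c ∈ C', (X - Polynomial.C c) with hA
  have hAdeg : A.natDegree = N := by rw [hA, pl_prodC_natDegree, hC'card]
  have hAeval : ∀ x : ℝ, A.eval x = ∏ c ∈ C', (x - c) := by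
    intro x
    rw [hA]
    simp [eval_prod]
  have hApos : ∀ j : ℕ, 0 < A.eval (xp j) := by
    intro j
    rw [hAeval]
    refine Finset.prod_pos fun c hc => ?_
    have := hC'neg c hc
    have := hx0 j
    linarith
  set u : ℕ → ℝ := fun j =>
    A.eval (xp j) * ∏ i ∈ (Finset.range (2*k)).erase j, (xp j - xp i)⁻¹ with hu
  -- the key vanishing-sum property
  have hkey : ∀ P : ℝ → ℝ, (∃ g : ℝ[X], g.natDegree + 2 ≤ 2*k ∧ ∀ x : ℝ, 0 < x → x < 1/m →
      P x * ∏ c ∈ C', (x - c) = Polynomial.eval x g) →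
      ∑ j ∈ range (2*k), u j * P (xp j) = 0 := by
    rintro P ⟨g, hg1, hg2⟩
    have hmaster := pl_master (range (2*k)) xp (hxmono.injective.injOn) g
      (by rwa [Finset.card_range])
    rw [← hmaster]
    refine Finset.sum_congr rfl fun j hj => ?_
    rw [mem_range] at hj
    have hgev := hg2 (xp j) (hx0 j) (hx1 j hj)
    rw [hu]
    rw [← hAeval] at hgev
    rw [← hgev]
    ring
  -- signs of the weights
  have hupos : ∀ r : ℕ, r < k → 0 < u (2*r+1) := by
    intro r hr
    have hj : 2*r+1 < 2*k := by omega
    have hs := pl_sign_lemma (2*k) (2*r+1) hj xp hxmono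
    rw [show 2*k-1-(2*r+1) = 2*(k-r-1) by omega, pow_mul, neg_one_sq, one_pow, one_mul] at hs
    exact mul_pos (hApos _) hs
  have huneg : ∀ r : ℕ, r < k → u (2*r) < 0 := by
    intro r hr
    have hj : 2*r < 2*k := by omega
    have hs := pl_sign_lemma (2*k) (2*r) hj xp hxmono
    rw [show 2*k-1-(2*r) = 2*(k-r-1)+1 by omega, pow_succ, pow_mul, neg_one_sq, one_pow,
      one_mul] at hs
    have hprod : ∏ i ∈ (Finset.range (2*k)).erase (2*r), (xp (2*r) - xp i)⁻¹ < 0 := by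
      nlinarith
    exact mul_neg_of_pos_of_neg (hApos _) hprod
  -- total sum of weights is zero
  have husum : ∑ j ∈ range (2*k), u j = 0 := by
    have := hkey (fun _ => 1) ⟨A, by omega, fun x hx0' hx1' => by rw [one_mul, hAeval]⟩
    simpa using this
  set T : ℝ := ∑ r ∈ range k, u (2*r+1) with hT
  have hTpos : 0 < T := by
    rw [hT]
    exact Finset.sum_pos (fun r hr => hupos r (mem_range.1 hr)) ⟨0, mem_range.2 hk1⟩
  have hTne : T ≠ 0 := ne_of_gt hTpos
  have hTeven : ∑ r ∈ range k, u (2*r) = -T := by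
    have hsplit := pl_sum_range_two_mul k u
    rw [husum, Finset.sum_add_distrib] at hsplit
    rw [hT]
    linarith
  -- the common transfer principle
  have hfinal : ∀ P : ℝ → ℝ, (∑ j ∈ range (2*k), u j * P (xp j) = 0) →
      ∑ r : Fin k, u (2*(r:ℕ)+1) / T * P (xp (2*(r:ℕ)+1))
        = ∑ r : Fin k, -u (2*(r:ℕ)) / T * P (xp (2*(r:ℕ))) := by
    intro P hP
    have h2 := pl_sum_range_two_mul k (fun j => u j * P (xp j))
    rw [hP, Finset.sum_add_distrib] at h2
    rw [Fin.sum_univ_eq_sum_range (fun j => u (2*j+1) / T * P (xp (2*j+1))) k,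
      Fin.sum_univ_eq_sum_range (fun j => -u (2*j) / T * P (xp (2*j))) k]
    have e1 : ∑ j ∈ range k, u (2*j+1) / T * P (xp (2*j+1))
        = (∑ j ∈ range k, u (2*j+1) * P (xp (2*j+1))) / T := by
      rw [Finset.sum_div]
      exact Finset.sum_congr rfl fun j _ => by ring
    have e2 : ∑ j ∈ range k, -u (2*j) / T * P (xp (2*j))
        = (-(∑ j ∈ range k, u (2*j) * P (xp (2*j)))) / T := by
      calc ∑ j ∈ range k, -u (2*j) / T * P (xp (2*j))
          = ∑ j ∈ range k, (-(u (2*j) * P (xp (2*j)))) / T :=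
            Finset.sum_congr rfl fun j _ => by ring
        _ = (∑ j ∈ range k, -(u (2*j) * P (xp (2*j)))) / T := by rw [Finset.sum_div]
        _ = (-(∑ j ∈ range k, u (2*j) * P (xp (2*j)))) / T := by
            rw [Finset.sum_neg_distrib]
    rw [e1, e2]
    have : ∑ j ∈ range k, u (2*j+1) * P (xp (2*j+1))
        = -(∑ j ∈ range k, u (2*j) * P (xp (2*j))) := by linarith
    rw [this]
  -- sums of the mixing weights
  have hαsum : ∑ r : Fin k, u (2*(r:ℕ)+1) / T = 1 := by
    rw [Fin.sum_univ_eq_sum_range (fun j => u (2*j+1) / T) k, ← Finset.sum_div, ← hT,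
      div_self hTne]
  have hα'sum : ∑ r : Fin k, -u (2*(r:ℕ)) / T = 1 := by
    rw [Fin.sum_univ_eq_sum_range (fun j => -u (2*j) / T) k]
    calc ∑ j ∈ range k, -u (2*j) / T = (∑ j ∈ range k, -u (2*j)) / T := by
          rw [Finset.sum_div]
      _ = (-(∑ j ∈ range k, u (2*j))) / T := by rw [Finset.sum_neg_distrib]
      _ = 1 := by rw [hTeven, neg_neg, div_self hTne]
  refine ⟨fun r => u (2*(r:ℕ)+1) / T, fun r => -u (2*(r:ℕ)) / T,
    fun r => PLf m (xp (2*(r:ℕ)+1)), fun r => PLf m (xp (2*(r:ℕ))),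
    ?_, hαsum, ?_, ?_, hα'sum, ?_, ?_, ?_, ?_⟩
  · exact fun r => div_pos (hupos _ r.2) hTpos
  · exact fun r => PLf_isParam hm (hx0 _) (hx1 _ (by have := r.2; omega))
  · exact fun r => div_pos (neg_pos.2 (huneg _ r.2)) hTpos
  · exact fun r => PLf_isParam hm (hx0 _) (hx1 _ (by have := r.2; omega))
  · -- mixing measures differ
    intro hcontra
    have happ := congrFun hcontra (PLf m (xp 1))
    unfold mixingMeasure at happ
    have hL : ∑ r : Fin k, (if PLf m (xp (2*(r:ℕ)+1)) = PLf m (xp 1)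
        then u (2*(r:ℕ)+1) / T else 0) = u 1 / T := by
      rw [Finset.sum_eq_single (⟨0, hk1⟩ : Fin k)]
      · norm_num
      · intro r _ hr
        rw [if_neg]
        intro heq
        have hxeq := PLf_inj hm heq
        have h21 : 2*(r:ℕ)+1 = 1 := hxmono.injective hxeq
        exact hr (Fin.ext (show (r:ℕ) = (0:ℕ) by omega))
      · intro hmem
        exact absurd (mem_univ _) hmem
    have hR : ∑ r : Fin k, (if PLf m (xp (2*(r:ℕ))) = PLf m (xp 1)
        then -u (2*(r:ℕ)) / T else 0) = 0 := by
      refine Finset.sum_eq_zero fun r _ => ?_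
      rw [if_neg]
      intro heq
      have hxeq := PLf_inj hm heq
      have := hxmono.injective hxeq
      omega
    rw [hL, hR] at happ
    have : 0 < u 1 / T := by
      have := hupos 0 hk1
      norm_num at this
      exact div_pos this hTpos
    rw [happ] at this
    exact lt_irrefl _ this
  · -- ranked top orders
    intro l hl σ hσ
    by_cases hl0 : l = 0
    · subst hl0
      have hempty : ∀ (θ0 : Fin m → ℝ), PLtop θ0 σ = 1 := by
        intro θ0
        rw [PLtop]
        exact Finset.prod_of_isEmpty _
      simp only [hempty, mul_one]
      rw [hαsum, hα'sum]
    · have hl1' : 1 ≤ l := by omega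
      have hk2 : 2 ≤ k := by omega
      obtain ⟨g, hgdeg, hgev⟩ := pl_top_g m l1 hm (by omega) C' htopmem l hl hl1' σ hσ
      have hdegbound : g.natDegree + 2 ≤ 2*k := by
        rw [hC'card] at hgdeg
        have hN3 := hNtop (by omega)
        omega
      exact hfinal (fun x => PLtop (PLf m x) σ) (hkey _ ⟨g, hdegbound, hgev⟩)
  · -- choice orders
    intro A' hcard a ha
    by_cases hs1 : A'.card ≤ 1
    · have hA1 : A'.card = 1 := by
        have : 0 < A'.card := Finset.card_pos.2 ⟨a, ha⟩
        omega
      obtain ⟨b, hb⟩ := Finset.card_eq_one.1 hA1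
      subst hb
      have hab : a = b := Finset.mem_singleton.1 ha
      subst hab
      have hone : ∀ x : ℝ, 0 < x → x < 1/m → PLchoice (PLf m x) {a} a = 1 := by
        intro x h0 h1
        rw [PLchoice, Finset.sum_singleton, div_self (ne_of_gt (PLf_pos hm h0 h1 a))]
      have hL : ∀ r : Fin k, PLchoice (PLf m (xp (2*(r:ℕ)+1))) {a} a = 1 :=
        fun r => hone _ (hx0 _) (hx1 _ (by have := r.2; omega))
      have hR : ∀ r : Fin k, PLchoice (PLf m (xp (2*(r:ℕ)))) {a} a = 1 :=
        fun r => hone _ (hx0 _) (hx1 _ (by have := r.2; omega))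
      calc ∑ r : Fin k, u (2*(r:ℕ)+1) / T * PLchoice (PLf m (xp (2*(r:ℕ)+1))) {a} a
          = ∑ r : Fin k, u (2*(r:ℕ)+1) / T := by
            exact Finset.sum_congr rfl fun r _ => by rw [hL r, mul_one]
        _ = 1 := hαsum
        _ = ∑ r : Fin k, -u (2*(r:ℕ)) / T := hα'sum.symm
        _ = ∑ r : Fin k, -u (2*(r:ℕ)) / T * PLchoice (PLf m (xp (2*(r:ℕ)))) {a} a := by
            exact Finset.sum_congr rfl fun r _ => by rw [hR r, mul_one]
    · have hA2 : 2 ≤ A'.card := by omega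
      have hk2 : 2 ≤ k := by omega
      obtain ⟨g, ⟨hgdeg1, hgdeg2⟩, hgev⟩ := pl_choice_g m l3 hm C' hchmem A' hcard hA2 a ha
      have hAm : A'.card ≤ m := by
        have := Finset.card_le_univ A'
        simpa [Fintype.card_fin] using this
      have hdegbound : g.natDegree + 2 ≤ 2*k := by
        by_cases hlt : A'.card < m
        · have := hgdeg2 hlt
          rw [hC'card] at this
          omega
        · have hl3m' : l3 = m := by omega
          have hN3 := hNuniv hl3m'
          rw [hC'card] at hgdeg1
          omega
      exact hfinal (fun x => PLchoice (PLf m x) A' a) (hkey _ ⟨g, hdegbound, hgev⟩)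
end

section
/- Let m ≥ 4. If two 2-PL parameters (α, θ^(1), θ^(2)) and (α', θ'^(1), θ'^(2)), with α, α' ∈ (0,1), assign the same marginal probability to every ranked top-3 order a_{i_1} ≻ a_{i_2} ≻ a_{i_3} ≻ others, then their mixing measures coincide: α δ_{θ^(1)} + (1−α) δ_{θ^(2)} = α' δ_{θ'^(1)} + (1−α') δ_{θ'^(2)}. In other words, the mixture of two Plackett-Luce models over m ≥ 4 alternatives is identifiable (modulo label switching) from ranked top-3 data. -/
open Finset

/-- The mixing measure `α δ_{θ₁} + (1-α) δ_{θ₂}` of a 2-mixture, represented as the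
finitely supported weight function on the parameter space. -/
noncomputable def mixing2 {m : ℕ} (α : ℝ) (θ1 θ2 : Fin m → ℝ) : (Fin m → ℝ) → ℝ :=
  fun t => (if θ1 = t then α else 0) + (if θ2 = t then 1 - α else 0)


namespace TwoPL

variable {m : ℕ}

lemma exists_other (hm : 2 ≤ m) (i : Fin m) : ∃ k : Fin m, k ≠ i := by
  by_contra h
  push_neg at h
  have hsub : (univ : Finset (Fin m)) ⊆ {i} := by
    intro k _; simp [h k]
  have := Finset.card_le_card hsub
  simp [Finset.card_univ] at this
  omega

lemma exists_third (hm : 3 ≤ m) (i j : Fin m) : ∃ k : Fin m, k ≠ i ∧ k ≠ j := by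
  by_contra h
  push_neg at h
  have hsub : (univ : Finset (Fin m)) ⊆ {i, j} := by
    intro k _
    by_cases hk : k = i
    · simp [hk]
    · simp [h k hk]
  have := Finset.card_le_card hsub
  have h2 : ({i, j} : Finset (Fin m)).card ≤ 2 := Finset.card_insert_le _ _ |>.trans (by simp)
  simp [Finset.card_univ] at this
  omega

lemma exists_fourth (hm : 4 ≤ m) (i j k : Fin m) : ∃ l : Fin m, l ≠ i ∧ l ≠ j ∧ l ≠ k := by
  by_contra h
  push_neg at h
  have hsub : (univ : Finset (Fin m)) ⊆ {i, j, k} := by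
    intro l _
    by_cases h1 : l = i
    · simp [h1]
    by_cases h2 : l = j
    · simp [h2]
    · simp [h l h1 h2]
  have := Finset.card_le_card hsub
  have h2 : ({i, j, k} : Finset (Fin m)).card ≤ 3 := by
    apply (Finset.card_insert_le _ _).trans
    have h3 := Finset.card_insert_le j ({k} : Finset (Fin m))
    have h4 : ({k} : Finset (Fin m)).card = 1 := Finset.card_singleton k
    omega
  simp [Finset.card_univ] at this
  omega

lemma sum_compl_pair (f : Fin m → ℝ) {i j : Fin m} (hij : i ≠ j) :
    ∑ k ∈ univ \ {i, j}, f k = (∑ k, f k) - f i - f j := by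
  rw [Finset.sum_sdiff_eq_sub (Finset.subset_univ _), Finset.sum_pair hij]
  ring

lemma coord_lt_one (hm : 2 ≤ m) (θ : Fin m → ℝ) (hpos : ∀ i, 0 < θ i)
    (hsum : ∑ i, θ i = 1) (i : Fin m) : θ i < 1 := by
  obtain ⟨j, hj⟩ := exists_other hm i
  have h1 : θ i + θ j ≤ ∑ k, θ k := by
    rw [← Finset.sum_pair (Ne.symm hj)]
    exact Finset.sum_le_sum_of_subset_of_nonneg (Finset.subset_univ _)
      (fun k _ _ => (hpos k).le)
  have := hpos j
  rw [hsum] at h1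
  linarith

lemma pair_lt_one (hm : 3 ≤ m) (θ : Fin m → ℝ) (hpos : ∀ i, 0 < θ i)
    (hsum : ∑ i, θ i = 1) {i j : Fin m} (hij : i ≠ j) : θ i + θ j < 1 := by
  obtain ⟨k, hki, hkj⟩ := exists_third hm i j
  have h1 : θ i + θ j + θ k ≤ ∑ l, θ l := by
    have hs : ∑ l ∈ ({i, j, k} : Finset (Fin m)), θ l = θ i + θ j + θ k := by
      rw [Finset.sum_insert (by simp [hij, Ne.symm hki]), Finset.sum_pair (Ne.symm hkj)]
      ring
    rw [← hs]
    exact Finset.sum_le_sum_of_subset_of_nonneg (Finset.subset_univ _)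
      (fun l _ _ => (hpos l).le)
  have := hpos k
  rw [hsum] at h1
  linarith

/-- extract both moments from two independent affine observations -/
lemma affineExtract {ι : Type*} [Fintype ι] (μ F : ι → ℝ) (p q p' q' : ℝ)
    (hdet : p * q' - p' * q ≠ 0)
    (h1 : ∑ r, F r * (p + μ r * q) = 0)
    (h2 : ∑ r, F r * (p' + μ r * q') = 0) :
    (∑ r, F r = 0) ∧ (∑ r, F r * μ r = 0) := by
  have e1 : p * (∑ r, F r) + q * (∑ r, F r * μ r) = 0 := by
    rw [Finset.mul_sum, Finset.mul_sum, ← Finset.sum_add_distrib, ← h1]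
    exact Finset.sum_congr rfl fun r _ => by ring
  have e2 : p' * (∑ r, F r) + q' * (∑ r, F r * μ r) = 0 := by
    rw [Finset.mul_sum, Finset.mul_sum, ← Finset.sum_add_distrib, ← h2]
    exact Finset.sum_congr rfl fun r _ => by ring
  constructor
  · have h3 : (p * q' - p' * q) * (∑ r, F r) = 0 := by linear_combination q' * e1 - q * e2
    exact (mul_eq_zero.mp h3).resolve_left hdet
  · have h3 : (p * q' - p' * q) * (∑ r, F r * μ r) = 0 := by
      linear_combination p * e2 - p' * e1
    exact (mul_eq_zero.mp h3).resolve_left hdet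


private lemma sumeq4 (f g : Fin 4 → ℝ) (h : ∀ r, f r = g r) : ∑ r, f r = ∑ r, g r :=
  Finset.sum_congr rfl (fun r _ => h r)

private lemma sumeq3 (f g : Fin 3 → ℝ) (h : ∀ r, f r = g r) : ∑ r, f r = ∑ r, g r :=
  Finset.sum_congr rfl (fun r _ => h r)

lemma root3 (μ c : Fin 3 → ℝ) (hinj : Function.Injective μ)
    (h1 : ∑ r, c r = 0) (h2 : ∑ r, c r * μ r = 0)
    {s : ℝ} (hs : ∀ r, μ r ≠ s)
    (hR : ∑ r, c r / (μ r - s) = 0) : c 0 = 0 := by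
  have hsne : ∀ r, μ r - s ≠ 0 := fun r => sub_ne_zero.mpr (hs r)
  have M0 : ∑ r, c r / (μ r - s) = 0 := hR
  have M1 : ∑ r, (c r / (μ r - s)) * μ r = 0 := by
    have key : ∀ r, (c r / (μ r - s)) * μ r = c r + s * (c r / (μ r - s)) := by
      intro r; have h := hsne r; field_simp; ring
    rw [sumeq3 _ _ key, Finset.sum_add_distrib, h1, ← Finset.mul_sum, M0]
    ring
  have M2 : ∑ r, (c r / (μ r - s)) * μ r ^ 2 = 0 := by
    have key : ∀ r, (c r / (μ r - s)) * μ r ^ 2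
        = c r * μ r + s * c r + s ^ 2 * (c r / (μ r - s)) := by
      intro r; have h := hsne r; field_simp; ring
    rw [sumeq3 _ _ key]
    rw [Finset.sum_add_distrib, Finset.sum_add_distrib, h2, ← Finset.mul_sum, h1,
      ← Finset.mul_sum, M0]
    ring
  have final : (c 0 / (μ 0 - s)) * ((μ 0 - μ 1) * (μ 0 - μ 2)) = 0 := by
    have key : ∀ r, (c r / (μ r - s)) * ((μ r - μ 1) * (μ r - μ 2))
        = (c r / (μ r - s)) * μ r ^ 2 - (μ 1 + μ 2) * ((c r / (μ r - s)) * μ r)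
          + (μ 1 * μ 2) * (c r / (μ r - s)) := by
      intro r; ring
    have hsum : ∑ r, (c r / (μ r - s)) * ((μ r - μ 1) * (μ r - μ 2)) = 0 := by
      rw [sumeq3 _ _ key]
      rw [Finset.sum_add_distrib, Finset.sum_sub_distrib, M2, ← Finset.mul_sum, M1,
        ← Finset.mul_sum, M0]
      ring
    rw [Fin.sum_univ_three] at hsum
    simpa using hsum
  have f1 : μ 0 - μ 1 ≠ 0 := sub_ne_zero.mpr (fun h => by exact absurd (hinj h) (by decide))
  have f2 : μ 0 - μ 2 ≠ 0 := sub_ne_zero.mpr (fun h => by exact absurd (hinj h) (by decide))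
  rcases mul_eq_zero.mp final with h | h
  · rcases div_eq_zero_iff.mp h with h' | h'
    · exact h'
    · exact absurd h' (hsne 0)
  · exact absurd h (mul_ne_zero f1 f2)

lemma root4 (μ c : Fin 4 → ℝ) (hinj : Function.Injective μ)
    (h1 : ∑ r, c r = 0) (h2 : ∑ r, c r * μ r = 0)
    {s s' : ℝ} (hss' : s ≠ s')
    (hs : ∀ r, μ r ≠ s) (hs' : ∀ r, μ r ≠ s')
    (hR : ∑ r, c r / (μ r - s) = 0) (hR' : ∑ r, c r / (μ r - s') = 0) :
    c 0 = 0 := by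
  have hsne : ∀ r, μ r - s ≠ 0 := fun r => sub_ne_zero.mpr (hs r)
  have hsne' : ∀ r, μ r - s' ≠ 0 := fun r => sub_ne_zero.mpr (hs' r)
  have hss : s - s' ≠ 0 := sub_ne_zero.mpr hss'
  have M0 : ∑ r, c r / ((μ r - s) * (μ r - s')) = 0 := by
    have key : ∀ r, (c r / ((μ r - s) * (μ r - s'))) * (s - s')
        = c r / (μ r - s) - c r / (μ r - s') := by
      intro r; have h := hsne r; have h' := hsne' r; field_simp; ring
    have hsum : (∑ r, c r / ((μ r - s) * (μ r - s'))) * (s - s') = 0 := by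
      rw [Finset.sum_mul, sumeq4 _ _ key, Finset.sum_sub_distrib, hR, hR']; ring
    exact (mul_eq_zero.mp hsum).resolve_right hss
  have M1 : ∑ r, (c r / ((μ r - s) * (μ r - s'))) * μ r = 0 := by
    have key : ∀ r, ((c r / ((μ r - s) * (μ r - s'))) * μ r) * (s - s')
        = s * (c r / (μ r - s)) - s' * (c r / (μ r - s')) := by
      intro r; have h := hsne r; have h' := hsne' r; field_simp; ring
    have hsum : (∑ r, (c r / ((μ r - s) * (μ r - s'))) * μ r) * (s - s') = 0 := by
      rw [Finset.sum_mul, sumeq4 _ _ key, Finset.sum_sub_distrib, ← Finset.mul_sum,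
        ← Finset.mul_sum, hR, hR']
      ring
    exact (mul_eq_zero.mp hsum).resolve_right hss
  have M2 : ∑ r, (c r / ((μ r - s) * (μ r - s'))) * μ r ^ 2 = 0 := by
    have key : ∀ r, (c r / ((μ r - s) * (μ r - s'))) * μ r ^ 2
        = c r + (s + s') * ((c r / ((μ r - s) * (μ r - s'))) * μ r)
          - (s * s') * (c r / ((μ r - s) * (μ r - s'))) := by
      intro r; have h := hsne r; have h' := hsne' r; field_simp; ring
    rw [sumeq4 _ _ key, Finset.sum_sub_distrib, Finset.sum_add_distrib, h1,
      ← Finset.mul_sum, M1, ← Finset.mul_sum, M0]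
    ring
  have M3 : ∑ r, (c r / ((μ r - s) * (μ r - s'))) * μ r ^ 3 = 0 := by
    have key : ∀ r, (c r / ((μ r - s) * (μ r - s'))) * μ r ^ 3
        = c r * μ r + (s + s') * c r
          + ((s + s') ^ 2 - s * s') * ((c r / ((μ r - s) * (μ r - s'))) * μ r)
          - (s * s' * (s + s')) * (c r / ((μ r - s) * (μ r - s'))) := by
      intro r; have h := hsne r; have h' := hsne' r; field_simp; ring
    rw [sumeq4 _ _ key]
    rw [Finset.sum_sub_distrib, Finset.sum_add_distrib, Finset.sum_add_distrib, h2,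
      ← Finset.mul_sum, h1, ← Finset.mul_sum, M1, ← Finset.mul_sum, M0]
    ring
  have final : (c 0 / ((μ 0 - s) * (μ 0 - s')))
      * ((μ 0 - μ 1) * (μ 0 - μ 2) * (μ 0 - μ 3)) = 0 := by
    have key : ∀ r, (c r / ((μ r - s) * (μ r - s')))
        * ((μ r - μ 1) * (μ r - μ 2) * (μ r - μ 3))
        = (c r / ((μ r - s) * (μ r - s'))) * μ r ^ 3
          - (μ 1 + μ 2 + μ 3) * ((c r / ((μ r - s) * (μ r - s'))) * μ r ^ 2)
          + (μ 1 * μ 2 + μ 1 * μ 3 + μ 2 * μ 3) * ((c r / ((μ r - s) * (μ r - s'))) * μ r)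
          - (μ 1 * μ 2 * μ 3) * (c r / ((μ r - s) * (μ r - s'))) := by
      intro r; ring
    have hsum : ∑ r, (c r / ((μ r - s) * (μ r - s')))
        * ((μ r - μ 1) * (μ r - μ 2) * (μ r - μ 3)) = 0 := by
      rw [sumeq4 _ _ key]
      rw [Finset.sum_sub_distrib, Finset.sum_add_distrib, Finset.sum_sub_distrib, M3,
        ← Finset.mul_sum, M2, ← Finset.mul_sum, M1, ← Finset.mul_sum, M0]
      ring
    rw [Fin.sum_univ_four] at hsum
    simpa using hsum
  have f1 : μ 0 - μ 1 ≠ 0 := sub_ne_zero.mpr (fun h => by exact absurd (hinj h) (by decide))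
  have f2 : μ 0 - μ 2 ≠ 0 := sub_ne_zero.mpr (fun h => by exact absurd (hinj h) (by decide))
  have f3 : μ 0 - μ 3 ≠ 0 := sub_ne_zero.mpr (fun h => by exact absurd (hinj h) (by decide))
  rcases mul_eq_zero.mp final with h | h
  · rcases div_eq_zero_iff.mp h with h' | h'
    · exact h'
    · exact absurd h' (mul_ne_zero (hsne 0) (hsne' 0))
  · exact absurd h (mul_ne_zero (mul_ne_zero f1 f2) f3)


lemma atMostOneBad (hm : 3 ≤ m) (w d : Fin m → ℝ)
    (hw : ∀ k, 0 < w k) (hwsum : ∑ k, w k = 1) (hdsum : ∑ k, d k = 0)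
    (hdne : d ≠ 0) (i j : Fin m) (hij : i ≠ j)
    (hi : ∀ k k', k ≠ i → k' ≠ i → w k * d k' = w k' * d k)
    (hj : ∀ k k', k ≠ j → k' ≠ j → w k * d k' = w k' * d k) : False := by
  obtain ⟨k₀, hk₀i, hk₀j⟩ := exists_third hm i j
  have bridge : ∀ k, w k * d k₀ = w k₀ * d k := by
    intro k
    by_cases hki : k = i
    · subst hki; exact hj k k₀ hij hk₀j
    · exact hi k k₀ hki hk₀i
  have hdk : ∀ k, d k = w k * d k₀ / w k₀ := by
    intro k
    rw [eq_div_iff (hw k₀).ne']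
    linarith [bridge k]
  have hsum : ∑ k, d k = d k₀ / w k₀ := by
    rw [Finset.sum_congr rfl (fun k _ => hdk k)]
    rw [← Finset.sum_div, ← Finset.sum_mul, hwsum]
    ring
  rw [hdsum] at hsum
  have hdk₀ : d k₀ = 0 := by
    have hwk₀ := hw k₀
    field_simp at hsum
    linarith
  apply hdne
  funext k
  rw [hdk k, hdk₀]
  simp

lemma goodmoment {ι : Type*} [Fintype ι] (w d : Fin m → ℝ) (μ c : ι → ℝ)
    (i k k' : Fin m) (hki : i ≠ k) (hk'i : i ≠ k')
    (hdet : w k * d k' - w k' * d k ≠ 0)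
    (h2 : ∀ k0, i ≠ k0 → ∑ r, c r * ((w i + μ r * d i) / (1 - (w i + μ r * d i)))
      * (w k0 + μ r * d k0) = 0) :
    (∑ r, c r * ((w i + μ r * d i) / (1 - (w i + μ r * d i))) = 0) ∧
    (∑ r, c r * ((w i + μ r * d i) / (1 - (w i + μ r * d i))) * μ r = 0) := by
  have e1 : ∑ r, (c r * ((w i + μ r * d i) / (1 - (w i + μ r * d i)))) * (w k + μ r * d k) = 0 := by
    rw [← h2 k hki]
  have e2 : ∑ r, (c r * ((w i + μ r * d i) / (1 - (w i + μ r * d i)))) * (w k' + μ r * d k') = 0 := by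
    rw [← h2 k' hk'i]
  exact affineExtract μ _ (w k) (d k) (w k') (d k') hdet e1 e2

lemma rootAt {ι : Type*} [Fintype ι] (w d : Fin m → ℝ) (μ c : ι → ℝ) (i : Fin m)
    (hdi : d i ≠ 0)
    (hlt : ∀ r, w i + μ r * d i < 1)
    (hg : ∑ r, c r * ((w i + μ r * d i) / (1 - (w i + μ r * d i))) = 0)
    (h1 : ∑ r, c r = 0) :
    (∀ r, μ r ≠ (1 - w i) / d i) ∧ (∑ r, c r / (μ r - (1 - w i) / d i) = 0) := by
  have hzne : ∀ r, 1 - (w i + μ r * d i) ≠ 0 := fun r => by have := hlt r; linarith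
  have hμτ : ∀ r, μ r - (1 - w i) / d i = -(1 - (w i + μ r * d i)) / d i := by
    intro r; field_simp; ring
  have hτne : ∀ r, μ r ≠ (1 - w i) / d i := by
    intro r heq
    apply hzne r
    rw [heq]
    field_simp
    ring
  refine ⟨hτne, ?_⟩
  have key : ∀ r, c r * ((w i + μ r * d i) / (1 - (w i + μ r * d i)))
      = -c r - (1 / d i) * (c r / (μ r - (1 - w i) / d i)) := by
    intro r
    have h := hzne r
    have key2 : c r / (μ r - (1 - w i) / d i)
        = -(d i * (c r / (1 - (w i + μ r * d i)))) := by
      rw [hμτ r, div_div_eq_mul_div, div_neg, mul_div_assoc]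
      ring
    rw [key2]
    field_simp
    ring
  have hsum : ∑ r, (-c r - (1 / d i) * (c r / (μ r - (1 - w i) / d i))) = 0 := by
    rw [← Finset.sum_congr rfl (fun r _ => key r), hg]
  rw [Finset.sum_sub_distrib, Finset.sum_neg_distrib, h1, ← Finset.mul_sum] at hsum
  have : (1 / d i) * (∑ r, c r / (μ r - (1 - w i) / d i)) = 0 := by linarith
  rcases mul_eq_zero.mp this with h | h
  · exact absurd h (by simp [hdi])
  · exact h

lemma engine3 (hm : 4 ≤ m) (w d : Fin m → ℝ) (μ c : Fin 3 → ℝ)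
    (hμ : Function.Injective μ) (hc0 : c 0 ≠ 0)
    (hsc : ∑ r, c r = 0) (hscμ : ∑ r, c r * μ r = 0)
    (hwpos : ∀ k, 0 < w k) (hwsum : ∑ k, w k = 1) (hdsum : ∑ k, d k = 0)
    (hdne : d ≠ 0)
    (hpos : ∀ r k, 0 < w k + μ r * d k)
    (hL2 : ∀ i k, i ≠ k → ∑ r, c r * ((w i + μ r * d i) / (1 - (w i + μ r * d i)))
      * (w k + μ r * d k) = 0) : False := by
  have hm2 : 2 ≤ m := by omega
  have hm3 : 3 ≤ m := by omega
  have hatomsum : ∀ r, ∑ k, (w k + μ r * d k) = 1 := by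
    intro r
    rw [Finset.sum_add_distrib, hwsum, ← Finset.mul_sum, hdsum]
    ring
  have hlt : ∀ r k, w k + μ r * d k < 1 := by
    intro r k
    exact coord_lt_one hm2 (fun k => w k + μ r * d k) (fun k => hpos r k) (hatomsum r) k
  obtain ⟨i₁, hdi₁⟩ : ∃ i, d i ≠ 0 := Function.ne_iff.mp hdne
  obtain ⟨i₂, hi₂ne, hdi₂⟩ : ∃ i, i ≠ i₁ ∧ d i ≠ 0 := by
    by_contra h
    push_neg at h
    apply hdi₁
    have := Finset.sum_eq_single i₁ (fun b _ hb => h b hb) (fun h' => absurd (mem_univ i₁) h')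
    rw [this] at hdsum
    exact hdsum
  have hgood : ∃ i, d i ≠ 0 ∧ ∃ k k', i ≠ k ∧ i ≠ k' ∧ w k * d k' - w k' * d k ≠ 0 := by
    by_contra h
    push_neg at h
    have hbad : ∀ i, d i ≠ 0 → ∀ k k', i ≠ k → i ≠ k' → w k * d k' = w k' * d k := by
      intro i hdi k k' hik hik'
      have := h i hdi k k' hik hik'
      linarith [this]
    exact atMostOneBad hm3 w d hwpos hwsum hdsum hdne i₂ i₁ hi₂ne
      (fun k k' hk hk' => hbad i₂ hdi₂ k k' (Ne.symm hk) (Ne.symm hk'))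
      (fun k k' hk hk' => hbad i₁ hdi₁ k k' (Ne.symm hk) (Ne.symm hk'))
  obtain ⟨i, hdi, k, k', hik, hik', hdet⟩ := hgood
  have hg := (goodmoment w d μ c i k k' hik hik' hdet (fun k0 h => hL2 i k0 h)).1
  obtain ⟨hτne, hR⟩ := rootAt w d μ c i hdi (fun r => hlt r i) hg hsc
  exact hc0 (root3 μ c hμ hsc hscμ hτne hR)


/-- summing top-3 equations over the third coordinate -/
lemma sumL3gen {ι : Type*} [Fintype ι] (w d : Fin m → ℝ) (μ F : ι → ℝ)
    (i j : Fin m) (hij : i ≠ j)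
    (hatomsum : ∀ r, ∑ k, (w k + μ r * d k) = 1)
    (h3 : ∀ k, k ≠ i → k ≠ j → ∑ r, F r * (w k + μ r * d k) = 0) :
    ∑ r, F r * ((1 - w i - w j) + μ r * (-d i - d j)) = 0 := by
  have hsum : ∑ k ∈ univ \ {i, j}, (∑ r, F r * (w k + μ r * d k)) = 0 := by
    apply Finset.sum_eq_zero
    intro k hk
    rw [Finset.mem_sdiff, Finset.mem_insert, Finset.mem_singleton] at hk
    push_neg at hk
    exact h3 k hk.2.1 hk.2.2
  rw [Finset.sum_comm] at hsum
  rw [← hsum]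
  apply Finset.sum_congr rfl
  intro r _
  rw [← Finset.mul_sum, sum_compl_pair _ hij, hatomsum r]
  ring

/-- finishing move when the pair partner has `d j = 0` -/
lemma finishPair0 (w d : Fin m → ℝ) (μ c : Fin 4 → ℝ)
    (hμ : Function.Injective μ) (hc0 : c 0 ≠ 0)
    (hsc : ∑ r, c r = 0) (hscm : ∑ r, c r * μ r = 0)
    (i j : Fin m)
    (hdi : d i ≠ 0)
    (hwj : 0 < w j) (hwj1 : w j < 1)
    (hlt : ∀ r, w i + μ r * d i < 1)
    (hplt : ∀ r, (w i + μ r * d i) + w j < 1)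
    (hτne : ∀ r, μ r ≠ (1 - w i) / d i)
    (hR : ∑ r, c r / (μ r - (1 - w i) / d i) = 0)
    (hW : ∑ r, c r * ((w i + μ r * d i) * w j /
      ((1 - (w i + μ r * d i)) * (1 - (w i + μ r * d i) - w j))) = 0) : False := by
  have hzne : ∀ r, 1 - (w i + μ r * d i) ≠ 0 := fun r => by have := hlt r; linarith
  have hz'pos : ∀ r, 0 < 1 - (w i + μ r * d i) - w j := fun r => by have := hplt r; linarith
  have hz'ne : ∀ r, 1 - (w i + μ r * d i) - w j ≠ 0 := fun r => (hz'pos r).ne'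
  have hμτ : ∀ r, μ r - (1 - w i) / d i = -(1 - (w i + μ r * d i)) / d i := by
    intro r; field_simp; ring
  have hμτ' : ∀ r, μ r - (1 - w i - w j) / d i
      = -(1 - (w i + μ r * d i) - w j) / d i := by
    intro r; field_simp; ring
  have hτ'ne : ∀ r, μ r ≠ (1 - w i - w j) / d i := by
    intro r heq
    apply hz'ne r
    rw [heq, div_mul_cancel₀ _ hdi]
    ring
  -- partial fraction identity
  have key : ∀ r, c r * ((w i + μ r * d i) * w j /
      ((1 - (w i + μ r * d i)) * (1 - (w i + μ r * d i) - w j)))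
      = (1 / d i) * (c r / (μ r - (1 - w i) / d i))
        - ((1 - w j) / d i) * (c r / (μ r - (1 - w i - w j) / d i)) := by
    intro r
    have e1 : c r / (μ r - (1 - w i) / d i)
        = -(d i * (c r / (1 - (w i + μ r * d i)))) := by
      rw [hμτ r, div_div_eq_mul_div, div_neg, mul_div_assoc]
      ring
    have e2 : c r / (μ r - (1 - w i - w j) / d i)
        = -(d i * (c r / (1 - (w i + μ r * d i) - w j))) := by
      rw [hμτ' r, div_div_eq_mul_div, div_neg, mul_div_assoc]
      ring
    rw [e1, e2]
    have h1 := hzne r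
    have h2 := hz'ne r
    field_simp
    ring
  have hsum : (1 / d i) * (∑ r, c r / (μ r - (1 - w i) / d i))
      - ((1 - w j) / d i) * (∑ r, c r / (μ r - (1 - w i - w j) / d i)) = 0 := by
    rw [Finset.mul_sum, Finset.mul_sum, ← Finset.sum_sub_distrib, ← hW]
    exact Finset.sum_congr rfl fun r _ => (key r).symm
  rw [hR] at hsum
  have hR' : ∑ r, c r / (μ r - (1 - w i - w j) / d i) = 0 := by
    have hco : (1 - w j) / d i ≠ 0 := div_ne_zero (by linarith) hdi
    rcases mul_eq_zero.mp (by linarith : ((1 - w j) / d i) *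
      (∑ r, c r / (μ r - (1 - w i - w j) / d i)) = 0) with h | h
    · exact absurd h hco
    · exact h
  have hττ' : (1 - w i) / d i ≠ (1 - w i - w j) / d i := by
    intro h
    have := sub_eq_zero.mpr h
    rw [div_sub_div_same] at this
    have h2 : (1 - w i) - (1 - w i - w j) = 0 := by
      rcases div_eq_zero_iff.mp this with h' | h'
      · exact h'
      · exact absurd h' hdi
    linarith
  exact hc0 (root4 μ c hμ hsc hscm hττ' hτne hτ'ne hR hR')


lemma finishPairIII (w d : Fin m → ℝ) (μ c : Fin 4 → ℝ)
    (hμ : Function.Injective μ) (hc0 : c 0 ≠ 0)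
    (hsc : ∑ r, c r = 0) (hscm : ∑ r, c r * μ r = 0)
    (i j l : Fin m) (hij : i ≠ j) (hil : i ≠ l) (hjl : j ≠ l)
    (hdi : d i ≠ 0) (hdj : d j ≠ 0) (hdij : d i + d j ≠ 0)
    (τ : ℝ)
    (hwi : w i = 1 - τ * d i) (hwj : w j = 1 - τ * d j)
    (hlt : ∀ r, w i + μ r * d i < 1)
    (hplt : ∀ r, (w i + μ r * d i) + (w j + μ r * d j) < 1)
    (hτne : ∀ r, μ r ≠ τ) (hR : ∑ r, c r / (μ r - τ) = 0)
    (hatomsum : ∀ r, ∑ k, (w k + μ r * d k) = 1)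
    (hL3 : ∀ i' j' k', i' ≠ j' → i' ≠ k' → j' ≠ k' →
      ∑ r, c r * ((w i' + μ r * d i') * (w j' + μ r * d j') /
        ((1 - (w i' + μ r * d i')) * (1 - (w i' + μ r * d i') - (w j' + μ r * d j'))))
        * (w k' + μ r * d k') = 0)
    (hwit : (1 - w i - w j) * d l + (d i + d j) * w l ≠ 0) : False := by
  have hzne : ∀ r, 1 - (w i + μ r * d i) ≠ 0 := fun r => by have := hlt r; linarith
  have hz'ne : ∀ r, 1 - (w i + μ r * d i) - (w j + μ r * d j) ≠ 0 := fun r => by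
    have := hplt r; linarith
  -- extract the 0th moment of the pair statistic
  have hq := sumL3gen w d μ
    (fun r => c r * ((w i + μ r * d i) * (w j + μ r * d j) /
        ((1 - (w i + μ r * d i)) * (1 - (w i + μ r * d i) - (w j + μ r * d j)))))
    i j hij hatomsum (fun k hki hkj => hL3 i j k hij (Ne.symm hki) (Ne.symm hkj))
  have hk := hL3 i j l hij hil hjl
  have hdet : (w l) * (-d i - d j) - (1 - w i - w j) * (d l) ≠ 0 := by
    intro h; apply hwit; linarith
  have hW := (affineExtract μ
    (fun r => c r * ((w i + μ r * d i) * (w j + μ r * d j) /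
        ((1 - (w i + μ r * d i)) * (1 - (w i + μ r * d i) - (w j + μ r * d j)))))
    (w l) (d l) (1 - w i - w j) (-d i - d j) hdet hk hq).1
  -- pole locations
  have hμτ : ∀ r, μ r - τ = -(1 - (w i + μ r * d i)) / d i := by
    intro r; rw [hwi]; field_simp; ring
  have hμσ : ∀ r, μ r - (τ - 1 / (d i + d j))
      = -(1 - (w i + μ r * d i) - (w j + μ r * d j)) / (d i + d j) := by
    intro r; rw [hwi, hwj]; field_simp; ring
  have hσne : ∀ r, μ r ≠ τ - 1 / (d i + d j) := by
    intro r heq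
    apply hz'ne r
    rw [heq, hwi, hwj]
    field_simp
    ring
  -- partial fractions
  have key : ∀ r, c r * ((w i + μ r * d i) * (w j + μ r * d j) /
        ((1 - (w i + μ r * d i)) * (1 - (w i + μ r * d i) - (w j + μ r * d j))))
      = (d j / (d i + d j)) * c r + (1 / d i) * (c r / (μ r - τ))
        + (-(d j) / (d i + d j) ^ 2) * (c r / (μ r - (τ - 1 / (d i + d j)))) := by
    intro r
    have e1 : c r / (μ r - τ) = -(d i * (c r / (1 - (w i + μ r * d i)))) := by
      rw [hμτ r, div_div_eq_mul_div, div_neg, mul_div_assoc]; ring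
    have e2 : c r / (μ r - (τ - 1 / (d i + d j)))
        = -((d i + d j) * (c r / (1 - (w i + μ r * d i) - (w j + μ r * d j)))) := by
      rw [hμσ r, div_div_eq_mul_div, div_neg, mul_div_assoc]; ring
    rw [e1, e2, hwi, hwj]
    have h1 := hzne r
    rw [hwi] at h1
    have h2 := hz'ne r
    rw [hwi, hwj] at h2
    have hY : 1 - (1 - τ * d i + μ r * d i) - (1 - τ * d j + μ r * d j) = (d i + d j) * (τ - μ r) - 1 := by ring
    have hX : 1 - (1 - τ * d i + μ r * d i) = d i * (τ - μ r) := by ring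
    have hA : 1 - τ * d i + μ r * d i = 1 - d i * (τ - μ r) := by ring
    have hB : 1 - τ * d j + μ r * d j = 1 - d j * (τ - μ r) := by ring
    rw [hY] at h2 ⊢
    rw [hX] at h1 ⊢
    rw [hA, hB]
    generalize τ - μ r = u at h1 h2 ⊢
    have hu : u ≠ 0 := right_ne_zero_of_mul h1
    have h2' : u * (d i + d j) - 1 ≠ 0 := by contrapose! h2; linarith
    field_simp
    ring
  -- sum the partial fractions
  have hsum : (d j / (d i + d j)) * (∑ r, c r) + (1 / d i) * (∑ r, c r / (μ r - τ))
      + (-(d j) / (d i + d j) ^ 2) * (∑ r, c r / (μ r - (τ - 1 / (d i + d j)))) = 0 := by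
    rw [Finset.mul_sum, Finset.mul_sum, Finset.mul_sum, ← Finset.sum_add_distrib,
      ← Finset.sum_add_distrib, ← hW]
    exact Finset.sum_congr rfl fun r _ => (key r).symm
  rw [hsc, hR] at hsum
  have hC : -(d j) / (d i + d j) ^ 2 ≠ 0 :=
    div_ne_zero (neg_ne_zero.mpr hdj) (pow_ne_zero 2 hdij)
  have hR' : ∑ r, c r / (μ r - (τ - 1 / (d i + d j))) = 0 := by
    rcases mul_eq_zero.mp (by linarith : (-(d j) / (d i + d j) ^ 2) *
      (∑ r, c r / (μ r - (τ - 1 / (d i + d j)))) = 0) with h | h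
    · exact absurd h hC
    · exact h
  have hστ : τ ≠ τ - 1 / (d i + d j) := by
    intro h
    have : (1 : ℝ) / (d i + d j) = 0 := by linarith
    exact (one_div_ne_zero hdij) this
  exact hc0 (root4 μ c hμ hsc hscm hστ hτne hσne hR hR')


lemma engine4 (hm : 4 ≤ m) (w d : Fin m → ℝ) (μ c : Fin 4 → ℝ)
    (hμ : Function.Injective μ) (hc0 : c 0 ≠ 0)
    (hsc : ∑ r, c r = 0) (hscm : ∑ r, c r * μ r = 0)
    (hwpos : ∀ k, 0 < w k) (hwsum : ∑ k, w k = 1) (hdsum : ∑ k, d k = 0)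
    (hdne : d ≠ 0)
    (hpos : ∀ r k, 0 < w k + μ r * d k)
    (hL2 : ∀ i k, i ≠ k → ∑ r, c r * ((w i + μ r * d i) / (1 - (w i + μ r * d i)))
      * (w k + μ r * d k) = 0)
    (hL3 : ∀ i j k, i ≠ j → i ≠ k → j ≠ k →
      ∑ r, c r * ((w i + μ r * d i) * (w j + μ r * d j) /
        ((1 - (w i + μ r * d i)) * (1 - (w i + μ r * d i) - (w j + μ r * d j))))
        * (w k + μ r * d k) = 0) : False := by
  have hm2 : 2 ≤ m := by omega
  have hm3 : 3 ≤ m := by omega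
  have hatomsum : ∀ r, ∑ k, (w k + μ r * d k) = 1 := by
    intro r
    rw [Finset.sum_add_distrib, hwsum, ← Finset.mul_sum, hdsum]
    ring
  have hlt : ∀ r k, w k + μ r * d k < 1 := fun r k =>
    coord_lt_one hm2 (fun k => w k + μ r * d k) (fun k => hpos r k) (hatomsum r) k
  have hplt : ∀ r {i j : Fin m}, i ≠ j → (w i + μ r * d i) + (w j + μ r * d j) < 1 :=
    fun r i j hij =>
      pair_lt_one hm3 (fun k => w k + μ r * d k) (fun k => hpos r k) (hatomsum r) hij
  have hwlt : ∀ k, w k < 1 := coord_lt_one hm2 w hwpos hwsum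
  -- the "moment extraction" dichotomy: of any two indices, at least one admits
  -- the vanishing zeroth moment of its level-2 statistic
  have hMgood : ∀ p q, p ≠ q →
      (∑ r, c r * ((w p + μ r * d p) / (1 - (w p + μ r * d p))) = 0) ∨
      (∑ r, c r * ((w q + μ r * d q) / (1 - (w q + μ r * d q))) = 0) := by
    intro p q hpq
    have hdet : (∃ k k', p ≠ k ∧ p ≠ k' ∧ w k * d k' - w k' * d k ≠ 0) ∨
        (∃ k k', q ≠ k ∧ q ≠ k' ∧ w k * d k' - w k' * d k ≠ 0) := by
      by_contra h
      push_neg at h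
      obtain ⟨h1, h2⟩ := h
      exact atMostOneBad hm3 w d hwpos hwsum hdsum hdne p q hpq
        (fun k k' hk hk' => by
          have := h1 k k' (Ne.symm hk) (Ne.symm hk'); linarith)
        (fun k k' hk hk' => by
          have := h2 k k' (Ne.symm hk) (Ne.symm hk'); linarith)
    rcases hdet with ⟨k, k', h1, h2, h3⟩ | ⟨k, k', h1, h2, h3⟩
    · exact Or.inl (goodmoment w d μ c p k k' h1 h2 h3 (fun k0 h => hL2 p k0 h)).1
    · exact Or.inr (goodmoment w d μ c q k k' h1 h2 h3 (fun k0 h => hL2 q k0 h)).1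
  by_cases hzz : ∃ j j', j ≠ j' ∧ d j = 0 ∧ d j' = 0
  · -- Case I : at least two vanishing coordinates of d
    obtain ⟨j, j', hjj', hdj, hdj'⟩ := hzz
    obtain ⟨i₁, hdi₁⟩ : ∃ i, d i ≠ 0 := Function.ne_iff.mp hdne
    obtain ⟨i₂, hi₂ne, hdi₂⟩ : ∃ i, i ≠ i₁ ∧ d i ≠ 0 := by
      by_contra h
      push_neg at h
      apply hdi₁
      have := Finset.sum_eq_single i₁ (fun b _ hb => h b hb) (fun h' => absurd (mem_univ i₁) h')
      rw [this] at hdsum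
      exact hdsum
    obtain ⟨i, hdi, hMi⟩ : ∃ i, d i ≠ 0 ∧
        ∑ r, c r * ((w i + μ r * d i) / (1 - (w i + μ r * d i))) = 0 := by
      rcases hMgood i₁ i₂ (Ne.symm hi₂ne) with h | h
      · exact ⟨i₁, hdi₁, h⟩
      · exact ⟨i₂, hdi₂, h⟩
    have hij : i ≠ j := fun h => hdi (h ▸ hdj)
    have hij' : i ≠ j' := fun h => hdi (h ▸ hdj')
    obtain ⟨hτne, hR⟩ := rootAt w d μ c i hdi (fun r => hlt r i) hMi hsc
    have h3 := hL3 i j j' hij hij' hjj'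
    simp only [hdj, hdj', mul_zero, add_zero] at h3
    rw [← Finset.sum_mul] at h3
    have hW := (mul_eq_zero.mp h3).resolve_right (hwpos j').ne'
    exact finishPair0 w d μ c hμ hc0 hsc hscm i j hdi (hwpos j) (hwlt j)
      (fun r => hlt r i)
      (fun r => by have := hplt r hij; simpa [hdj] using this)
      hτne hR hW
  · by_cases hz1 : ∃ j₀, d j₀ = 0
    · -- Case II : exactly one vanishing coordinate of d
      obtain ⟨j₀, hdj₀⟩ := hz1
      have hne0 : ∀ k, k ≠ j₀ → d k ≠ 0 := by
        intro k hk hdk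
        exact hzz ⟨k, j₀, hk, hdk, hdj₀⟩
      obtain ⟨a, haj₀, -⟩ := exists_third hm3 j₀ j₀
      obtain ⟨b, hbj₀, hba⟩ := exists_third hm3 j₀ a
      obtain ⟨e, hej₀, hea, heb⟩ := exists_fourth hm j₀ a b
      obtain ⟨p, q, hpq, hpj₀, hqj₀, hMp, hMq⟩ :
          ∃ p q, p ≠ q ∧ p ≠ j₀ ∧ q ≠ j₀ ∧
          (∑ r, c r * ((w p + μ r * d p) / (1 - (w p + μ r * d p))) = 0) ∧
          (∑ r, c r * ((w q + μ r * d q) / (1 - (w q + μ r * d q))) = 0) := by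
        rcases hMgood a b (Ne.symm hba) with ha | hb
        · rcases hMgood b e (Ne.symm heb) with hb | he
          · exact ⟨a, b, Ne.symm hba, haj₀, hbj₀, ha, hb⟩
          · exact ⟨a, e, Ne.symm hea, haj₀, hej₀, ha, he⟩
        · rcases hMgood a e (Ne.symm hea) with ha | he
          · exact ⟨a, b, Ne.symm hba, haj₀, hbj₀, ha, hb⟩
          · exact ⟨b, e, Ne.symm heb, hbj₀, hej₀, hb, he⟩
      -- for a given good index `p`, either we can finish, or the failure relation holds
      have main : ∀ p', p' ≠ j₀ →
          (∑ r, c r * ((w p' + μ r * d p') / (1 - (w p' + μ r * d p'))) = 0) →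
          (∀ k, k ≠ p' → k ≠ j₀ → (1 - w p' - w j₀) * d k + d p' * w k = 0) := by
        intro p' hp'j₀ hMp' k hkp' hkj₀
        by_contra hwitk
        have hdp' := hne0 p' hp'j₀
        obtain ⟨hτne, hR⟩ := rootAt w d μ c p' hdp' (fun r => hlt r p') hMp' hsc
        -- build the pair moment via affineExtract
        have h3k := hL3 p' j₀ k hp'j₀ (Ne.symm hkp') (Ne.symm hkj₀)
        have h3all : ∀ k', k' ≠ p' → k' ≠ j₀ →
            ∑ r, (c r * ((w p' + μ r * d p') * (w j₀ + μ r * d j₀) /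
              ((1 - (w p' + μ r * d p')) * (1 - (w p' + μ r * d p') - (w j₀ + μ r * d j₀)))))
              * (w k' + μ r * d k') = 0 := by
          intro k' h1 h2
          exact hL3 p' j₀ k' hp'j₀ (Ne.symm h1) (Ne.symm h2)
        have hq := sumL3gen w d μ
          (fun r => c r * ((w p' + μ r * d p') * (w j₀ + μ r * d j₀) /
            ((1 - (w p' + μ r * d p')) * (1 - (w p' + μ r * d p') - (w j₀ + μ r * d j₀)))))
          p' j₀ hp'j₀ hatomsum h3all
        have hdet : (w k) * (-d p' - d j₀) - (1 - w p' - w j₀) * (d k) ≠ 0 := by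
          rw [hdj₀]
          intro h
          apply hwitk
          linarith
        have hW := (affineExtract μ
          (fun r => c r * ((w p' + μ r * d p') * (w j₀ + μ r * d j₀) /
            ((1 - (w p' + μ r * d p')) * (1 - (w p' + μ r * d p') - (w j₀ + μ r * d j₀)))))
          (w k) (d k) (1 - w p' - w j₀) (-d p' - d j₀) hdet h3k hq).1
        simp only [hdj₀, mul_zero, add_zero] at hW
        exact finishPair0 w d μ c hμ hc0 hsc hscm p' j₀ hdp' (hwpos j₀) (hwlt j₀)
          (fun r => hlt r p')
          (fun r => by have := hplt r hp'j₀; simpa [hdj₀] using this)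
          hτne hR hW
      have hfp := main p hpj₀ hMp
      have hfq := main q hqj₀ hMq
      obtain ⟨k₀, hk₀p, hk₀q, hk₀j₀⟩ := exists_fourth hm p q j₀
      have hdp := hne0 p hpj₀
      have hdq := hne0 q hqj₀
      have hdk₀ := hne0 k₀ hk₀j₀
      have e1 := hfp k₀ hk₀p hk₀j₀
      have e2 := hfq k₀ hk₀q hk₀j₀
      -- common proportionality constant
      have hall : ∀ k, k ≠ j₀ → w k * d k₀ = w k₀ * d k := by
        intro k hkj₀
        by_cases hkp : k = p
        · subst hkp
          -- use failure of q at k (=p) and at k₀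
          have e3 := hfq k hpq hkj₀
          -- (1-wq-wj₀) d k + d q w k = 0  and  (1-wq-wj₀) d k₀ + d q w k₀ = 0
          have h' : (1 - w q - w j₀) * (d k * w k₀ - d k₀ * w k) = 0 := by
            linear_combination w k₀ * e3 - w k * e2
          -- also d q ≠ 0 gives from the two: w k d k₀ = w k₀ d k by elimination
          have h'' : d q * (w k * d k₀ - w k₀ * d k) = 0 := by
            linear_combination d k₀ * e3 - d k * e2
          rcases mul_eq_zero.mp h'' with h | h
          · exact absurd h hdq
          · linarith
        · by_cases hkk₀ : k = k₀
          · subst hkk₀; ring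
          · have e3 := hfp k hkp hkj₀
            have h'' : d p * (w k * d k₀ - w k₀ * d k) = 0 := by
              linear_combination d k₀ * e3 - d k * e1
            rcases mul_eq_zero.mp h'' with h | h
            · exact absurd h hdp
            · linarith
      -- sum over k ≠ j₀
      have hsum1 : ∑ k ∈ univ.erase j₀, w k = 1 - w j₀ := by
        rw [Finset.sum_erase_eq_sub (mem_univ j₀), hwsum]
      have hsum2 : ∑ k ∈ univ.erase j₀, d k = 0 := by
        rw [Finset.sum_erase_eq_sub (mem_univ j₀), hdsum, hdj₀]
        ring
      have : (1 - w j₀) * d k₀ = 0 := by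
        have h1 : ∑ k ∈ univ.erase j₀, w k * d k₀ = ∑ k ∈ univ.erase j₀, w k₀ * d k := by
          apply Finset.sum_congr rfl
          intro k hk
          exact hall k (Finset.ne_of_mem_erase hk)
        rw [← Finset.sum_mul, hsum1, ← Finset.mul_sum, hsum2] at h1
        rw [h1]
        ring
      rcases mul_eq_zero.mp this with h | h
      · have := hwlt j₀; linarith
      · exact hdk₀ h
    · -- Case III : d is everywhere nonzero
      push_neg at hz1
      have hz0 : ∀ k, d k ≠ 0 := hz1
      have h0m : 0 < m := by omega
      set a : Fin m := ⟨0, h0m⟩ with ha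
      obtain ⟨b, hba⟩ := exists_other hm2 a
      obtain ⟨g, hga, hgb⟩ := exists_third hm3 a b
      obtain ⟨e, hea, heb, heg⟩ := exists_fourth hm a b g
      obtain ⟨i, j, l, hij, hil, hjl, hMi, hMj, hMl⟩ :
          ∃ i j l, i ≠ j ∧ i ≠ l ∧ j ≠ l ∧
          (∑ r, c r * ((w i + μ r * d i) / (1 - (w i + μ r * d i))) = 0) ∧
          (∑ r, c r * ((w j + μ r * d j) / (1 - (w j + μ r * d j))) = 0) ∧
          (∑ r, c r * ((w l + μ r * d l) / (1 - (w l + μ r * d l))) = 0) := by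
        by_cases hMa : ∑ r, c r * ((w a + μ r * d a) / (1 - (w a + μ r * d a))) = 0
        · by_cases hMb : ∑ r, c r * ((w b + μ r * d b) / (1 - (w b + μ r * d b))) = 0
          · by_cases hMg : ∑ r, c r * ((w g + μ r * d g) / (1 - (w g + μ r * d g))) = 0
            · exact ⟨a, b, g, Ne.symm hba, Ne.symm hga, Ne.symm hgb, hMa, hMb, hMg⟩
            · have hMe := (hMgood g e (Ne.symm heg)).resolve_left hMg
              exact ⟨a, b, e, Ne.symm hba, Ne.symm hea, Ne.symm heb, hMa, hMb, hMe⟩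
          · have hMg := (hMgood b g (Ne.symm hgb)).resolve_left hMb
            have hMe := (hMgood b e (Ne.symm heb)).resolve_left hMb
            exact ⟨a, g, e, Ne.symm hga, Ne.symm hea, Ne.symm heg, hMa, hMg, hMe⟩
        · have hMb := (hMgood a b (Ne.symm hba)).resolve_left hMa
          have hMg := (hMgood a g (Ne.symm hga)).resolve_left hMa
          have hMe := (hMgood a e (Ne.symm hea)).resolve_left hMa
          exact ⟨b, g, e, Ne.symm hgb, Ne.symm heb, Ne.symm heg, hMb, hMg, hMe⟩
      obtain ⟨hτi, hRi⟩ := rootAt w d μ c i (hz0 i) (fun r => hlt r i) hMi hsc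
      obtain ⟨hτj, hRj⟩ := rootAt w d μ c j (hz0 j) (fun r => hlt r j) hMj hsc
      obtain ⟨hτl, hRl⟩ := rootAt w d μ c l (hz0 l) (fun r => hlt r l) hMl hsc
      by_cases h1 : (1 - w i) / d i = (1 - w j) / d j
      swap
      · exact hc0 (root4 μ c hμ hsc hscm h1 hτi hτj hRi hRj)
      by_cases h2 : (1 - w i) / d i = (1 - w l) / d l
      swap
      · exact hc0 (root4 μ c hμ hsc hscm h2 hτi hτl hRi hRl)
      set τ : ℝ := (1 - w i) / d i with hτdef
      have hwi : w i = 1 - τ * d i := by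
        rw [hτdef, div_mul_cancel₀ _ (hz0 i)]; ring
      have hwj : w j = 1 - τ * d j := by
        rw [h1, div_mul_cancel₀ _ (hz0 j)]; ring
      have hwl : w l = 1 - τ * d l := by
        rw [h2, div_mul_cancel₀ _ (hz0 l)]; ring
      have hwltij := pair_lt_one hm3 w hwpos hwsum hij
      have hdij : d i + d j ≠ 0 := by
        intro h
        have key : τ * (d i + d j) = 2 - w i - w j := by
          rw [hwi, hwj]; ring
        rw [h, mul_zero] at key
        linarith
      have hdil : d i + d l ≠ 0 := by
        intro h
        have hwltil := pair_lt_one hm3 w hwpos hwsum hil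
        have key : τ * (d i + d l) = 2 - w i - w l := by
          rw [hwi, hwl]; ring
        rw [h, mul_zero] at key
        linarith
      by_cases hwit1 : (1 - w i - w j) * d l + (d i + d j) * w l ≠ 0
      · exact finishPairIII w d μ c hμ hc0 hsc hscm i j l hij hil hjl
          (hz0 i) (hz0 j) hdij τ hwi hwj (fun r => hlt r i) (fun r => hplt r hij)
          hτi hRi hatomsum hL3 hwit1
      · by_cases hwit2 : (1 - w i - w l) * d j + (d i + d l) * w j ≠ 0
        · exact finishPairIII w d μ c hμ hc0 hsc hscm i l j hil hij (Ne.symm hjl)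
            (hz0 i) (hz0 l) hdil τ hwi hwl (fun r => hlt r i) (fun r => hplt r hil)
            hτi hRi hatomsum hL3 hwit2
        · push_neg at hwit1 hwit2
          rw [hwi, hwj, hwl] at hwit1 hwit2
          have g1 : d i + d j - d l = 0 := by linear_combination hwit1
          have g2 : d i + d l - d j = 0 := by linear_combination hwit2
          have : d i = 0 := by linarith
          exact hz0 i this


lemma Dlemma {ι : Type*} [Fintype ι] [DecidableEq ι] (hm : 2 ≤ m)
    (hcard : Fintype.card ι ≤ m)
    (z : ι → Fin m → ℝ) (c : ι → ℝ)
    (hzpos : ∀ r k, 0 < z r k) (hzsum : ∀ r, ∑ k, z r k = 1)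
    (hcne : ∀ r, c r ≠ 0)
    (hL1 : ∀ k, ∑ r, c r * z r k = 0)
    (hL2 : ∀ i k, i ≠ k → ∑ r, c r * (z r i / (1 - z r i)) * z r k = 0)
    (hdep : ∀ γ : ι → ℝ, (∀ k, ∑ r, γ r * z r k = 0) → ∃ t, ∀ r, γ r = t * c r)
    (r0 r1 : ι) (hne : z r0 ≠ z r1) : False := by
  classical
  have hzlt : ∀ r k, z r k < 1 := fun r k =>
    coord_lt_one hm (z r) (hzpos r) (hzsum r) k
  set s : Finset (Fin m → ℝ) := Finset.image z (univ.erase r0) with hs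
  set p : Submodule ℝ (Fin m → ℝ) := Submodule.span ℝ (↑s) with hp
  have hmem_erase : ∀ r, r ≠ r0 → z r ∈ p := by
    intro r hr
    apply Submodule.subset_span
    simp only [hs, Finset.coe_image, Set.mem_image, Finset.mem_coe, Finset.mem_erase]
    exact ⟨r, ⟨hr, mem_univ r⟩, rfl⟩
  have hmem : ∀ r, z r ∈ p := by
    intro r
    by_cases hr : r = r0
    · subst hr
      have hz0eq : z r = ∑ r' ∈ univ.erase r, (-(c r' / c r)) • z r' := by
        funext k
        rw [Finset.sum_apply]
        have h := hL1 k
        rw [← Finset.add_sum_erase _ _ (mem_univ r)] at h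
        have h2 : ∑ r' ∈ univ.erase r, ((-(c r' / c r)) • z r') k
            = (-(1 / c r)) * ∑ r' ∈ univ.erase r, c r' * z r' k := by
          rw [Finset.mul_sum]
          apply Finset.sum_congr rfl
          intro r' _
          simp only [Pi.smul_apply, smul_eq_mul]
          field_simp
        rw [h2]
        have h3 : ∑ r' ∈ univ.erase r, c r' * z r' k = -(c r * z r k) := by linarith
        rw [h3]
        field_simp [hcne r]
      rw [hz0eq]
      apply Submodule.sum_mem
      intro r' hr'
      exact Submodule.smul_mem _ _ (hmem_erase r' (Finset.ne_of_mem_erase hr'))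
    · exact hmem_erase r hr
  -- agreement at coordinates whose basis vector is not in p
  have hagree : ∀ i, (Pi.single i 1 : Fin m → ℝ) ∉ p → ∀ r, z r i = z r0 i := by
    intro i hi r
    set γ : ι → ℝ := fun r' => c r' * (z r' i / (1 - z r' i)) with hγ
    have hvec : ∀ k, k ≠ i → ∑ r', γ r' * z r' k = 0 := by
      intro k hk
      exact hL2 i k (Ne.symm hk)
    set S : ℝ := ∑ r', γ r' with hS
    have htot : ∑ k, (∑ r', γ r' * z r' k) = S := by
      rw [Finset.sum_comm]
      apply Finset.sum_congr rfl
      intro r' _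
      rw [← Finset.mul_sum, hzsum, mul_one]
    have h1' : ∑ k', (∑ r', γ r' * z r' k') = ∑ r', γ r' * z r' i :=
      Finset.sum_eq_single i (fun b _ hb => hvec b hb) (fun h => absurd (mem_univ i) h)
    have hself : ∑ r', γ r' * z r' i = S := by rw [← h1']; exact htot
    have hvecfun : (fun k => ∑ r', γ r' * z r' k) = S • (Pi.single i 1 : Fin m → ℝ) := by
      funext k
      by_cases hk : k = i
      · subst hk
        simp only [Pi.smul_apply, Pi.single_eq_same, smul_eq_mul, mul_one]
        exact hself
      · simp only [Pi.smul_apply, Pi.single_eq_of_ne hk, smul_eq_mul, mul_zero]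
        exact hvec k hk
    have hvmem : (fun k => ∑ r', γ r' * z r' k) ∈ p := by
      have : (fun k => ∑ r', γ r' * z r' k) = ∑ r', γ r' • z r' := by
        funext k
        rw [Finset.sum_apply]
        apply Finset.sum_congr rfl
        intro r' _
        simp
      rw [this]
      exact Submodule.sum_mem _ (fun r' _ => Submodule.smul_mem _ _ (hmem r'))
    rw [hvecfun] at hvmem
    have hS0 : S = 0 := by
      by_contra hS0
      exact hi ((p.smul_mem_iff hS0).mp hvmem)
    have hdepγ : ∀ k, ∑ r', γ r' * z r' k = 0 := by
      intro k
      by_cases hk : k = i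
      · subst hk; rw [hself]; exact hS0
      · exact hvec k hk
    obtain ⟨t, ht⟩ := hdep γ hdepγ
    have hg : ∀ r', z r' i / (1 - z r' i) = t := by
      intro r'
      have h'' : γ r' = c r' * (z r' i / (1 - z r' i)) := rfl
      exact mul_left_cancel₀ (hcne r') (by rw [← h'', ht r']; ring)
    have h1 := hg r
    have h2 := hg r0
    have hne1 : 1 - z r i ≠ 0 := by have := hzlt r i; linarith
    have hne2 : 1 - z r0 i ≠ 0 := by have := hzlt r0 i; linarith
    rw [← h2] at h1
    rw [div_eq_div_iff hne1 hne2] at h1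
    nlinarith [h1]
  -- not all basis vectors lie in p
  have hnotall : ¬∀ i, (Pi.single i 1 : Fin m → ℝ) ∈ p := by
    intro hall
    have htop : (⊤ : Submodule ℝ (Fin m → ℝ)) ≤ p := by
      rw [← (Pi.basisFun ℝ (Fin m)).span_eq]
      apply Submodule.span_le.mpr
      rintro x ⟨i, rfl⟩
      simpa [Pi.basisFun_apply] using hall i
    have hptop : p = ⊤ := eq_top_iff.mpr htop
    have h1 : Module.finrank ℝ (Fin m → ℝ) ≤ s.card := by
      have hfs := finrank_span_finset_le_card (R := ℝ) s
      simp only [Set.finrank] at hfs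
      calc Module.finrank ℝ (Fin m → ℝ) = Module.finrank ℝ (⊤ : Submodule ℝ (Fin m → ℝ)) :=
            (finrank_top ℝ _).symm
        _ = Module.finrank ℝ p := by rw [hptop]
        _ ≤ s.card := hfs
    have h2 : s.card ≤ Fintype.card ι - 1 := by
      calc s.card ≤ (univ.erase r0).card := Finset.card_image_le
        _ = Fintype.card ι - 1 := by rw [Finset.card_erase_of_mem (mem_univ r0), Finset.card_univ]
    have h3 : Module.finrank ℝ (Fin m → ℝ) = m := by simp
    have hι : 1 ≤ Fintype.card ι := Fintype.card_pos_iff.mpr ⟨r0⟩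
    omega
  by_cases hB : ∀ i, (Pi.single i 1 : Fin m → ℝ) ∉ p
  · apply hne
    funext k
    rw [hagree k (hB k) r1]
  · push_neg at hB
    obtain ⟨i, hi⟩ := hB
    obtain ⟨i₀, hi₀⟩ : ∃ i₀, (Pi.single i₀ 1 : Fin m → ℝ) ∉ p := by
      by_contra h
      push_neg at h
      exact hnotall h
    have hii₀ : i₀ ≠ i := fun h => hi₀ (h ▸ hi)
    rw [hp, Submodule.mem_span_finset] at hi
    obtain ⟨f, -, hf⟩ := hi
    have hval : ∀ v ∈ s, v i₀ = z r0 i₀ := by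
      intro v hv
      rw [hs] at hv
      obtain ⟨r, _, rfl⟩ := Finset.mem_image.mp hv
      exact hagree i₀ hi₀ r
    have hsum_f : ∑ v ∈ s, f v = 1 := by
      have happ : ∀ k, ∑ v ∈ s, f v * v k = (Pi.single i 1 : Fin m → ℝ) k := by
        intro k
        have := congrFun hf k
        rw [Finset.sum_apply] at this
        simpa using this
      have htot : ∑ k, ∑ v ∈ s, f v * v k = 1 := by
        rw [Finset.sum_congr rfl (fun k _ => happ k)]
        simp
      rw [Finset.sum_comm] at htot
      rw [← htot]
      apply Finset.sum_congr rfl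
      intro v hv
      rw [← Finset.mul_sum]
      rw [hs] at hv
      obtain ⟨r, _, rfl⟩ := Finset.mem_image.mp hv
      rw [hzsum r, mul_one]
    have hzero : (0 : ℝ) = z r0 i₀ := by
      have := congrFun hf i₀
      rw [Finset.sum_apply] at this
      have hL : ∑ v ∈ s, (f v • v) i₀ = ∑ v ∈ s, f v * z r0 i₀ := by
        apply Finset.sum_congr rfl
        intro v hv
        simp only [Pi.smul_apply, smul_eq_mul]
        rw [hval v hv]
      rw [hL, ← Finset.sum_mul, hsum_f, one_mul] at this
      rw [this, Pi.single_eq_of_ne hii₀]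
    exact absurd hzero.symm (hzpos r0 i₀).ne'


/-- the 3-atom core lemma -/
lemma core3 (hm : 4 ≤ m) (z : Fin 3 → Fin m → ℝ) (c : Fin 3 → ℝ)
    (hzpos : ∀ r k, 0 < z r k) (hzsum : ∀ r, ∑ k, z r k = 1)
    (hzne : ∀ r r', r ≠ r' → z r ≠ z r')
    (hcne : ∀ r, c r ≠ 0)
    (hsc : ∑ r, c r = 0)
    (hL1 : ∀ k, ∑ r, c r * z r k = 0)
    (hL2 : ∀ i k, i ≠ k → ∑ r, c r * (z r i / (1 - z r i)) * z r k = 0) : False := by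
  have hsc' : c 0 + c 1 + c 2 = 0 := by rw [← hsc, Fin.sum_univ_three]
  set κ : ℝ := -(c 1) / c 2 with hκ
  have hz2 : ∀ k, z 2 k = z 0 k + κ * (z 1 k - z 0 k) := by
    intro k
    have h := hL1 k
    rw [Fin.sum_univ_three] at h
    have h2 : c 2 * z 2 k = c 2 * z 0 k + (-(c 1)) * (z 1 k - z 0 k) := by
      linear_combination h - z 0 k * hsc'
    apply mul_left_cancel₀ (hcne 2)
    rw [h2, hκ]
    field_simp [hcne 2]
    try ring
  set w : Fin m → ℝ := z 0 with hw
  set d : Fin m → ℝ := fun k => z 1 k - z 0 k with hd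
  set μ : Fin 3 → ℝ := ![0, 1, κ] with hμdef
  have hzr : ∀ r k, z r k = w k + μ r * d k := by
    intro r k
    fin_cases r
    · show z 0 k = w k + (0:ℝ) * d k
      rw [hw]; ring
    · show z 1 k = w k + (1:ℝ) * d k
      rw [hw, hd]; ring
    · show z 2 k = w k + κ * d k
      rw [hw, hd, hz2 k]
  have hμinj : Function.Injective μ := by
    intro a b hab
    by_contra hne'
    exact hzne a b hne' (funext fun k => by rw [hzr a k, hzr b k, hab])
  have hscm : ∑ r, c r * μ r = 0 := by
    rw [Fin.sum_univ_three]
    show c 0 * 0 + c 1 * 1 + c 2 * κ = 0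
    rw [hκ]
    field_simp [hcne 2]
    try ring
  have hdsum : ∑ k, d k = 0 := by
    rw [hd]
    rw [Finset.sum_sub_distrib, hzsum, hzsum]
    ring
  have hdne : d ≠ 0 := by
    intro h
    apply hzne 1 0 (by decide)
    funext k
    have := congrFun h k
    rw [hd] at this
    simp at this
    linarith
  have hpos : ∀ r k, 0 < w k + μ r * d k := by
    intro r k
    rw [← hzr r k]
    exact hzpos r k
  have hL2' : ∀ i k, i ≠ k → ∑ r, c r * ((w i + μ r * d i) / (1 - (w i + μ r * d i)))
      * (w k + μ r * d k) = 0 := by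
    intro i k hik
    rw [← hL2 i k hik]
    apply Finset.sum_congr rfl
    intro r _
    rw [← hzr r i, ← hzr r k]
  exact engine3 hm w d μ c hμinj (hcne 0) hsc hscm (hzpos 0) (hzsum 0) hdsum hdne hpos hL2'

/-- the 4-atom core lemma -/
lemma core4 (hm : 4 ≤ m) (z : Fin 4 → Fin m → ℝ) (c : Fin 4 → ℝ)
    (hzpos : ∀ r k, 0 < z r k) (hzsum : ∀ r, ∑ k, z r k = 1)
    (hzne : ∀ r r', r ≠ r' → z r ≠ z r')
    (hcne : ∀ r, c r ≠ 0)
    (hsc : ∑ r, c r = 0)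
    (hL1 : ∀ k, ∑ r, c r * z r k = 0)
    (hL2 : ∀ i k, i ≠ k → ∑ r, c r * (z r i / (1 - z r i)) * z r k = 0)
    (hL3 : ∀ i j k, i ≠ j → i ≠ k → j ≠ k →
      ∑ r, c r * (z r i * z r j / ((1 - z r i) * (1 - z r i - z r j))) * z r k = 0) :
    False := by
  have hγsum : ∀ γ : Fin 4 → ℝ, (∀ k, ∑ r, γ r * z r k = 0) → ∑ r, γ r = 0 := by
    intro γ hγ
    have htot : ∑ k, (∑ r, γ r * z r k) = ∑ r, γ r := by
      rw [Finset.sum_comm]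
      apply Finset.sum_congr rfl
      intro r _
      rw [← Finset.mul_sum, hzsum, mul_one]
    rw [← htot]
    exact Finset.sum_eq_zero (fun k _ => hγ k)
  by_cases hcol : ∃ κ3 κ4 : ℝ, (∀ k, z 2 k = z 0 k + κ3 * (z 1 k - z 0 k)) ∧
      (∀ k, z 3 k = z 0 k + κ4 * (z 1 k - z 0 k))
  · -- collinear case
    obtain ⟨κ3, κ4, hz2, hz3⟩ := hcol
    set w : Fin m → ℝ := z 0 with hw
    set d : Fin m → ℝ := fun k => z 1 k - z 0 k with hd
    set μ : Fin 4 → ℝ := ![0, 1, κ3, κ4] with hμdef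
    have hzr : ∀ r k, z r k = w k + μ r * d k := by
      intro r k
      fin_cases r
      · show z 0 k = w k + (0:ℝ) * d k
        rw [hw]; ring
      · show z 1 k = w k + (1:ℝ) * d k
        rw [hw, hd]; ring
      · show z 2 k = w k + κ3 * d k
        rw [hw, hd, hz2 k]
      · show z 3 k = w k + κ4 * d k
        rw [hw, hd, hz3 k]
    have hdiff : ∀ r r', r ≠ r' → μ r ≠ μ r' := by
      intro r r' hrr' heq
      apply hzne r r' hrr'
      funext k
      rw [hzr r k, hzr r' k, heq]
    have hμinj : Function.Injective μ := by
      intro a b hab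
      by_contra hne
      exact hdiff a b hne hab
    have hscm : ∑ r, c r * μ r = 0 := by
      have hdne' : d ≠ 0 := by
        intro h
        apply hzne 1 0 (by decide)
        funext k
        have := congrFun h k
        rw [hd] at this
        simp at this
        linarith
      obtain ⟨k, hk⟩ := Function.ne_iff.mp hdne'
      have h := hL1 k
      have h2 : ∀ r, c r * z r k = c r * w k + (c r * μ r) * d k := by
        intro r
        rw [hzr r k]; ring
      rw [Finset.sum_congr rfl (fun r _ => h2 r), Finset.sum_add_distrib,
        ← Finset.sum_mul, ← Finset.sum_mul, hsc, zero_mul, zero_add] at h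
      rcases mul_eq_zero.mp h with h | h
      · exact h
      · exact absurd h hk
    have hdsum : ∑ k, d k = 0 := by
      rw [hd, Finset.sum_sub_distrib, hzsum, hzsum]
      ring
    have hdne : d ≠ 0 := by
      intro h
      apply hzne 1 0 (by decide)
      funext k
      have := congrFun h k
      rw [hd] at this
      simp at this
      linarith
    have hpos : ∀ r k, 0 < w k + μ r * d k := by
      intro r k
      rw [← hzr r k]
      exact hzpos r k
    have hL2' : ∀ i k, i ≠ k → ∑ r, c r * ((w i + μ r * d i) / (1 - (w i + μ r * d i)))
        * (w k + μ r * d k) = 0 := by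
      intro i k hik
      rw [← hL2 i k hik]
      apply Finset.sum_congr rfl
      intro r _
      rw [← hzr r i, ← hzr r k]
    have hL3' : ∀ i j k, i ≠ j → i ≠ k → j ≠ k →
        ∑ r, c r * ((w i + μ r * d i) * (w j + μ r * d j) /
          ((1 - (w i + μ r * d i)) * (1 - (w i + μ r * d i) - (w j + μ r * d j))))
          * (w k + μ r * d k) = 0 := by
      intro i j k hij hik hjk
      rw [← hL3 i j k hij hik hjk]
      apply Finset.sum_congr rfl
      intro r _
      rw [← hzr r i, ← hzr r j, ← hzr r k]
    exact engine4 hm w d μ c hμinj (hcne 0) hsc hscm (hzpos 0) (hzsum 0) hdsum hdne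
      hpos hL2' hL3'
  · -- unique-dependency case
    have hdep : ∀ γ : Fin 4 → ℝ, (∀ k, ∑ r, γ r * z r k = 0) → ∃ t, ∀ r, γ r = t * c r := by
      intro γ hγ
      by_contra hnot
      apply hcol
      have hγs := hγsum γ hγ
      have hcs := hsc
      -- η kills the index 3
      set η : Fin 4 → ℝ := fun r => γ 3 * c r - c 3 * γ r with hη
      have hηdep : ∀ k, ∑ r, η r * z r k = 0 := by
        intro k
        have h1 := hγ k
        have h2 := hL1 k
        rw [Fin.sum_univ_four] at h1 h2 ⊢
        simp only [hη]
        linear_combination γ 3 * h2 - c 3 * h1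
      have hη3 : η 3 = 0 := by rw [hη]; ring
      have hηsum : η 0 + η 1 + η 2 = 0 := by
        have := hγsum η hηdep
        rw [Fin.sum_univ_four, hη3] at this
        linarith
      have hηne : ¬(η 1 = 0 ∧ η 2 = 0) := by
        rintro ⟨h1, h2⟩
        have h0 : η 0 = 0 := by linarith
        apply hnot
        refine ⟨γ 3 / c 3, fun r => ?_⟩
        have hr : η r = 0 := by
          fin_cases r
          · exact h0
          · exact h1
          · exact h2
          · exact hη3
        have hr' : γ 3 * c r - c 3 * γ r = 0 := hr
        rw [div_mul_eq_mul_div, eq_div_iff (hcne 3)]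
        linear_combination -hr'
      have hη2 : η 2 ≠ 0 := by
        intro h2
        apply hηne
        refine ⟨?_, h2⟩
        by_contra h1
        -- η = η1-only dependency : z 1 = z 0 follows
        apply hzne 1 0 (by decide)
        funext k
        have h := hηdep k
        rw [Fin.sum_univ_four, hη3, h2] at h
        have h0 : η 0 = -η 1 := by linarith
        rw [h0] at h
        have : η 1 * (z 1 k - z 0 k) = 0 := by linarith
        rcases mul_eq_zero.mp this with h' | h'
        · exact absurd h' h1
        · linarith
      have hcol2 : ∀ k, z 2 k = z 0 k + (-(η 1) / η 2) * (z 1 k - z 0 k) := by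
        intro k
        have h := hηdep k
        rw [Fin.sum_univ_four, hη3] at h
        have h0 : η 0 = -η 1 - η 2 := by linarith
        have h2 : η 2 * z 2 k = η 2 * z 0 k + (-(η 1)) * (z 1 k - z 0 k) := by
          linear_combination h - z 0 k * (by linarith : η 0 + η 1 + η 2 = 0)
        apply mul_left_cancel₀ hη2
        rw [h2]
        field_simp
      -- second collinearity, via η' killing index 2
      set η' : Fin 4 → ℝ := fun r => γ 2 * c r - c 2 * γ r with hη'
      have hη'dep : ∀ k, ∑ r, η' r * z r k = 0 := by
        intro k
        have h1 := hγ k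
        have h2 := hL1 k
        rw [Fin.sum_univ_four] at h1 h2 ⊢
        simp only [hη']
        linear_combination γ 2 * h2 - c 2 * h1
      have hη'2 : η' 2 = 0 := by rw [hη']; ring
      have hη'sum : η' 0 + η' 1 + η' 3 = 0 := by
        have := hγsum η' hη'dep
        rw [Fin.sum_univ_four, hη'2] at this
        linarith
      have hη'ne : ¬(η' 1 = 0 ∧ η' 3 = 0) := by
        rintro ⟨h1, h3⟩
        have h0 : η' 0 = 0 := by linarith
        apply hnot
        refine ⟨γ 2 / c 2, fun r => ?_⟩
        have hr : η' r = 0 := by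
          fin_cases r
          · exact h0
          · exact h1
          · exact hη'2
          · exact h3
        have hr' : γ 2 * c r - c 2 * γ r = 0 := hr
        rw [div_mul_eq_mul_div, eq_div_iff (hcne 2)]
        linear_combination -hr'
      have hη'3 : η' 3 ≠ 0 := by
        intro h3
        apply hη'ne
        refine ⟨?_, h3⟩
        by_contra h1
        apply hzne 1 0 (by decide)
        funext k
        have h := hη'dep k
        rw [Fin.sum_univ_four, hη'2, h3] at h
        have h0 : η' 0 = -η' 1 := by linarith
        rw [h0] at h
        have : η' 1 * (z 1 k - z 0 k) = 0 := by linarith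
        rcases mul_eq_zero.mp this with h' | h'
        · exact absurd h' h1
        · linarith
      have hcol3 : ∀ k, z 3 k = z 0 k + (-(η' 1) / η' 3) * (z 1 k - z 0 k) := by
        intro k
        have h := hη'dep k
        rw [Fin.sum_univ_four, hη'2] at h
        have h2 : η' 3 * z 3 k = η' 3 * z 0 k + (-(η' 1)) * (z 1 k - z 0 k) := by
          linear_combination h - z 0 k * hη'sum
        apply mul_left_cancel₀ hη'3
        rw [h2]
        field_simp
      exact ⟨-(η 1) / η 2, -(η' 1) / η' 3, hcol2, hcol3⟩
    exact Dlemma (by omega) (by simpa using hm) z c hzpos hzsum hcne hL1 hL2 hdep 0 1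
      (hzne 0 1 (by decide))


lemma PLtop3 (θ : Fin m → ℝ) (i j k : Fin m) :
    PLtop θ ![i, j, k] = θ i * (θ j / (1 - θ i)) * (θ k / (1 - (θ i + θ j))) := by
  rw [PLtop, Fin.prod_univ_three]
  have h0 : (univ.filter (fun q : Fin 3 => q < 0)) = ∅ := by decide
  have h1 : (univ.filter (fun q : Fin 3 => q < 1)) = {0} := by decide
  have h2 : (univ.filter (fun q : Fin 3 => q < 2)) = {0, 1} := by decide
  rw [h0, h1, h2]
  simp [Finset.sum_pair (by decide : (0 : Fin 3) ≠ 1)]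

lemma inj3 {i j k : Fin m} (hij : i ≠ j) (hik : i ≠ k) (hjk : j ≠ k) :
    Function.Injective ![i, j, k] := by
  intro a b hab
  fin_cases a <;> fin_cases b <;> simp_all

lemma regroup (x y u : ℝ) :
    x * (y / (1 - x)) * (u / (1 - (x + y))) = x * y / ((1 - x) * (1 - x - y)) * u := by
  have h3 : (1 - (x + y)) = 1 - x - y := by ring
  rw [h3, mul_assoc, div_mul_div_comm]
  ring

lemma regroup2 (x y : ℝ) (h2 : 1 - x - y ≠ 0) :
    x * y / ((1 - x) * (1 - x - y)) * (1 - x - y) = x / (1 - x) * y := by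
  rw [div_mul_eq_mul_div, mul_div_mul_right _ _ h2, div_mul_eq_mul_div]

lemma sum4compl (i j : Fin m) (hij : i ≠ j) (f1 f2 f3 f4 : Fin m → ℝ)
    (hf1 : ∑ k, f1 k = 1) (hf2 : ∑ k, f2 k = 1) (hf3 : ∑ k, f3 k = 1)
    (hf4 : ∑ k, f4 k = 1) (a1 a2 a3 a4 : ℝ)
    (h : ∀ k, k ≠ i → k ≠ j →
      a1 * f1 k + a2 * f2 k + a3 * f3 k + a4 * f4 k = 0) :
    a1 * (1 - f1 i - f1 j) + a2 * (1 - f2 i - f2 j) + a3 * (1 - f3 i - f3 j)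
      + a4 * (1 - f4 i - f4 j) = 0 := by
  have hsum : ∑ k ∈ univ \ {i, j},
      (a1 * f1 k + a2 * f2 k + a3 * f3 k + a4 * f4 k) = 0 := by
    apply Finset.sum_eq_zero
    intro k hk
    rw [Finset.mem_sdiff, Finset.mem_insert, Finset.mem_singleton] at hk
    push_neg at hk
    exact h k hk.2.1 hk.2.2
  rw [Finset.sum_add_distrib, Finset.sum_add_distrib, Finset.sum_add_distrib,
    ← Finset.mul_sum, ← Finset.mul_sum, ← Finset.mul_sum, ← Finset.mul_sum,
    sum_compl_pair f1 hij, sum_compl_pair f2 hij, sum_compl_pair f3 hij,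
    sum_compl_pair f4 hij, hf1, hf2, hf3, hf4] at hsum
  linarith [hsum]

lemma sum4erase (i : Fin m) (f1 f2 f3 f4 : Fin m → ℝ)
    (hf1 : ∑ k, f1 k = 1) (hf2 : ∑ k, f2 k = 1) (hf3 : ∑ k, f3 k = 1)
    (hf4 : ∑ k, f4 k = 1) (a1 a2 a3 a4 : ℝ)
    (h : ∀ k, k ≠ i →
      a1 * f1 k + a2 * f2 k + a3 * f3 k + a4 * f4 k = 0) :
    a1 * (1 - f1 i) + a2 * (1 - f2 i) + a3 * (1 - f3 i) + a4 * (1 - f4 i) = 0 := by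
  have hsum : ∑ k ∈ univ.erase i,
      (a1 * f1 k + a2 * f2 k + a3 * f3 k + a4 * f4 k) = 0 := by
    apply Finset.sum_eq_zero
    intro k hk
    exact h k (Finset.ne_of_mem_erase hk)
  rw [Finset.sum_add_distrib, Finset.sum_add_distrib, Finset.sum_add_distrib,
    ← Finset.mul_sum, ← Finset.mul_sum, ← Finset.mul_sum, ← Finset.mul_sum,
    Finset.sum_erase_eq_sub (mem_univ i), Finset.sum_erase_eq_sub (mem_univ i),
    Finset.sum_erase_eq_sub (mem_univ i), Finset.sum_erase_eq_sub (mem_univ i),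
    hf1, hf2, hf3, hf4] at hsum
  linarith [hsum]

lemma apply3 (hm : 4 ≤ m) (A B C' : Fin m → ℝ) (a b c' : ℝ)
    (hA : IsPLParam A) (hB : IsPLParam B) (hC : IsPLParam C')
    (hAB : A ≠ B) (hAC : A ≠ C') (hBC : B ≠ C')
    (ha : a ≠ 0) (hb : b ≠ 0) (hc : c' ≠ 0)
    (hsum : a + b + c' = 0)
    (hL1 : ∀ k, a * A k + b * B k + c' * C' k = 0)
    (hL2 : ∀ i k, i ≠ k → a * (A i / (1 - A i)) * A k + b * (B i / (1 - B i)) * B k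
        + c' * (C' i / (1 - C' i)) * C' k = 0) : False := by
  apply core3 hm ![A, B, C'] ![a, b, c']
  · intro r k; fin_cases r
    · exact hA.1 k
    · exact hB.1 k
    · exact hC.1 k
  · intro r; fin_cases r
    · exact hA.2
    · exact hB.2
    · exact hC.2
  · intro r r' hrr'; fin_cases r <;> fin_cases r' <;>
      first
        | exact absurd rfl hrr'
        | exact hAB | exact hAB.symm | exact hAC | exact hAC.symm
        | exact hBC | exact hBC.symm
  · intro r; fin_cases r
    · exact ha
    · exact hb
    · exact hc
  · rw [Fin.sum_univ_three]; exact hsum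
  · intro k; rw [Fin.sum_univ_three]; exact hL1 k
  · intro i k hik; rw [Fin.sum_univ_three]; exact hL2 i k hik

lemma apply4 (hm : 4 ≤ m) (A B C' D' : Fin m → ℝ) (a b c' d' : ℝ)
    (hA : IsPLParam A) (hB : IsPLParam B) (hC : IsPLParam C') (hD : IsPLParam D')
    (hAB : A ≠ B) (hAC : A ≠ C') (hAD : A ≠ D') (hBC : B ≠ C') (hBD : B ≠ D')
    (hCD : C' ≠ D')
    (ha : a ≠ 0) (hb : b ≠ 0) (hc : c' ≠ 0) (hd : d' ≠ 0)
    (hsum : a + b + c' + d' = 0)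
    (hL1 : ∀ k, a * A k + b * B k + c' * C' k + d' * D' k = 0)
    (hL2 : ∀ i k, i ≠ k → a * (A i / (1 - A i)) * A k + b * (B i / (1 - B i)) * B k
        + c' * (C' i / (1 - C' i)) * C' k + d' * (D' i / (1 - D' i)) * D' k = 0)
    (hL3 : ∀ i j k, i ≠ j → i ≠ k → j ≠ k →
      a * (A i * A j / ((1 - A i) * (1 - A i - A j))) * A k
      + b * (B i * B j / ((1 - B i) * (1 - B i - B j))) * B k
      + c' * (C' i * C' j / ((1 - C' i) * (1 - C' i - C' j))) * C' k
      + d' * (D' i * D' j / ((1 - D' i) * (1 - D' i - D' j))) * D' k = 0) : False := by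
  apply core4 hm ![A, B, C', D'] ![a, b, c', d']
  · intro r k; fin_cases r
    · exact hA.1 k
    · exact hB.1 k
    · exact hC.1 k
    · exact hD.1 k
  · intro r; fin_cases r
    · exact hA.2
    · exact hB.2
    · exact hC.2
    · exact hD.2
  · intro r r' hrr'; fin_cases r <;> fin_cases r' <;>
      first
        | exact absurd rfl hrr'
        | exact hAB | exact hAB.symm | exact hAC | exact hAC.symm
        | exact hAD | exact hAD.symm | exact hBC | exact hBC.symm
        | exact hBD | exact hBD.symm | exact hCD | exact hCD.symm
  · intro r; fin_cases r
    · exact ha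
    · exact hb
    · exact hc
    · exact hd
  · rw [Fin.sum_univ_four]; exact hsum
  · intro k; rw [Fin.sum_univ_four]; exact hL1 k
  · intro i k hik; rw [Fin.sum_univ_four]; exact hL2 i k hik
  · intro i j k hij hik hjk; rw [Fin.sum_univ_four]; exact hL3 i j k hij hik hjk


end TwoPL

open TwoPL

/-- **Identifiability of 2-PL from ranked top-3 data** (Theorem 2(a)): over
`m ≥ 4` alternatives, if two 2-PL parameters assign the same marginal
probability to every ranked top-3 order, then their mixing measures coincide. -/
theorem twoPL_identifiable_top3
    (m : ℕ) (hm : 4 ≤ m)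
    (α α' : ℝ) (hα : 0 < α ∧ α < 1) (hα' : 0 < α' ∧ α' < 1)
    (θ1 θ2 θ1' θ2' : Fin m → ℝ)
    (hθ1 : IsPLParam θ1) (hθ2 : IsPLParam θ2)
    (hθ1' : IsPLParam θ1') (hθ2' : IsPLParam θ2')
    (heq : ∀ σ : Fin 3 → Fin m, Function.Injective σ →
      α * PLtop θ1 σ + (1 - α) * PLtop θ2 σ
        = α' * PLtop θ1' σ + (1 - α') * PLtop θ2' σ) :
    mixing2 α θ1 θ2 = mixing2 α' θ1' θ2' := by
  obtain ⟨hα0, hα1⟩ := hα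
  obtain ⟨hα'0, hα'1⟩ := hα'
  have hm2 : 2 ≤ m := by omega
  have hm3 : 3 ≤ m := by omega
  have ha1 : (1 : ℝ) - α ≠ 0 := by intro h; linarith [h]
  have ha1' : (1 : ℝ) - α' ≠ 0 := by intro h; linarith [h]
  have hna : -α' ≠ 0 := neg_ne_zero.mpr hα'0.ne'
  have hna1 : -(1 - α') ≠ 0 := neg_ne_zero.mpr ha1'
  -- bounds
  have hxlt : ∀ i, θ1 i < 1 := coord_lt_one hm2 θ1 hθ1.1 hθ1.2
  have hylt : ∀ i, θ2 i < 1 := coord_lt_one hm2 θ2 hθ2.1 hθ2.2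
  have hult : ∀ i, θ1' i < 1 := coord_lt_one hm2 θ1' hθ1'.1 hθ1'.2
  have hvlt : ∀ i, θ2' i < 1 := coord_lt_one hm2 θ2' hθ2'.1 hθ2'.2
  have hxpl : ∀ {i j : Fin m}, i ≠ j → θ1 i + θ1 j < 1 :=
    fun h => pair_lt_one hm3 θ1 hθ1.1 hθ1.2 h
  have hypl : ∀ {i j : Fin m}, i ≠ j → θ2 i + θ2 j < 1 :=
    fun h => pair_lt_one hm3 θ2 hθ2.1 hθ2.2 h
  have hupl : ∀ {i j : Fin m}, i ≠ j → θ1' i + θ1' j < 1 :=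
    fun h => pair_lt_one hm3 θ1' hθ1'.1 hθ1'.2 h
  have hvpl : ∀ {i j : Fin m}, i ≠ j → θ2' i + θ2' j < 1 :=
    fun h => pair_lt_one hm3 θ2' hθ2'.1 hθ2'.2 h
  -- level-3 statistics
  have SL3 : ∀ i j k : Fin m, i ≠ j → i ≠ k → j ≠ k →
      α * (θ1 i * θ1 j / ((1 - θ1 i) * (1 - θ1 i - θ1 j))) * θ1 k
      + (1 - α) * (θ2 i * θ2 j / ((1 - θ2 i) * (1 - θ2 i - θ2 j))) * θ2 k
      + (-α') * (θ1' i * θ1' j / ((1 - θ1' i) * (1 - θ1' i - θ1' j))) * θ1' k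
      + (-(1 - α')) * (θ2' i * θ2' j / ((1 - θ2' i) * (1 - θ2' i - θ2' j))) * θ2' k
      = 0 := by
    intro i j k hij hik hjk
    have h := heq ![i, j, k] (inj3 hij hik hjk)
    rw [PLtop3, PLtop3, PLtop3, PLtop3, regroup, regroup, regroup, regroup] at h
    linear_combination h
  -- level-2 statistics
  have SL2 : ∀ i j : Fin m, i ≠ j →
      α * (θ1 i / (1 - θ1 i)) * θ1 j
      + (1 - α) * (θ2 i / (1 - θ2 i)) * θ2 j
      + (-α') * (θ1' i / (1 - θ1' i)) * θ1' j
      + (-(1 - α')) * (θ2' i / (1 - θ2' i)) * θ2' j = 0 := by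
    intro i j hij
    have h := sum4compl i j hij θ1 θ2 θ1' θ2' hθ1.2 hθ2.2 hθ1'.2 hθ2'.2
      (α * (θ1 i * θ1 j / ((1 - θ1 i) * (1 - θ1 i - θ1 j))))
      ((1 - α) * (θ2 i * θ2 j / ((1 - θ2 i) * (1 - θ2 i - θ2 j))))
      ((-α') * (θ1' i * θ1' j / ((1 - θ1' i) * (1 - θ1' i - θ1' j))))
      ((-(1 - α')) * (θ2' i * θ2' j / ((1 - θ2' i) * (1 - θ2' i - θ2' j))))
      (fun k hki hkj => by
        linear_combination SL3 i j k hij (Ne.symm hki) (Ne.symm hkj))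
    have e1 := regroup2 (θ1 i) (θ1 j) (by have := hxpl hij; linarith)
    have e2 := regroup2 (θ2 i) (θ2 j) (by have := hypl hij; linarith)
    have e3 := regroup2 (θ1' i) (θ1' j) (by have := hupl hij; linarith)
    have e4 := regroup2 (θ2' i) (θ2' j) (by have := hvpl hij; linarith)
    linear_combination h - α * e1 - (1 - α) * e2 + α' * e3 + (1 - α') * e4
  -- level-1 statistics
  have SL1 : ∀ i : Fin m,
      α * θ1 i + (1 - α) * θ2 i + (-α') * θ1' i + (-(1 - α')) * θ2' i = 0 := by
    intro i
    have h := sum4erase i θ1 θ2 θ1' θ2' hθ1.2 hθ2.2 hθ1'.2 hθ2'.2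
      (α * (θ1 i / (1 - θ1 i)))
      ((1 - α) * (θ2 i / (1 - θ2 i)))
      ((-α') * (θ1' i / (1 - θ1' i)))
      ((-(1 - α')) * (θ2' i / (1 - θ2' i)))
      (fun k hk => by linear_combination SL2 i k (Ne.symm hk))
    have e1 : θ1 i / (1 - θ1 i) * (1 - θ1 i) = θ1 i :=
      div_mul_cancel₀ _ (by have := hxlt i; intro hh; linarith)
    have e2 : θ2 i / (1 - θ2 i) * (1 - θ2 i) = θ2 i :=
      div_mul_cancel₀ _ (by have := hylt i; intro hh; linarith)
    have e3 : θ1' i / (1 - θ1' i) * (1 - θ1' i) = θ1' i :=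
      div_mul_cancel₀ _ (by have := hult i; intro hh; linarith)
    have e4 : θ2' i / (1 - θ2' i) * (1 - θ2' i) = θ2' i :=
      div_mul_cancel₀ _ (by have := hvlt i; intro hh; linarith)
    linear_combination h - α * e1 - (1 - α) * e2 + α' * e3 + (1 - α') * e4
  -- main case analysis
  by_cases hxy : θ1 = θ2
  · by_cases huv : θ1' = θ2'
    · -- both degenerate
      have hxu : θ1 = θ1' := by
        funext i
        have h := SL1 i
        rw [← hxy, ← huv] at h
        linear_combination h
      funext t
      simp only [mixing2]
      rw [← hxy, ← huv, ← hxu]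
      by_cases h : θ1 = t
      · simp [h]
      · simp [h]
    · exfalso
      by_cases hxu : θ1 = θ1'
      · apply huv
        funext i
        have h := SL1 i
        rw [← hxy, ← hxu] at h
        rw [← hxu]
        have h2 : (1 - α') * θ1 i = (1 - α') * θ2' i := by linear_combination h
        exact mul_left_cancel₀ ha1' h2
      · by_cases hxv : θ1 = θ2'
        · apply huv
          funext i
          have h := SL1 i
          rw [← hxy, ← hxv] at h
          rw [← hxv]
          have h2 : α' * θ1' i = α' * θ1 i := by linear_combination -h
          exact (mul_left_cancel₀ hα'0.ne' h2)
        · exact apply3 hm θ1 θ1' θ2' 1 (-α') (-(1 - α')) hθ1 hθ1' hθ2' hxu hxv huv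
            one_ne_zero hna hna1 (by ring)
            (fun k => by have h := SL1 k; rw [← hxy] at h; linear_combination h)
            (fun i k hik => by
              have h := SL2 i k hik; rw [← hxy] at h; linear_combination h)
  · by_cases huv : θ1' = θ2'
    · exfalso
      by_cases hux : θ1' = θ1
      · apply hxy
        funext i
        have h := SL1 i
        rw [← huv, ← hux] at h
        rw [← hux]
        have h2 : (1 - α) * θ1' i = (1 - α) * θ2 i := by linear_combination -h
        exact mul_left_cancel₀ ha1 h2
      · by_cases huy : θ1' = θ2
        · apply hxy
          funext i
          have h := SL1 i
          rw [← huv, ← huy] at h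
          rw [← huy]
          have h2 : α * θ1 i = α * θ1' i := by linear_combination h
          exact mul_left_cancel₀ hα0.ne' h2
        · exact apply3 hm θ1' θ1 θ2 1 (-α) (-(1 - α)) hθ1' hθ1 hθ2 hux huy hxy
            one_ne_zero (neg_ne_zero.mpr hα0.ne') (neg_ne_zero.mpr ha1) (by ring)
            (fun k => by have h := SL1 k; rw [← huv] at h; linear_combination -h)
            (fun i k hik => by
              have h := SL2 i k hik; rw [← huv] at h; linear_combination -h)
    · -- both mixtures nondegenerate
      by_cases hxu : θ1 = θ1'
      · by_cases hyv : θ2 = θ2'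
        · -- matched labels
          have hαα : α = α' := by
            obtain ⟨i, hne_i⟩ := Function.ne_iff.mp hxy
            have h := SL1 i
            rw [← hxu, ← hyv] at h
            have h2 : (α - α') * (θ1 i - θ2 i) = 0 := by linear_combination h
            rcases mul_eq_zero.mp h2 with h' | h'
            · linarith
            · exact absurd (by linarith : θ1 i = θ2 i) hne_i
          funext t
          simp only [mixing2]
          rw [hxu, hyv, hαα]
        · exfalso
          have hαne : α - α' ≠ 0 := by
            intro h
            apply hyv
            funext i
            have h1 := SL1 i
            rw [← hxu] at h1
            have hα'e : α' = α := by linarith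
            rw [hα'e] at h1
            have h2 : (1 - α) * θ2 i = (1 - α) * θ2' i := by linear_combination h1
            exact mul_left_cancel₀ ha1 h2
          have hxv : θ1 ≠ θ2' := by
            intro h
            exact huv (hxu ▸ h)
          exact apply3 hm θ1 θ2 θ2' (α - α') (1 - α) (-(1 - α')) hθ1 hθ2 hθ2'
            hxy hxv hyv hαne ha1 hna1 (by ring)
            (fun k => by have h := SL1 k; rw [← hxu] at h; linear_combination h)
            (fun i k hik => by
              have h := SL2 i k hik; rw [← hxu] at h; linear_combination h)
      · by_cases hxv : θ1 = θ2'
        · by_cases hyu : θ2 = θ1'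
          · -- swapped labels
            have hαα : α = 1 - α' := by
              obtain ⟨i, hne_i⟩ := Function.ne_iff.mp hxy
              have h := SL1 i
              rw [← hxv, ← hyu] at h
              have h2 : (α - (1 - α')) * (θ1 i - θ2 i) = 0 := by linear_combination h
              rcases mul_eq_zero.mp h2 with h' | h'
              · linarith
              · exact absurd (by linarith : θ1 i = θ2 i) hne_i
            funext t
            simp only [mixing2]
            rw [← hxv, ← hyu]
            have hα'e : α' = 1 - α := by linarith
            rw [hα'e]
            have h1 : (1 : ℝ) - (1 - α) = α := by ring
            rw [h1, add_comm]
          · exfalso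
            have hmid : α - (1 - α') ≠ 0 := by
              intro h
              apply hyu
              funext i
              have h1 := SL1 i
              rw [← hxv] at h1
              have hα'e : α' = 1 - α := by linarith
              rw [hα'e] at h1
              have h2 : (1 - α) * θ2 i = (1 - α) * θ1' i := by linear_combination h1
              exact mul_left_cancel₀ ha1 h2
            exact apply3 hm θ1 θ2 θ1' (α - (1 - α')) (1 - α) (-α') hθ1 hθ2 hθ1'
              hxy hxu hyu hmid ha1 hna (by ring)
              (fun k => by have h := SL1 k; rw [← hxv] at h; linear_combination h)
              (fun i k hik => by
                have h := SL2 i k hik; rw [← hxv] at h; linear_combination h)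
        · by_cases hyu : θ2 = θ1'
          · exfalso
            have hmid : (1 - α) - α' ≠ 0 := by
              intro h
              apply hxv
              funext i
              have h1 := SL1 i
              rw [← hyu] at h1
              have hα'e : α' = 1 - α := by linarith
              rw [hα'e] at h1
              have h2 : α * θ1 i = α * θ2' i := by linear_combination h1
              exact mul_left_cancel₀ hα0.ne' h2
            have hBC : θ2 ≠ θ2' := by
              intro h
              exact huv (hyu ▸ h)
            exact apply3 hm θ1 θ2 θ2' α ((1 - α) - α') (-(1 - α')) hθ1 hθ2 hθ2'
              hxy hxv hBC hα0.ne' hmid hna1 (by ring)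
              (fun k => by have h := SL1 k; rw [← hyu] at h; linear_combination h)
              (fun i k hik => by
                have h := SL2 i k hik; rw [← hyu] at h; linear_combination h)
          · by_cases hyv : θ2 = θ2'
            · exfalso
              have hmid : α' - α ≠ 0 := by
                intro h
                apply hxu
                funext i
                have h1 := SL1 i
                rw [← hyv] at h1
                have hα'e : α' = α := by linarith
                rw [hα'e] at h1
                have h2 : α * θ1 i = α * θ1' i := by linear_combination h1
                exact mul_left_cancel₀ hα0.ne' h2
              have hBC : θ2 ≠ θ1' := by
                intro h
                exact huv (h ▸ hyv)
              exact apply3 hm θ1 θ2 θ1' α (α' - α) (-α') hθ1 hθ2 hθ1'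
                hxy hxu hBC hα0.ne' hmid hna (by ring)
                (fun k => by have h := SL1 k; rw [← hyv] at h; linear_combination h)
                (fun i k hik => by
                  have h := SL2 i k hik; rw [← hyv] at h; linear_combination h)
            · exfalso
              exact apply4 hm θ1 θ2 θ1' θ2' α (1 - α) (-α') (-(1 - α'))
                hθ1 hθ2 hθ1' hθ2' hxy hxu hxv hyu hyv huv
                hα0.ne' ha1 hna hna1 (by ring)
                (fun k => by linear_combination SL1 k)
                (fun i k hik => by linear_combination SL2 i k hik)
                (fun i j k hij hik hjk => by linear_combination SL3 i j k hij hik hjk)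
end
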